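/- arXiv:0911.3712 — 5 statements merged into one kernel-verified Lean document; each statement's English description precedes it below -/
import Mathlib

section
/- Let P ⊆ ℝ^m be a polytope and G a group of affine transformations of ℝ^m with π.P = P for all π ∈ G. If P has an isometry-symmetric extension (with respect to G) whose polyhedron Q ⊆ ℝ^d has f facets, then P also has a coordinate-symmetric subspace extension (with respect to G) of size at most f; more precisely, there is a coordinate-symmetric extension Q' of P with Q' the intersection of an affine subspace of ℝ^f with the nonnegative orthant ℝ_+^f. -/
open Matrix

namespace St1

lemma dot_self_ne_zero {d : ℕ} {v : Fin d → ℝ} (h : v ≠ 0) : v ⬝ᵥ v ≠ 0 :=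
  fun h0 => h (dotProduct_self_eq_zero.1 h0)

lemma generic_vector {d : ℕ} (D : Submodule ℝ (Fin d → ℝ)) (s : Finset (Fin d → ℝ))
    (hs : ∀ x ∈ s, x ∈ D) (hnz : ∀ x ∈ s, x ⬝ᵥ x ≠ 0) :
    ∃ r ∈ D, ∀ x ∈ s, r ⬝ᵥ x ≠ 0 := by
  classical
  induction s using Finset.induction_on with
  | empty => exact ⟨0, Submodule.zero_mem D, fun x hx => absurd hx (Finset.notMem_empty x)⟩
  | @insert x s hxs ih =>
    obtain ⟨r, hrD, hr⟩ := ih (fun y hy => hs y (Finset.mem_insert_of_mem hy))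
      (fun y hy => hnz y (Finset.mem_insert_of_mem hy))
    have hxx : x ⬝ᵥ x ≠ 0 := hnz x (Finset.mem_insert_self x s)
    set Bad : Set ℝ := ⋃ u ∈ (insert x s : Finset (Fin d → ℝ)),
      {t : ℝ | r ⬝ᵥ u + t * (x ⬝ᵥ u) = 0} with hBad
    have hBadFin : Bad.Finite := by
      refine Set.Finite.biUnion (Finset.finite_toSet _) ?_
      intro u hu
      by_cases hxu : x ⬝ᵥ u = 0
      · rcases Finset.mem_insert.1 hu with rfl | hus
        · exact absurd hxu hxx
        · have : {t : ℝ | r ⬝ᵥ u + t * (x ⬝ᵥ u) = 0} = ∅ := by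
            ext t; simp [hxu, hr u hus]
          rw [this]; exact Set.finite_empty
      · apply Set.Finite.subset (Set.finite_singleton (-(r ⬝ᵥ u) / (x ⬝ᵥ u)))
        intro t ht
        simp only [Set.mem_setOf_eq] at ht
        simp only [Set.mem_singleton_iff]
        field_simp
        linarith
    obtain ⟨t, ht⟩ := hBadFin.infinite_compl.nonempty
    refine ⟨r + t • x, Submodule.add_mem D hrD (Submodule.smul_mem D t
      (hs x (Finset.mem_insert_self x s))), ?_⟩
    intro u hu
    have : t ∉ {t' : ℝ | r ⬝ᵥ u + t' * (x ⬝ᵥ u) = 0} := by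
      intro hmem
      exact ht (Set.mem_biUnion hu hmem)
    simp only [Set.mem_setOf_eq] at this
    rw [add_dotProduct, smul_dotProduct, smul_eq_mul]
    exact this

lemma parallel_lemma {d f : ℕ} (D : Submodule ℝ (Fin d → ℝ)) (J : Finset (Fin f))
    (n : Fin f → Fin d → ℝ) (v : Fin d → ℝ) (hv : v ∈ D)
    (hmem : ∀ k ∈ J, n k ∈ D) (hneg : ∀ k ∈ J, n k ⬝ᵥ v < 0)
    (Hyp : ∀ i ∈ J, ∀ dd ∈ D, n i ⬝ᵥ dd = 0 → (∀ k ∈ J, n k ⬝ᵥ dd ≤ 0) →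
      ∀ k ∈ J, n k ⬝ᵥ dd = 0)
    {i₀ : Fin f} (hi₀ : i₀ ∈ J) :
    ∀ k ∈ J, ∃ c : ℝ, 0 < c ∧ n k = c • n i₀ := by
  classical
  set m : Fin f → Fin d → ℝ := fun k => (-(n k ⬝ᵥ v))⁻¹ • n k with hm
  have hnegne : ∀ k ∈ J, (-(n k ⬝ᵥ v)) ≠ 0 := fun k hk => by have := hneg k hk; intro h; linarith
  have hmv : ∀ k ∈ J, m k ⬝ᵥ v = -1 := by
    intro k hk
    rw [hm]
    simp only [smul_dotProduct, smul_eq_mul]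
    rw [inv_mul_eq_div, div_eq_iff (hnegne k hk)]
    ring
  have hmD : ∀ k ∈ J, m k ∈ D := fun k hk => Submodule.smul_mem D _ (hmem k hk)
  have hnm : ∀ k ∈ J, n k = (-(n k ⬝ᵥ v)) • m k := by
    intro k hk
    rw [hm, smul_smul]
    rw [mul_inv_cancel₀ (hnegne k hk), one_smul]
  -- main claim : all m k equal on J
  have claim : ∀ k ∈ J, ∀ k' ∈ J, m k = m k' := by
    by_contra hcon
    push_neg at hcon
    obtain ⟨k₁, hk₁, k₂, hk₂, hne⟩ := hcon
    -- generic vector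
    set s : Finset (Fin d → ℝ) := ((J ×ˢ J).filter
      (fun pr : Fin f × Fin f => m pr.1 ≠ m pr.2)).image
      (fun pr : Fin f × Fin f => m pr.1 - m pr.2) with hsdef
    have hsD : ∀ y ∈ s, y ∈ D := by
      intro y hy
      rw [hsdef] at hy
      obtain ⟨pr, hpr, rfl⟩ := Finset.mem_image.1 hy
      have h1 := (Finset.mem_filter.1 hpr).1
      exact Submodule.sub_mem D (hmD _ (Finset.mem_product.1 h1).1)
        (hmD _ (Finset.mem_product.1 h1).2)
    have hsnz : ∀ y ∈ s, y ⬝ᵥ y ≠ 0 := by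
      intro y hy
      rw [hsdef] at hy
      obtain ⟨pr, hpr, rfl⟩ := Finset.mem_image.1 hy
      have h2 := (Finset.mem_filter.1 hpr).2
      exact dot_self_ne_zero (sub_ne_zero.2 h2)
    obtain ⟨r, hrD, hr⟩ := generic_vector D s hsD hsnz
    obtain ⟨istar, histar, hmax⟩ := J.exists_max_image (fun k => r ⬝ᵥ m k) ⟨i₀, hi₀⟩
    set dd : Fin d → ℝ := r + (r ⬝ᵥ m istar) • v with hdd
    have hddD : dd ∈ D := Submodule.add_mem D hrD (Submodule.smul_mem D _ hv)
    have hmdd : ∀ k ∈ J, m k ⬝ᵥ dd = r ⬝ᵥ m k - r ⬝ᵥ m istar := by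
      intro k hk
      rw [hdd, dotProduct_add, dotProduct_smul, smul_eq_mul, hmv k hk, dotProduct_comm]
      ring
    have hmdd_le : ∀ k ∈ J, m k ⬝ᵥ dd ≤ 0 := by
      intro k hk
      rw [hmdd k hk]
      have := hmax k hk
      linarith
    have hndd_le : ∀ k ∈ J, n k ⬝ᵥ dd ≤ 0 := by
      intro k hk
      rw [hnm k hk, smul_dotProduct, smul_eq_mul]
      have h1 := hmdd_le k hk
      have h2 := hneg k hk
      nlinarith
    have histar0 : n istar ⬝ᵥ dd = 0 := by
      rw [hnm istar histar, smul_dotProduct, smul_eq_mul, hmdd istar histar]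
      ring
    have hall := Hyp istar histar dd hddD histar0 hndd_le
    -- all m k = m istar
    have hmeq : ∀ k ∈ J, m k = m istar := by
      intro k hk
      by_contra hneq
      have hmem_s : m k - m istar ∈ s := by
        rw [hsdef]
        exact Finset.mem_image.2 ⟨(k, istar),
          Finset.mem_filter.2 ⟨Finset.mem_product.2 ⟨hk, histar⟩, hneq⟩, rfl⟩
      have hrne := hr _ hmem_s
      have : m k ⬝ᵥ dd = 0 := by
        have h1 := hall k hk
        rw [hnm k hk, smul_dotProduct, smul_eq_mul] at h1
        rcases mul_eq_zero.1 h1 with h | h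
        · exact absurd h (hnegne k hk)
        · exact h
      rw [hmdd k hk] at this
      rw [dotProduct_sub] at hrne
      exact hrne (by linarith)
    exact hne ((hmeq k₁ hk₁).trans (hmeq k₂ hk₂).symm)
  -- conclude
  intro k hk
  have h1 := claim k hk i₀ hi₀
  refine ⟨(n k ⬝ᵥ v) / (n i₀ ⬝ᵥ v), div_pos_iff.2 (Or.inr ⟨hneg k hk, hneg i₀ hi₀⟩), ?_⟩
  have h2 := hnm k hk
  rw [h1] at h2
  simp only [hm] at h2
  rw [smul_smul] at h2
  rw [h2]
  have h4 := hnegne i₀ hi₀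
  have h5 : n i₀ ⬝ᵥ v ≠ 0 := fun h => h4 (by rw [h, neg_zero])
  congr 1
  rw [smul_dotProduct, smul_eq_mul, mul_div_assoc, div_self h5, mul_one]



variable {d f g : ℕ} (Aeq : Fin g → Fin d → ℝ) (beq : Fin g → ℝ)
  (A : Fin f → Fin d → ℝ) (b : Fin f → ℝ)

def Qs : Set (Fin d → ℝ) :=
  {y | (∀ i, Aeq i ⬝ᵥ y = beq i) ∧ ∀ i, A i ⬝ᵥ y ≤ b i}

def sl (i : Fin f) (y : Fin d → ℝ) : ℝ := b i - A i ⬝ᵥ y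

def dotL (c : Fin d → ℝ) : (Fin d → ℝ) →ₗ[ℝ] ℝ where
  toFun v := c ⬝ᵥ v
  map_add' x y := dotProduct_add c x y
  map_smul' r x := dotProduct_smul r c x

@[simp] lemma dotL_apply (c v : Fin d → ℝ) : dotL c v = c ⬝ᵥ v := rfl

lemma dot_sum {ι : Type*} (w : Fin d → ℝ) (s : Finset ι) (v : ι → Fin d → ℝ) :
    w ⬝ᵥ (∑ i ∈ s, v i) = ∑ i ∈ s, w ⬝ᵥ v i :=
  map_sum (dotL w) v s

lemma Qs_convex : Convex ℝ (Qs Aeq beq A b) := by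
  intro y hy z hz α β hα hβ hαβ
  constructor
  · intro i
    simp only [dotProduct_add, dotProduct_smul, smul_eq_mul]
    rw [hy.1 i, hz.1 i]; linear_combination beq i * hαβ
  · intro i
    simp only [dotProduct_add, dotProduct_smul, smul_eq_mul]
    have hb : α * b i + β * b i = b i := by linear_combination b i * hαβ
    nlinarith [mul_le_mul_of_nonneg_left (hy.2 i) hα, mul_le_mul_of_nonneg_left (hz.2 i) hβ]

lemma sl_nonneg {i : Fin f} {y} (hy : y ∈ Qs Aeq beq A b) : 0 ≤ sl A b i y :=
  sub_nonneg.2 (hy.2 i)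

lemma riesz_submodule (D : Submodule ℝ (Fin d → ℝ)) (c : Fin d → ℝ) :
    ∃ n ∈ D, ∀ v ∈ D, n ⬝ᵥ v = c ⬝ᵥ v := by
  let Φ : D →ₗ[ℝ] Module.Dual ℝ D :=
    { toFun := fun a => (dotL a.1).comp D.subtype
      map_add' := fun x y => by
        apply LinearMap.ext; intro v
        simp [add_dotProduct]
      map_smul' := fun r x => by
        apply LinearMap.ext; intro v
        simp [smul_dotProduct] }
  have hinj : Function.Injective Φ := by
    intro a a' h
    have h0 : ∀ x : D, Φ (a - a') x = 0 := by
      intro x; rw [map_sub, h, sub_self]; rfl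
    have hz : ((a - a' : D) : Fin d → ℝ) ⬝ᵥ ((a - a' : D) : Fin d → ℝ) = 0 := by
      simpa [Φ] using h0 (a - a')
    have h1 : ((a - a' : D) : Fin d → ℝ) = 0 := dotProduct_self_eq_zero.1 hz
    have h2 : a - a' = 0 := by
      apply Subtype.ext; simpa using h1
    exact sub_eq_zero.1 h2
  have hsurj : Function.Surjective Φ :=
    (LinearMap.injective_iff_surjective_of_finrank_eq_finrank
      (Subspace.dual_finrank_eq).symm).1 hinj
  obtain ⟨a, ha⟩ := hsurj ((dotL c).comp D.subtype)
  refine ⟨a.1, a.2, fun v hv => ?_⟩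
  have := congrArg (fun φ => φ ⟨v, hv⟩) ha
  simpa [Φ] using this


def IQ : Set (Fin f) := {i | ∀ y ∈ Qs Aeq beq A b, sl A b i y = 0}

def Dir : Submodule ℝ (Fin d → ℝ) := (affineSpan ℝ (Qs Aeq beq A b)).direction

lemma aff_const {c : Fin d → ℝ} {r : ℝ} (h : ∀ y ∈ Qs Aeq beq A b, c ⬝ᵥ y = r) :
    ∀ y ∈ affineSpan ℝ (Qs Aeq beq A b), c ⬝ᵥ y = r := by
  intro y hy
  refine affineSpan_induction (p := fun y => c ⬝ᵥ y = r) hy h ?_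
  intro t u v w hu hv hw
  have : c ⬝ᵥ (t • (u - v) + w) = t * (c ⬝ᵥ u - c ⬝ᵥ v) + c ⬝ᵥ w := by
    simp [dotProduct_add, dotProduct_smul, dotProduct_sub]
  simpa [vsub_eq_sub, vadd_eq_add, hu, hv, hw] using this

lemma dir_dot_zero {c : Fin d → ℝ} {r : ℝ} (h : ∀ y ∈ Qs Aeq beq A b, c ⬝ᵥ y = r) :
    ∀ v ∈ Dir Aeq beq A b, c ⬝ᵥ v = 0 := by
  intro v hv
  rw [Dir, direction_affineSpan, vectorSpan_def] at hv
  have hle : Submodule.span ℝ (Qs Aeq beq A b -ᵥ Qs Aeq beq A b) ≤ LinearMap.ker (dotL c) := by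
    rw [Submodule.span_le]
    rintro x ⟨u, hu, w, hw, rfl⟩
    simp only [SetLike.mem_coe, LinearMap.mem_ker, dotL_apply, vsub_eq_sub, dotProduct_sub]
    rw [h u hu, h w hw, sub_self]
  simpa using hle hv

lemma sl_add_smul (i : Fin f) (w v : Fin d → ℝ) (ε : ℝ) :
    sl A b i (w + ε • v) = sl A b i w - ε * (A i ⬝ᵥ v) := by
  simp [sl, dotProduct_add, dotProduct_smul]; ring

lemma dir_eq_rows {v} (hv : v ∈ Dir Aeq beq A b) (i : Fin g) : Aeq i ⬝ᵥ v = 0 :=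
  dir_dot_zero Aeq beq A b (fun y hy => hy.1 i) v hv

lemma dir_IQ_rows {v} (hv : v ∈ Dir Aeq beq A b) {i : Fin f} (hi : i ∈ IQ Aeq beq A b) :
    A i ⬝ᵥ v = 0 :=
  dir_dot_zero Aeq beq A b (c := A i) (r := b i)
    (fun y hy => by have := hi y hy; simp [sl] at this; linarith) v hv

lemma exists_eps {w v : Fin d → ℝ} (hw : w ∈ Qs Aeq beq A b) (hv : v ∈ Dir Aeq beq A b)
    (hok : ∀ i, i ∉ IQ Aeq beq A b → sl A b i w = 0 → A i ⬝ᵥ v ≤ 0) :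
    ∃ ε : ℝ, 0 < ε ∧ w + ε • v ∈ Qs Aeq beq A b := by
  have hev : ∀ i : Fin f, ∀ᶠ ε in nhdsWithin (0:ℝ) (Set.Ioi 0), 0 ≤ sl A b i (w + ε • v) := by
    intro i
    by_cases hiq : i ∈ IQ Aeq beq A b
    · have hz : A i ⬝ᵥ v = 0 := dir_IQ_rows Aeq beq A b hv hiq
      filter_upwards with ε
      rw [sl_add_smul, hz]
      simpa using sl_nonneg Aeq beq A b hw
    · by_cases h0 : sl A b i w = 0
      · have hd := hok i hiq h0
        filter_upwards [self_mem_nhdsWithin] with ε hε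
        rw [sl_add_smul, h0]
        simp only [Set.mem_Ioi] at hε
        nlinarith
      · have hpos : 0 < sl A b i w := (sl_nonneg Aeq beq A b hw).lt_of_ne (Ne.symm h0)
        have hc : Continuous fun ε : ℝ => sl A b i w - ε * (A i ⬝ᵥ v) := by fun_prop
        have hmem : {ε : ℝ | 0 < sl A b i w - ε * (A i ⬝ᵥ v)} ∈ nhds (0:ℝ) :=
          (isOpen_lt continuous_const hc).mem_nhds (by simpa using hpos)
        filter_upwards [nhdsWithin_le_nhds hmem] with ε hε
        rw [sl_add_smul]
        exact le_of_lt hε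
  have hall : ∀ᶠ ε in nhdsWithin (0:ℝ) (Set.Ioi 0),
      (∀ i : Fin f, 0 ≤ sl A b i (w + ε • v)) ∧ ε ∈ Set.Ioi (0:ℝ) :=
    (Filter.eventually_all.2 hev).and self_mem_nhdsWithin
  obtain ⟨ε, hsl, hε⟩ := hall.exists
  refine ⟨ε, hε, ?_, ?_⟩
  · intro i
    simp only [dotProduct_add, dotProduct_smul, smul_eq_mul]
    rw [hw.1 i, dir_eq_rows Aeq beq A b hv i]; ring
  · intro i
    have := hsl i
    simp only [sl] at this
    linarith

/-- pseudo relative interior point -/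
lemma prelint {C : Set (Fin d → ℝ)} (hCQ : C ⊆ Qs Aeq beq A b) (hC : Convex ℝ C)
    (hne : C.Nonempty) :
    ∃ w ∈ C, ∀ i : Fin f, (∃ y ∈ C, sl A b i y ≠ 0) → 0 < sl A b i w := by
  classical
  obtain ⟨y₀, hy₀⟩ := hne
  have pick : ∀ i : Fin f, ∃ y ∈ C, (∃ z ∈ C, sl A b i z ≠ 0) → 0 < sl A b i y := by
    intro i
    by_cases h : ∃ z ∈ C, sl A b i z ≠ 0
    · obtain ⟨z, hz, hzi⟩ := h
      exact ⟨z, hz, fun _ => (sl_nonneg Aeq beq A b (hCQ hz)).lt_of_ne (Ne.symm hzi)⟩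
    · exact ⟨y₀, hy₀, fun h' => absurd h' h⟩
  choose yy hyyC hyy using pick
  set N : ℝ := (f : ℝ) + 1 with hN
  have hNpos : 0 < N := by positivity
  set z : Fin (f + 1) → Fin d → ℝ := Fin.cons y₀ yy with hz
  set w : Fin d → ℝ := ∑ j : Fin (f + 1), (1 / N) • z j with hwdef
  have hzC : ∀ j, z j ∈ C := by
    intro j
    refine Fin.cases ?_ ?_ j
    · simpa [hz] using hy₀
    · intro k; simpa [hz] using hyyC k
  have hsum : ∑ _j : Fin (f + 1), (1 / N : ℝ) = 1 := by
    simp [Finset.sum_const, hN]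
    field_simp
  have hwC : w ∈ C := by
    rw [hwdef]
    exact hC.sum_mem (fun j _ => by positivity) hsum (fun j _ => hzC j)
  have hslw : ∀ i : Fin f, sl A b i w = ∑ j : Fin (f+1), (1/N) * sl A b i (z j) := by
    intro i
    have hdot : A i ⬝ᵥ w = ∑ j : Fin (f+1), (1/N) * (A i ⬝ᵥ z j) := by
      rw [hwdef, dot_sum]
      exact Finset.sum_congr rfl fun j _ => by
        rw [dotProduct_smul]; rfl
    have hb : (b i : ℝ) = ∑ _j : Fin (f+1), (1/N) * b i := by
      rw [← Finset.sum_mul, hsum, one_mul]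
    rw [sl, hdot]
    nth_rewrite 1 [hb]
    rw [← Finset.sum_sub_distrib]
    exact Finset.sum_congr rfl fun j _ => by rw [sl]; ring
  refine ⟨w, hwC, fun i hi => ?_⟩
  rw [hslw i]
  refine Finset.sum_pos' (fun j _ => ?_) ⟨i.succ, Finset.mem_univ _, ?_⟩
  · have := sl_nonneg Aeq beq A b (i := i) (hCQ (hzC j)); positivity
  · have hzi : z i.succ = yy i := by simp [hz]
    rw [hzi]
    have := hyy i hi
    positivity


def ISet (F : Set (Fin d → ℝ)) : Set (Fin f) := {i | ∀ y ∈ F, sl A b i y = 0}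

def QI (S : Set (Fin f)) : Set (Fin d → ℝ) :=
  {y ∈ Qs Aeq beq A b | ∀ i ∈ S, sl A b i y = 0}

def PairCond (a : Fin d → ℝ) (c : ℝ) (F : Set (Fin d → ℝ)) : Prop :=
  a ∈ Dir Aeq beq A b ∧ a ⬝ᵥ a = 1 ∧ (∀ y ∈ Qs Aeq beq A b, a ⬝ᵥ y ≤ c) ∧
    F = {y ∈ Qs Aeq beq A b | a ⬝ᵥ y = c}

def IsPFace (F : Set (Fin d → ℝ)) : Prop :=
  F.Nonempty ∧ F ≠ Qs Aeq beq A b ∧ ∃ a c, PairCond Aeq beq A b a c F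

def IsFacet (F : Set (Fin d → ℝ)) : Prop :=
  IsPFace Aeq beq A b F ∧ ∀ F', IsPFace Aeq beq A b F' → F ⊆ F' → F = F'

lemma not_mem_ISet {F : Set (Fin d → ℝ)} {i : Fin f} :
    i ∉ ISet A b F ↔ ∃ y ∈ F, sl A b i y ≠ 0 := by
  simp [ISet]

lemma not_mem_IQ {i : Fin f} :
    i ∉ IQ Aeq beq A b ↔ ∃ y ∈ Qs Aeq beq A b, sl A b i y ≠ 0 := by
  simp [IQ]

lemma dot_self_nonneg (v : Fin d → ℝ) : 0 ≤ v ⬝ᵥ v := by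
  have : v ⬝ᵥ v = ∑ j, v j * v j := rfl
  rw [this]
  exact Finset.sum_nonneg fun j _ => mul_self_nonneg _

noncomputable def ndir (i : Fin f) : Fin d → ℝ :=
  (riesz_submodule (Dir Aeq beq A b) (A i)).choose

lemma ndir_mem (i : Fin f) : ndir Aeq beq A b i ∈ Dir Aeq beq A b :=
  (riesz_submodule (Dir Aeq beq A b) (A i)).choose_spec.1

lemma ndir_spec (i : Fin f) : ∀ v ∈ Dir Aeq beq A b,
    ndir Aeq beq A b i ⬝ᵥ v = A i ⬝ᵥ v :=
  (riesz_submodule (Dir Aeq beq A b) (A i)).choose_spec.2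

lemma face_convex {a : Fin d → ℝ} {c : ℝ} :
    Convex ℝ {y ∈ Qs Aeq beq A b | a ⬝ᵥ y = c} := by
  intro y hy z hz α β hα hβ hαβ
  refine ⟨Qs_convex Aeq beq A b hy.1 hz.1 hα hβ hαβ, ?_⟩
  simp only [dotProduct_add, dotProduct_smul, smul_eq_mul]
  rw [hy.2, hz.2]
  linear_combination c * hαβ

lemma mem_span_Qs {y : Fin d → ℝ} (hy : y ∈ Qs Aeq beq A b) :
    y ∈ affineSpan ℝ (Qs Aeq beq A b) :=
  subset_affineSpan ℝ _ hy

lemma sub_mem_Dir {y z : Fin d → ℝ} (hy : y ∈ affineSpan ℝ (Qs Aeq beq A b))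
    (hz : z ∈ affineSpan ℝ (Qs Aeq beq A b)) : y - z ∈ Dir Aeq beq A b := by
  have := AffineSubspace.vsub_mem_direction hy hz
  simpa [vsub_eq_sub, Dir] using this

lemma face_eq_QI {F} (h : IsPFace Aeq beq A b F) :
    F = QI Aeq beq A b (ISet A b F) := by
  obtain ⟨hne, hproper, a, c, haD, hunit, hvalid, hFdef⟩ := h
  have hFQ : F ⊆ Qs Aeq beq A b := by rw [hFdef]; exact fun y hy => hy.1
  apply Set.Subset.antisymm
  · exact fun y hy => ⟨hFQ hy, fun i hi => hi y hy⟩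
  · intro u hu
    obtain ⟨huQ, hut⟩ := hu
    have hFc : Convex ℝ F := hFdef ▸ face_convex Aeq beq A b
    obtain ⟨w, hwF, hw⟩ := prelint Aeq beq A b hFQ hFc hne
    have hwQ : w ∈ Qs Aeq beq A b := hFQ hwF
    have hvDir : w - u ∈ Dir Aeq beq A b :=
      sub_mem_Dir Aeq beq A b (mem_span_Qs Aeq beq A b hwQ) (mem_span_Qs Aeq beq A b huQ)
    obtain ⟨ε, hε, hptQ⟩ := exists_eps Aeq beq A b hwQ hvDir (fun i _ hi0 => by
      by_cases hIF : i ∈ ISet A b F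
      · have h1 : sl A b i w = 0 := hIF w hwF
        have h2 : sl A b i u = 0 := hut i hIF
        simp only [sl] at h1 h2
        rw [dotProduct_sub]
        linarith
      · obtain ⟨yv, hyv, hyvne⟩ := (not_mem_ISet A b).1 hIF
        have := hw i ⟨yv, hyv, hyvne⟩
        linarith)
    have hawc : a ⬝ᵥ w = c := (hFdef ▸ hwF).2
    have hle := hvalid _ hptQ
    have hcalc : a ⬝ᵥ (w + ε • (w - u)) = c + ε * (c - a ⬝ᵥ u) := by
      simp only [dotProduct_add, dotProduct_smul, dotProduct_sub, smul_eq_mul, hawc]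
    rw [hcalc] at hle
    have hcu : c ≤ a ⬝ᵥ u := by nlinarith
    have : a ⬝ᵥ u = c := le_antisymm (hvalid u huQ) hcu
    rw [hFdef]
    exact ⟨huQ, this⟩

lemma pfaces_finite : {F | IsPFace Aeq beq A b F}.Finite := by
  apply Set.Finite.of_finite_image (f := ISet A b)
  · exact Set.toFinite _
  · intro F hF F' hF' hEq
    rw [face_eq_QI Aeq beq A b hF, face_eq_QI Aeq beq A b hF', hEq]

lemma exists_facet {F} (h : IsPFace Aeq beq A b F) :
    ∃ M, IsFacet Aeq beq A b M ∧ F ⊆ M := by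
  have hfin : {F' | IsPFace Aeq beq A b F' ∧ F ⊆ F'}.Finite :=
    (pfaces_finite Aeq beq A b).subset (fun F' hF' => hF'.1)
  obtain ⟨M, hM, hmax⟩ := Set.Finite.exists_maximalFor id _ hfin ⟨F, h, Set.Subset.rfl⟩
  refine ⟨M, ⟨hM.1, fun F' hF' hsub => ?_⟩, hM.2⟩
  exact Set.Subset.antisymm hsub (hmax ⟨hF', hM.2.trans hsub⟩ hsub)

lemma gface {i : Fin f} {z w₀ : Fin d → ℝ} (hi : i ∉ IQ Aeq beq A b)
    (hz : z ∈ Qs Aeq beq A b) (hzi : sl A b i z = 0)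
    (hw₀ : w₀ ∈ Qs Aeq beq A b) (hw₀i : ∀ j, j ∉ IQ Aeq beq A b → 0 < sl A b j w₀) :
    ∃ a c, PairCond Aeq beq A b a c {y ∈ Qs Aeq beq A b | sl A b i y = 0} ∧
      IsPFace Aeq beq A b {y ∈ Qs Aeq beq A b | sl A b i y = 0} ∧
      ∃ s : ℝ, 0 < s ∧ ∀ y ∈ affineSpan ℝ (Qs Aeq beq A b),
        c - a ⬝ᵥ y = s * sl A b i y := by
  set n := ndir Aeq beq A b i with hn
  have hrel : ∀ y ∈ affineSpan ℝ (Qs Aeq beq A b),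
      sl A b i y = (sl A b i w₀ + n ⬝ᵥ w₀) - n ⬝ᵥ y := by
    intro y hy
    have hv : y - w₀ ∈ Dir Aeq beq A b :=
      sub_mem_Dir Aeq beq A b hy (mem_span_Qs Aeq beq A b hw₀)
    have hnd := ndir_spec Aeq beq A b i (y - w₀) hv
    simp only [dotProduct_sub] at hnd
    simp only [sl] at *
    linarith
  have hw₀pos : 0 < sl A b i w₀ := hw₀i i hi
  have hnn0 : n ⬝ᵥ n ≠ 0 := by
    intro hzero
    have hn0 : n = (0 : Fin d → ℝ) := dotProduct_self_eq_zero.1 hzero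
    have h1 := hrel z (mem_span_Qs Aeq beq A b hz)
    have h2 := hrel w₀ (mem_span_Qs Aeq beq A b hw₀)
    rw [hn0] at h1
    simp only [zero_dotProduct] at h1
    rw [hzi] at h1
    linarith
  have hnnpos : 0 < n ⬝ᵥ n := (dot_self_nonneg n).lt_of_ne (Ne.symm hnn0)
  set s : ℝ := (Real.sqrt (n ⬝ᵥ n))⁻¹ with hs
  have hspos : 0 < s := by
    rw [hs]
    exact inv_pos.2 (Real.sqrt_pos.2 hnnpos)
  set a : Fin d → ℝ := s • n with ha
  set c : ℝ := s * (sl A b i w₀ + n ⬝ᵥ w₀) with hc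
  have hform : ∀ y ∈ affineSpan ℝ (Qs Aeq beq A b), c - a ⬝ᵥ y = s * sl A b i y := by
    intro y hy
    rw [hc, ha, smul_dotProduct, smul_eq_mul, hrel y hy]
    ring
  have hvalid : ∀ y ∈ Qs Aeq beq A b, a ⬝ᵥ y ≤ c := by
    intro y hy
    have := hform y (mem_span_Qs Aeq beq A b hy)
    nlinarith [sl_nonneg Aeq beq A b (i := i) hy]
  have hFdef : ({y ∈ Qs Aeq beq A b | sl A b i y = 0} : Set (Fin d → ℝ))
      = {y ∈ Qs Aeq beq A b | a ⬝ᵥ y = c} := by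
    ext y
    simp only [Set.mem_setOf_eq, and_congr_right_iff]
    intro hy
    have := hform y (mem_span_Qs Aeq beq A b hy)
    constructor
    · intro h0; rw [h0] at this; linarith
    · intro h0
      rw [h0, sub_self] at this
      exact ((mul_eq_zero.1 this.symm).resolve_left (ne_of_gt hspos))
  have hpair : PairCond Aeq beq A b a c {y ∈ Qs Aeq beq A b | sl A b i y = 0} := by
    refine ⟨Submodule.smul_mem _ _ (ndir_mem Aeq beq A b i), ?_, hvalid, hFdef⟩
    have hSq : Real.sqrt (n ⬝ᵥ n) * Real.sqrt (n ⬝ᵥ n) = n ⬝ᵥ n :=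
      Real.mul_self_sqrt (le_of_lt hnnpos)
    have hs0 : Real.sqrt (n ⬝ᵥ n) ≠ 0 := ne_of_gt (Real.sqrt_pos.2 hnnpos)
    rw [ha, smul_dotProduct, dotProduct_smul, smul_eq_mul, smul_eq_mul, hs]
    field_simp
    rw [Real.sq_sqrt (le_of_lt hnnpos)]
  refine ⟨a, c, hpair, ⟨⟨z, hz, hzi⟩, ?_, a, c, hpair⟩, s, hspos, hform⟩
  · intro hEq
    have : w₀ ∈ ({y ∈ Qs Aeq beq A b | sl A b i y = 0} : Set (Fin d → ℝ)) := by
      rw [hEq]; exact hw₀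
    exact absurd this.2 (ne_of_gt hw₀pos)


lemma facet_pair_unique {F} (hF : IsFacet Aeq beq A b F) {a c a' c' : _}
    (h1 : PairCond Aeq beq A b a c F) (h2 : PairCond Aeq beq A b a' c' F) :
    a = a' ∧ c = c' := by
  classical
  obtain ⟨hPF, hmax⟩ := hF
  have hFne : F.Nonempty := hPF.1
  have hFproper : F ≠ Qs Aeq beq A b := hPF.2.1
  have hFdef := h1.2.2.2
  have hFQ : F ⊆ Qs Aeq beq A b := by rw [hFdef]; exact fun y hy => hy.1
  have hQne : (Qs Aeq beq A b).Nonempty := ⟨hFne.choose, hFQ hFne.choose_spec⟩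
  obtain ⟨w₀, hw₀Q, hw₀aux⟩ := prelint Aeq beq A b Set.Subset.rfl (Qs_convex Aeq beq A b) hQne
  have hw₀ : ∀ j, j ∉ IQ Aeq beq A b → 0 < sl A b j w₀ := by
    intro j hj
    exact hw₀aux j ((not_mem_IQ Aeq beq A b).1 hj)
  have hFQI := face_eq_QI Aeq beq A b hPF
  set J : Finset (Fin f) :=
    Finset.univ.filter (fun i => i ∈ ISet A b F ∧ i ∉ IQ Aeq beq A b) with hJdef
  have hJ_mem : ∀ i, i ∈ J ↔ i ∈ ISet A b F ∧ i ∉ IQ Aeq beq A b := by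
    intro i; simp [hJdef]
  have hJne : J.Nonempty := by
    by_contra hcon
    rw [Finset.not_nonempty_iff_eq_empty] at hcon
    have hsub : ∀ i ∈ ISet A b F, i ∈ IQ Aeq beq A b := by
      intro i hi
      by_contra hiq
      have : i ∈ J := (hJ_mem i).2 ⟨hi, hiq⟩
      rw [hcon] at this
      exact absurd this (Finset.notMem_empty i)
    apply hFproper
    rw [hFQI]
    apply Set.Subset.antisymm (fun y hy => hy.1)
    intro y hy
    exact ⟨hy, fun i hi => hsub i hi y hy⟩
  have hFconv : Convex ℝ F := hFdef ▸ face_convex Aeq beq A b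
  obtain ⟨wF, hwF, hwFaux⟩ := prelint Aeq beq A b hFQ hFconv hFne
  have hwF' : ∀ i, i ∉ ISet A b F → 0 < sl A b i wF := by
    intro i hi
    exact hwFaux i ((not_mem_ISet A b).1 hi)
  have hwFQ : wF ∈ Qs Aeq beq A b := hFQ hwF
  set v : Fin d → ℝ := w₀ - wF with hvdef
  have hvD : v ∈ Dir Aeq beq A b :=
    sub_mem_Dir Aeq beq A b (mem_span_Qs Aeq beq A b hw₀Q) (mem_span_Qs Aeq beq A b hwFQ)
  set n : Fin f → Fin d → ℝ := ndir Aeq beq A b with hndef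
  have hnD : ∀ k ∈ J, n k ∈ Dir Aeq beq A b := fun k _ => ndir_mem Aeq beq A b k
  have hslwF : ∀ i ∈ J, sl A b i wF = 0 := fun i hi => ((hJ_mem i).1 hi).1 wF hwF
  have hnv : ∀ k ∈ J, n k ⬝ᵥ v < 0 := by
    intro k hk
    have hs := ndir_spec Aeq beq A b k v hvD
    have h1' := hslwF k hk
    have h2' := hw₀ k ((hJ_mem k).1 hk).2
    rw [hvdef] at hs ⊢
    rw [hs, dotProduct_sub]
    simp only [sl] at h1' h2'
    linarith
  have Hyp : ∀ i ∈ J, ∀ dd ∈ Dir Aeq beq A b, n i ⬝ᵥ dd = 0 →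
      (∀ k ∈ J, n k ⬝ᵥ dd ≤ 0) → ∀ k ∈ J, n k ⬝ᵥ dd = 0 := by
    intro i hi dd hddD hi0 hle k hk
    by_contra hkne
    have hklt : n k ⬝ᵥ dd < 0 := (hle k hk).lt_of_ne hkne
    have hinJ := (hJ_mem i).1 hi
    have hok : ∀ i', i' ∉ IQ Aeq beq A b → sl A b i' wF = 0 → A i' ⬝ᵥ dd ≤ 0 := by
      intro i' hi'IQ hi'0
      have hi'F : i' ∈ ISet A b F := by
        by_contra hi'n
        exact absurd hi'0 (ne_of_gt (hwF' i' hi'n))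
      rw [← ndir_spec Aeq beq A b i' dd hddD]
      exact hle i' ((hJ_mem i').2 ⟨hi'F, hi'IQ⟩)
    obtain ⟨ε, hε, hyQ⟩ := exists_eps Aeq beq A b hwFQ hddD hok
    have hyGi : sl A b i (wF + ε • dd) = 0 := by
      rw [sl_add_smul, hslwF i hi, ← ndir_spec Aeq beq A b i dd hddD, hi0]
      ring
    obtain ⟨aG, cG, hpairG, hpfG, _⟩ :=
      gface Aeq beq A b hinJ.2 hwFQ (hslwF i hi) hw₀Q hw₀
    have hFG : F ⊆ {y ∈ Qs Aeq beq A b | sl A b i y = 0} :=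
      fun y' hy' => ⟨hFQ hy', hinJ.1 y' hy'⟩
    have hFeq := hmax _ hpfG hFG
    have hyF : wF + ε • dd ∈ F := by
      rw [hFeq]
      exact ⟨hyQ, hyGi⟩
    have hk0 : sl A b k (wF + ε • dd) = 0 := ((hJ_mem k).1 hk).1 _ hyF
    rw [sl_add_smul, hslwF k hk, ← ndir_spec Aeq beq A b k dd hddD] at hk0
    nlinarith
  obtain ⟨k₀, hk₀⟩ := hJne
  have PL := parallel_lemma (Dir Aeq beq A b) J n v hvD hnD hnv Hyp hk₀
  set n₀ : Fin d → ℝ := n k₀ with hn₀def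
  have hn₀v : n₀ ⬝ᵥ v < 0 := hnv k₀ hk₀
  have hn₀ne : n₀ ≠ 0 := by
    intro h
    rw [h, zero_dotProduct] at hn₀v
    linarith
  have hnn : 0 < n₀ ⬝ᵥ n₀ := (dot_self_nonneg n₀).lt_of_ne (Ne.symm (dot_self_ne_zero hn₀ne))
  -- orthogonality to the kernel of n₀ in Dir
  have perp : ∀ aa cc, PairCond Aeq beq A b aa cc F →
      ∀ vv ∈ Dir Aeq beq A b, (∀ k ∈ J, n k ⬝ᵥ vv = 0) → aa ⬝ᵥ vv = 0 := by
    intro aa cc hpr vv hvvD hperp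
    have hok : ∀ i', i' ∉ IQ Aeq beq A b → sl A b i' wF = 0 → A i' ⬝ᵥ vv ≤ 0 := by
      intro i' hi'IQ hi'0
      have hi'F : i' ∈ ISet A b F := by
        by_contra hi'n
        exact absurd hi'0 (ne_of_gt (hwF' i' hi'n))
      rw [← ndir_spec Aeq beq A b i' vv hvvD,
        hperp i' ((hJ_mem i').2 ⟨hi'F, hi'IQ⟩)]
    obtain ⟨ε, hε, hyQ⟩ := exists_eps Aeq beq A b hwFQ hvvD hok
    have hyF : wF + ε • vv ∈ F := by
      rw [hFQI]
      refine ⟨hyQ, fun i hi => ?_⟩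
      by_cases hiq : i ∈ IQ Aeq beq A b
      · exact hiq _ hyQ
      · rw [sl_add_smul, ((hJ_mem i).1 ((hJ_mem i).2 ⟨hi, hiq⟩)).1 wF hwF,
          ← ndir_spec Aeq beq A b i vv hvvD, hperp i ((hJ_mem i).2 ⟨hi, hiq⟩)]
        ring
    have hy1 : aa ⬝ᵥ (wF + ε • vv) = cc := by
      have := hpr.2.2.2 ▸ hyF
      exact this.2
    have hy2 : aa ⬝ᵥ wF = cc := by
      have := hpr.2.2.2 ▸ hwF
      exact this.2
    rw [dotProduct_add, dotProduct_smul, smul_eq_mul, hy2] at hy1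
    have := hε
    nlinarith [hy1]
  have rep : ∀ aa cc, PairCond Aeq beq A b aa cc F →
      aa = ((aa ⬝ᵥ n₀) / (n₀ ⬝ᵥ n₀)) • n₀ := by
    intro aa cc hpr
    have hperp0 : ∀ vv ∈ Dir Aeq beq A b, n₀ ⬝ᵥ vv = 0 → aa ⬝ᵥ vv = 0 := by
      intro vv hvvD h0
      refine perp aa cc hpr vv hvvD ?_
      intro k hk
      obtain ⟨ck, hck, hckEq⟩ := PL k hk
      rw [hckEq, smul_dotProduct, smul_eq_mul, h0, mul_zero]
    set t : ℝ := (aa ⬝ᵥ n₀) / (n₀ ⬝ᵥ n₀) with htdef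
    set w' : Fin d → ℝ := aa - t • n₀ with hw'def
    have hw'D : w' ∈ Dir Aeq beq A b :=
      Submodule.sub_mem _ hpr.1 (Submodule.smul_mem _ _ (ndir_mem Aeq beq A b k₀))
    have hn₀w' : n₀ ⬝ᵥ w' = 0 := by
      rw [hw'def, dotProduct_sub, dotProduct_smul, smul_eq_mul, dotProduct_comm n₀ aa, htdef]
      field_simp
      ring
    have haw' : aa ⬝ᵥ w' = 0 := hperp0 w' hw'D hn₀w'
    have hww' : w' ⬝ᵥ w' = 0 := by
      rw [hw'def, sub_dotProduct, smul_dotProduct, smul_eq_mul, haw', hn₀w']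
      ring
    have : w' = 0 := dotProduct_self_eq_zero.1 hww'
    rw [hw'def] at this
    rw [sub_eq_zero] at this
    exact this
  have ha := rep a c h1
  have ha' := rep a' c' h2
  -- strict negativity of a ⬝ᵥ v
  have hw₀F : w₀ ∉ F := by
    intro hmem
    have := ((hJ_mem k₀).1 hk₀).1 w₀ hmem
    exact absurd this (ne_of_gt (hw₀ k₀ ((hJ_mem k₀).1 hk₀).2))
  have hsign : ∀ aa cc, PairCond Aeq beq A b aa cc F → aa ⬝ᵥ v < 0 := by
    intro aa cc hpr
    have h2' : aa ⬝ᵥ wF = cc := by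
      have := hpr.2.2.2 ▸ hwF
      exact this.2
    have h3' : aa ⬝ᵥ w₀ ≤ cc := hpr.2.2.1 w₀ hw₀Q
    have h4' : aa ⬝ᵥ w₀ ≠ cc := by
      intro hEq
      apply hw₀F
      rw [hpr.2.2.2]
      exact ⟨hw₀Q, hEq⟩
    rw [hvdef, dotProduct_sub]
    have := lt_of_le_of_ne h3' h4'
    linarith
  set t : ℝ := (a ⬝ᵥ n₀) / (n₀ ⬝ᵥ n₀) with htdef
  set t' : ℝ := (a' ⬝ᵥ n₀) / (n₀ ⬝ᵥ n₀) with ht'def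
  have htpos : 0 < t := by
    have hav := hsign a c h1
    rw [ha, smul_dotProduct, smul_eq_mul] at hav
    nlinarith
  have ht'pos : 0 < t' := by
    have hav := hsign a' c' h2
    rw [ha', smul_dotProduct, smul_eq_mul] at hav
    nlinarith
  have hunit : t * t * (n₀ ⬝ᵥ n₀) = 1 := by
    have := h1.2.1
    rw [ha, smul_dotProduct, dotProduct_smul, smul_eq_mul, smul_eq_mul] at this
    linarith [this]
  have hunit' : t' * t' * (n₀ ⬝ᵥ n₀) = 1 := by
    have := h2.2.1
    rw [ha', smul_dotProduct, dotProduct_smul, smul_eq_mul, smul_eq_mul] at this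
    linarith [this]
  have htt' : t = t' := by nlinarith
  have haa' : a = a' := by rw [ha, ha', htt']
  refine ⟨haa', ?_⟩
  have hc1 : a ⬝ᵥ wF = c := by
    have := h1.2.2.2 ▸ hwF
    exact this.2
  have hc2 : a' ⬝ᵥ wF = c' := by
    have := h2.2.2.2 ▸ hwF
    exact this.2
  rw [← hc1, ← hc2, haa']


open Classical in
noncomputable def fA (F : Set (Fin d → ℝ)) : Fin d → ℝ :=
  if h : IsPFace Aeq beq A b F then h.2.2.choose else 0

open Classical in
noncomputable def fc (F : Set (Fin d → ℝ)) : ℝ :=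
  if h : IsPFace Aeq beq A b F then h.2.2.choose_spec.choose else 0

lemma fA_spec {F} (h : IsPFace Aeq beq A b F) :
    PairCond Aeq beq A b (fA Aeq beq A b F) (fc Aeq beq A b F) F := by
  rw [fA, fc, dif_pos h, dif_pos h]
  exact h.2.2.choose_spec.choose_spec

lemma facet_pair_eq {F} (hF : IsFacet Aeq beq A b F) {a c}
    (h : PairCond Aeq beq A b a c F) :
    a = fA Aeq beq A b F ∧ c = fc Aeq beq A b F :=
  facet_pair_unique Aeq beq A b hF h (fA_spec Aeq beq A b hF.1)

lemma ISet_diff_nonempty {F} (hF : IsFacet Aeq beq A b F) :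
    ∃ i, i ∈ ISet A b F ∧ i ∉ IQ Aeq beq A b := by
  by_contra hcon
  push_neg at hcon
  apply hF.1.2.1
  rw [face_eq_QI Aeq beq A b hF.1]
  apply Set.Subset.antisymm (fun y hy => hy.1)
  exact fun y hy => ⟨hy, fun i hi => hcon i hi y hy⟩

lemma facet_not_mem_w₀ {F w₀} (hF : IsFacet Aeq beq A b F) (hw₀Q : w₀ ∈ Qs Aeq beq A b)
    (hw₀ : ∀ j, j ∉ IQ Aeq beq A b → 0 < sl A b j w₀) : w₀ ∉ F := by
  obtain ⟨k, hkI, hkQ⟩ := ISet_diff_nonempty Aeq beq A b hF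
  intro hmem
  exact absurd (hkI w₀ hmem) (ne_of_gt (hw₀ k hkQ))

lemma cut {y : Fin d → ℝ} (hQne : (Qs Aeq beq A b).Nonempty)
    (hy : y ∈ affineSpan ℝ (Qs Aeq beq A b))
    (hsl : ∀ F, IsFacet Aeq beq A b F → fA Aeq beq A b F ⬝ᵥ y ≤ fc Aeq beq A b F) :
    y ∈ Qs Aeq beq A b := by
  classical
  by_contra hyQ
  obtain ⟨w₀, hw₀Q, hw₀aux⟩ := prelint Aeq beq A b Set.Subset.rfl (Qs_convex Aeq beq A b) hQne
  have hw₀ : ∀ j, j ∉ IQ Aeq beq A b → 0 < sl A b j w₀ := by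
    intro j hj
    exact hw₀aux j ((not_mem_IQ Aeq beq A b).1 hj)
  set u : Fin d → ℝ := y - w₀ with hudef
  have huD : u ∈ Dir Aeq beq A b :=
    sub_mem_Dir Aeq beq A b hy (mem_span_Qs Aeq beq A b hw₀Q)
  have heqr : ∀ (t : ℝ) (i : Fin g), Aeq i ⬝ᵥ (w₀ + t • u) = beq i := by
    intro t i
    simp only [dotProduct_add, dotProduct_smul, smul_eq_mul]
    rw [hw₀Q.1 i, dir_eq_rows Aeq beq A b huD i]; ring
  set T : Set ℝ := Set.Icc (0:ℝ) 1 ∩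
    ⋂ i : Fin f, {t : ℝ | 0 ≤ sl A b i w₀ - t * (A i ⬝ᵥ u)} with hTdef
  have hmemT : ∀ t ∈ T, w₀ + t • u ∈ Qs Aeq beq A b := by
    intro t ht
    refine ⟨heqr t, fun i => ?_⟩
    have := Set.mem_iInter.1 ht.2 i
    simp only [Set.mem_setOf_eq] at this
    have h2 := sl_add_smul A b i w₀ u t
    simp only [sl] at h2 this ⊢
    linarith
  have hT0 : (0:ℝ) ∈ T := by
    constructor
    · exact Set.mem_Icc.2 ⟨le_refl 0, zero_le_one⟩
    · refine Set.mem_iInter.2 fun i => ?_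
      simp only [Set.mem_setOf_eq, zero_mul, sub_zero]
      exact sl_nonneg Aeq beq A b hw₀Q
  have hTclosed : IsClosed T := by
    refine IsClosed.inter isClosed_Icc (isClosed_iInter fun i => ?_)
    exact isClosed_le continuous_const (by fun_prop)
  have hTbdd : BddAbove T := ⟨1, fun t ht => ht.1.2⟩
  set ts : ℝ := sSup T with htsdef
  have htsT : ts ∈ T := hTclosed.csSup_mem ⟨0, hT0⟩ hTbdd
  have hts0 : 0 ≤ ts := htsT.1.1
  have hts1 : ts ≤ 1 := htsT.1.2
  have htsne1 : ts ≠ 1 := by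
    intro h
    apply hyQ
    have := hmemT ts htsT
    rw [h, one_smul, hudef] at this
    simpa using this
  have htslt1 : ts < 1 := lt_of_le_of_ne hts1 htsne1
  -- sequence of violated constraints
  have hviol : ∀ n : ℕ, ∃ i : Fin f, sl A b i w₀ - (ts + (1 - ts)/(n+1)) * (A i ⬝ᵥ u) < 0 := by
    intro n
    set tn : ℝ := ts + (1 - ts)/(n+1) with htn
    have htnpos : ts < tn := by
      rw [htn]
      have : 0 < (1 - ts)/(n+1) := div_pos (by linarith) (by positivity)
      linarith
    have htnle : tn ≤ 1 := by
      rw [htn]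
      have h1 : (1 - ts)/(n+1) ≤ (1 - ts)/1 := by
        apply div_le_div_of_nonneg_left (by linarith) one_pos
        exact_mod_cast Nat.le_add_left 1 n
      simp at h1
      linarith
    have htnT : tn ∉ T := by
      intro hmem
      exact absurd (le_csSup hTbdd hmem) (not_le.2 htnpos)
    by_contra hcon
    push_neg at hcon
    apply htnT
    refine ⟨Set.mem_Icc.2 ⟨by linarith, htnle⟩, Set.mem_iInter.2 fun i => ?_⟩
    exact hcon i
  choose ii hii using hviol
  obtain ⟨i, hfib⟩ := Finite.exists_infinite_fiber ii
  have hfib' : (ii ⁻¹' {i}).Infinite := Set.infinite_coe_iff.1 hfib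
  set gs : ℝ := A i ⬝ᵥ u with hgs
  have hval_ts : 0 ≤ sl A b i w₀ - ts * gs := by
    have := Set.mem_iInter.1 htsT.2 i
    exact this
  obtain ⟨n₁, hn₁fib⟩ := hfib'.nonempty
  have hn₁ : sl A b i w₀ - (ts + (1 - ts)/(n₁+1)) * gs < 0 := by
    have := hii n₁
    rw [show ii n₁ = i from hn₁fib] at this
    exact this
  have hgspos : 0 < gs := by
    nlinarith [show (0:ℝ) < (1 - ts)/(n₁+1) from div_pos (by linarith) (by positivity)]
  have hzero : sl A b i w₀ - ts * gs = 0 := by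
    by_contra hne
    have hpos : 0 < sl A b i w₀ - ts * gs := lt_of_le_of_ne hval_ts (Ne.symm hne)
    set dl : ℝ := (sl A b i w₀ - ts * gs) / gs with hdl
    have hdlpos : 0 < dl := div_pos hpos hgspos
    obtain ⟨N, hN⟩ := exists_nat_gt ((1 - ts)/dl)
    have hex : ∃ n₂ ∈ ii ⁻¹' {i}, N < n₂ := by
      by_contra hcon2
      push_neg at hcon2
      exact hfib' (Set.Finite.subset (Set.finite_Iic N) (fun n hn => hcon2 n hn))
    obtain ⟨n₂, hn₂fib, hn₂gt⟩ := hex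
    have hn₂ : sl A b i w₀ - (ts + (1 - ts)/(n₂+1)) * gs < 0 := by
      have := hii n₂
      rw [show ii n₂ = i from hn₂fib] at this
      exact this
    have hsmall : (1 - ts)/(n₂+1) < dl := by
      have h1 : (1 - ts)/dl < N := hN
      have h2 : (N:ℝ) < n₂ + 1 := by exact_mod_cast Nat.lt_succ_of_lt hn₂gt
      have h3 : (1 - ts)/dl < n₂ + 1 := lt_trans h1 h2
      rw [div_lt_iff₀ (by positivity : (0:ℝ) < (n₂:ℝ)+1)]
      rw [div_lt_iff₀ hdlpos] at h3
      linarith [mul_comm dl ((n₂:ℝ)+1)]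
    have h6 : dl * gs = sl A b i w₀ - ts * gs := by
      rw [hdl]; field_simp
    nlinarith [mul_lt_mul_of_pos_right hsmall hgspos]
  have hiIQ : i ∉ IQ Aeq beq A b := by
    intro hmem
    have := dir_IQ_rows Aeq beq A b huD hmem
    rw [← hgs] at this
    linarith
  have htspos : 0 < ts := by
    have hw₀pos := hw₀ i hiIQ
    nlinarith
  set z : Fin d → ℝ := w₀ + ts • u with hzdef
  have hzQ : z ∈ Qs Aeq beq A b := hmemT ts htsT
  have hz0 : sl A b i z = 0 := by
    rw [hzdef, sl_add_smul, ← hgs, hzero]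
  obtain ⟨aG, cG, hpairG, hpfG, _⟩ := gface Aeq beq A b hiIQ hzQ hz0 hw₀Q hw₀
  obtain ⟨M, hM, hGM⟩ := exists_facet Aeq beq A b hpfG
  have hMdef := (fA_spec Aeq beq A b hM.1).2.2.2
  have hzM : z ∈ M := hGM ⟨hzQ, hz0⟩
  have h0 : fA Aeq beq A b M ⬝ᵥ z = fc Aeq beq A b M := (hMdef ▸ hzM).2
  have hw₀M : w₀ ∉ M := facet_not_mem_w₀ Aeq beq A b hM hw₀Q hw₀
  have hw₀lt : fA Aeq beq A b M ⬝ᵥ w₀ < fc Aeq beq A b M := by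
    refine lt_of_le_of_ne ((fA_spec Aeq beq A b hM.1).2.2.1 w₀ hw₀Q) ?_
    intro hEq
    apply hw₀M
    rw [hMdef]
    exact ⟨hw₀Q, hEq⟩
  have hfy : fA Aeq beq A b M ⬝ᵥ y ≤ fc Aeq beq A b M := hsl M hM
  have hy_split : fA Aeq beq A b M ⬝ᵥ y
      = fA Aeq beq A b M ⬝ᵥ w₀ + fA Aeq beq A b M ⬝ᵥ u := by
    rw [hudef, dotProduct_sub]; ring
  have hz_split : fA Aeq beq A b M ⬝ᵥ z
      = fA Aeq beq A b M ⬝ᵥ w₀ + ts * (fA Aeq beq A b M ⬝ᵥ u) := by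
    rw [hzdef, dotProduct_add, dotProduct_smul, smul_eq_mul]
  rw [hz_split] at h0
  nlinarith [h0, hw₀lt, hfy, hy_split]


def kfun (U : Matrix (Fin d) (Fin d) ℝ) (u : Fin d → ℝ) : (Fin d → ℝ) → (Fin d → ℝ) :=
  fun y => U *ᵥ y + u

noncomputable def kaff (U : Matrix (Fin d) (Fin d) ℝ) (u : Fin d → ℝ) :
    (Fin d → ℝ) →ᵃ[ℝ] (Fin d → ℝ) where
  toFun := kfun U u
  linear := Matrix.mulVecLin U
  map_vadd' p v := by
    simp only [kfun, vadd_eq_add, Matrix.mulVecLin_apply, Matrix.mulVec_add]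
    abel

@[simp] lemma kaff_apply (U : Matrix (Fin d) (Fin d) ℝ) (u : Fin d → ℝ) (y) :
    kaff U u y = U *ᵥ y + u := rfl

lemma kfun_comp1 {U : Matrix (Fin d) (Fin d) ℝ} (hU1 : U * Uᵀ = 1) (u : Fin d → ℝ) :
    ∀ y, kfun U u (kfun Uᵀ (-(Uᵀ *ᵥ u)) y) = y := by
  intro y
  simp only [kfun, Matrix.mulVec_add, Matrix.mulVec_neg, Matrix.mulVec_mulVec, hU1,
    Matrix.one_mulVec]
  abel

lemma kfun_comp2 {U : Matrix (Fin d) (Fin d) ℝ} (hU1 : U * Uᵀ = 1) (u : Fin d → ℝ) :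
    ∀ y, kfun Uᵀ (-(Uᵀ *ᵥ u)) (kfun U u y) = y := by
  have hU2 : Uᵀ * U = 1 := mul_eq_one_comm.1 hU1
  intro y
  simp only [kfun, Matrix.mulVec_add, Matrix.mulVec_mulVec, hU2, Matrix.one_mulVec]
  abel

lemma kQ' {U : Matrix (Fin d) (Fin d) ℝ} {u : Fin d → ℝ} (hU1 : U * Uᵀ = 1)
    (hκQ : kfun U u '' Qs Aeq beq A b = Qs Aeq beq A b) :
    kfun Uᵀ (-(Uᵀ *ᵥ u)) '' Qs Aeq beq A b = Qs Aeq beq A b := by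
  conv_lhs => rw [← hκQ]
  rw [← Set.image_comp]
  have : (kfun Uᵀ (-(Uᵀ *ᵥ u)) ∘ kfun U u) = id := by
    funext y
    exact kfun_comp2 hU1 u y
  rw [this, Set.image_id]

lemma dot_UU {U : Matrix (Fin d) (Fin d) ℝ} (hU1 : U * Uᵀ = 1) (a x : Fin d → ℝ) :
    (U *ᵥ a) ⬝ᵥ (U *ᵥ x) = a ⬝ᵥ x := by
  have hU2 : Uᵀ * U = 1 := mul_eq_one_comm.1 hU1
  rw [show U *ᵥ a = a ᵥ* Uᵀ from by rw [← Matrix.mulVec_transpose, Matrix.transpose_transpose],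
    dotProduct_mulVec, Matrix.vecMul_vecMul, hU2, Matrix.vecMul_one]

lemma dot_U (U : Matrix (Fin d) (Fin d) ℝ) (a x : Fin d → ℝ) :
    a ⬝ᵥ (U *ᵥ x) = (Uᵀ *ᵥ a) ⬝ᵥ x := by
  rw [dotProduct_mulVec, ← Matrix.mulVec_transpose]

lemma kDir {U : Matrix (Fin d) (Fin d) ℝ} {u : Fin d → ℝ}
    (hκQ : kfun U u '' Qs Aeq beq A b = Qs Aeq beq A b) :
    Submodule.map (Matrix.mulVecLin U) (Dir Aeq beq A b) = Dir Aeq beq A b := by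
  have h1 : AffineSubspace.map (kaff U u) (affineSpan ℝ (Qs Aeq beq A b))
      = affineSpan ℝ (Qs Aeq beq A b) := by
    rw [AffineSubspace.map_span, show ⇑(kaff U u) = kfun U u from rfl, hκQ]
  have h2 := AffineSubspace.map_direction (kaff U u) (affineSpan ℝ (Qs Aeq beq A b))
  rw [h1] at h2
  exact h2.symm

lemma kDir_mem {U : Matrix (Fin d) (Fin d) ℝ} {u : Fin d → ℝ}
    (hκQ : kfun U u '' Qs Aeq beq A b = Qs Aeq beq A b) {a : Fin d → ℝ}
    (ha : a ∈ Dir Aeq beq A b) : U *ᵥ a ∈ Dir Aeq beq A b := by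
  rw [← kDir Aeq beq A b hκQ]
  exact Submodule.mem_map_of_mem ha

lemma kmem {U : Matrix (Fin d) (Fin d) ℝ} {u : Fin d → ℝ}
    (hκQ : kfun U u '' Qs Aeq beq A b = Qs Aeq beq A b) {y}
    (hy : y ∈ Qs Aeq beq A b) : U *ᵥ y + u ∈ Qs Aeq beq A b := by
  rw [← hκQ]
  exact Set.mem_image_of_mem _ hy

lemma pair_map {U : Matrix (Fin d) (Fin d) ℝ} {u : Fin d → ℝ} (hU1 : U * Uᵀ = 1)
    (hκQ : kfun U u '' Qs Aeq beq A b = Qs Aeq beq A b) {F a c}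
    (hp : PairCond Aeq beq A b a c F) :
    PairCond Aeq beq A b (U *ᵥ a) (c + (U *ᵥ a) ⬝ᵥ u) (kfun U u '' F) := by
  obtain ⟨haD, haU, hval, hFdef⟩ := hp
  have hκ'Q := kQ' Aeq beq A b hU1 hκQ
  have key : ∀ y ∈ Qs Aeq beq A b,
      (U *ᵥ a) ⬝ᵥ y = a ⬝ᵥ (kfun Uᵀ (-(Uᵀ *ᵥ u)) y) + (U *ᵥ a) ⬝ᵥ u := by
    intro y hy
    simp only [kfun, dotProduct_add, dotProduct_neg]
    rw [dot_U Uᵀ a, Matrix.transpose_transpose, dot_U Uᵀ a, Matrix.transpose_transpose]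
    ring
  refine ⟨kDir_mem Aeq beq A b hκQ haD, by rw [dot_UU hU1, haU], ?_, ?_⟩
  · intro y hy
    have hy' : kfun Uᵀ (-(Uᵀ *ᵥ u)) y ∈ Qs Aeq beq A b := by
      rw [← hκ'Q]
      exact Set.mem_image_of_mem _ hy
    rw [key y hy]
    have := hval _ hy'
    linarith
  · apply Set.Subset.antisymm
    · rintro y' ⟨x, hxF, rfl⟩
      have hxQ : x ∈ Qs Aeq beq A b := (hFdef ▸ hxF).1
      have hxE : a ⬝ᵥ x = c := (hFdef ▸ hxF).2
      refine ⟨by rw [← hκQ]; exact Set.mem_image_of_mem _ hxQ, ?_⟩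
      have hback : kfun Uᵀ (-(Uᵀ *ᵥ u)) (kfun U u x) = x := kfun_comp2 hU1 u x
      rw [key _ (by rw [← hκQ]; exact Set.mem_image_of_mem _ hxQ), hback, hxE]
    · rintro y' ⟨hy'Q, hy'E⟩
      set x := kfun Uᵀ (-(Uᵀ *ᵥ u)) y' with hx
      have hxQ : x ∈ Qs Aeq beq A b := by
        rw [← hκ'Q]
        exact Set.mem_image_of_mem _ hy'Q
      have hxE : a ⬝ᵥ x = c := by
        have := key y' hy'Q
        rw [hy'E] at this
        linarith
      have hxF : x ∈ F := by
        rw [hFdef]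
        exact ⟨hxQ, hxE⟩
      exact ⟨x, hxF, kfun_comp1 hU1 u y'⟩

lemma pface_map {U : Matrix (Fin d) (Fin d) ℝ} {u : Fin d → ℝ} (hU1 : U * Uᵀ = 1)
    (hκQ : kfun U u '' Qs Aeq beq A b = Qs Aeq beq A b) {F}
    (hp : IsPFace Aeq beq A b F) : IsPFace Aeq beq A b (kfun U u '' F) := by
  obtain ⟨hne, hproper, a, c, hpair⟩ := hp
  refine ⟨hne.image _, ?_, _, _, pair_map Aeq beq A b hU1 hκQ hpair⟩
  intro hEq
  apply hproper
  have hκ'Q := kQ' Aeq beq A b hU1 hκQ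
  have : kfun Uᵀ (-(Uᵀ *ᵥ u)) '' (kfun U u '' F) = kfun Uᵀ (-(Uᵀ *ᵥ u)) '' Qs Aeq beq A b := by
    rw [hEq]
  rw [← Set.image_comp] at this
  rw [show (kfun Uᵀ (-(Uᵀ *ᵥ u)) ∘ kfun U u) = id from funext (kfun_comp2 hU1 u),
    Set.image_id] at this
  rw [this, hκ'Q]

lemma facet_map {U : Matrix (Fin d) (Fin d) ℝ} {u : Fin d → ℝ} (hU1 : U * Uᵀ = 1)
    (hκQ : kfun U u '' Qs Aeq beq A b = Qs Aeq beq A b) {F}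
    (hp : IsFacet Aeq beq A b F) : IsFacet Aeq beq A b (kfun U u '' F) := by
  have hU2 : Uᵀ * U = 1 := mul_eq_one_comm.1 hU1
  have hU1' : Uᵀ * (Uᵀ)ᵀ = 1 := by rw [Matrix.transpose_transpose]; exact hU2
  have hκ'Q := kQ' Aeq beq A b hU1 hκQ
  refine ⟨pface_map Aeq beq A b hU1 hκQ hp.1, ?_⟩
  intro F' hF' hsub
  have hF'' := pface_map Aeq beq A b hU1' hκ'Q hF'
  have hFsub : F ⊆ kfun Uᵀ (-(Uᵀ *ᵥ u)) '' F' := by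
    intro x hx
    exact ⟨kfun U u x, hsub (Set.mem_image_of_mem _ hx), kfun_comp2 hU1 u x⟩
  have := hp.2 _ hF'' hFsub
  rw [this, ← Set.image_comp, show (kfun U u ∘ kfun Uᵀ (-(Uᵀ *ᵥ u))) = id from
    funext (kfun_comp1 hU1 u), Set.image_id]

lemma facet_slack_map {U : Matrix (Fin d) (Fin d) ℝ} {u : Fin d → ℝ} (hU1 : U * Uᵀ = 1)
    (hκQ : kfun U u '' Qs Aeq beq A b = Qs Aeq beq A b) {F}
    (hp : IsFacet Aeq beq A b F) :
    ∀ y : Fin d → ℝ,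
      fc Aeq beq A b (kfun U u '' F) - fA Aeq beq A b (kfun U u '' F) ⬝ᵥ (kfun U u y)
      = fc Aeq beq A b F - fA Aeq beq A b F ⬝ᵥ y := by
  intro y
  obtain ⟨hAeq, hceq⟩ := facet_pair_eq Aeq beq A b (facet_map Aeq beq A b hU1 hκQ hp)
    (pair_map Aeq beq A b hU1 hκQ (fA_spec Aeq beq A b hp.1))
  rw [← hAeq, ← hceq]
  simp only [kfun, dotProduct_add]
  rw [dot_UU hU1]
  ring


noncomputable def femb (FS : {F // IsFacet Aeq beq A b F}) : Fin f :=
  (ISet_diff_nonempty Aeq beq A b FS.2).choose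

lemma femb_mem (FS : {F // IsFacet Aeq beq A b F}) :
    femb Aeq beq A b FS ∈ ISet A b FS.1 ∧ femb Aeq beq A b FS ∉ IQ Aeq beq A b :=
  (ISet_diff_nonempty Aeq beq A b FS.2).choose_spec

lemma femb_inj (hQne : (Qs Aeq beq A b).Nonempty) :
    Function.Injective (femb Aeq beq A b) := by
  obtain ⟨w₀, hw₀Q, hw₀aux⟩ := prelint Aeq beq A b Set.Subset.rfl (Qs_convex Aeq beq A b) hQne
  have hw₀ : ∀ j, j ∉ IQ Aeq beq A b → 0 < sl A b j w₀ := fun j hj =>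
    hw₀aux j ((not_mem_IQ Aeq beq A b).1 hj)
  intro FS FS' hEq
  set i := femb Aeq beq A b FS with hidef
  have h1 := femb_mem Aeq beq A b FS
  have h2 := femb_mem Aeq beq A b FS'
  rw [← hEq] at h2
  -- a common point with slack zero
  obtain ⟨z, hzF⟩ := FS.2.1.1
  have hzQ : z ∈ Qs Aeq beq A b := by
    have hd := (fA_spec Aeq beq A b FS.2.1).2.2.2
    exact (hd ▸ hzF).1
  have hzi : sl A b i z = 0 := h1.1 z hzF
  obtain ⟨aG, cG, hpairG, hpfG, _⟩ := gface Aeq beq A b h1.2 hzQ hzi hw₀Q hw₀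
  have key : ∀ GS : {F // IsFacet Aeq beq A b F}, femb Aeq beq A b GS = i →
      GS.1 = {y ∈ Qs Aeq beq A b | sl A b i y = 0} := by
    intro GS hGS
    apply GS.2.2 _ hpfG
    intro y hy
    have hyQ : y ∈ Qs Aeq beq A b := by
      have hd := (fA_spec Aeq beq A b GS.2.1).2.2.2
      exact (hd ▸ hy).1
    have : femb Aeq beq A b GS ∈ ISet A b GS.1 := (femb_mem Aeq beq A b GS).1
    rw [hGS] at this
    exact ⟨hyQ, this y hy⟩
  have e1 := key FS rfl
  have e2 := key FS' hEq.symm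
  exact Subtype.ext (e1.trans e2.symm)

open Classical in
noncomputable def Llin : (Fin d → ℝ) →ₗ[ℝ] (Fin f → ℝ) where
  toFun v := fun k => if h : ∃ FS : {F // IsFacet Aeq beq A b F}, femb Aeq beq A b FS = k
    then -(fA Aeq beq A b h.choose.1 ⬝ᵥ v) else 0
  map_add' x y := by
    funext k
    by_cases h : ∃ FS : {F // IsFacet Aeq beq A b F}, femb Aeq beq A b FS = k
    · simp only [dif_pos h, dotProduct_add, Pi.add_apply]
      ring
    · simp only [dif_neg h, Pi.add_apply]
      ring
  map_smul' r x := by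
    funext k
    by_cases h : ∃ FS : {F // IsFacet Aeq beq A b F}, femb Aeq beq A b FS = k
    · simp only [dif_pos h, dotProduct_smul, RingHom.id_apply, Pi.smul_apply, smul_eq_mul]
      ring
    · simp only [dif_neg h, RingHom.id_apply, Pi.smul_apply, smul_eq_mul]
      ring

open Classical in
noncomputable def Laff : (Fin d → ℝ) →ᵃ[ℝ] (Fin f → ℝ) where
  toFun y := fun k => if h : ∃ FS : {F // IsFacet Aeq beq A b F}, femb Aeq beq A b FS = k
    then fc Aeq beq A b h.choose.1 - fA Aeq beq A b h.choose.1 ⬝ᵥ y else 0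
  linear := Llin Aeq beq A b
  map_vadd' pt v := by
    funext k
    by_cases h : ∃ FS : {F // IsFacet Aeq beq A b F}, femb Aeq beq A b FS = k
    · simp only [vadd_eq_add, dif_pos h, Llin, Pi.add_apply, LinearMap.coe_mk, AddHom.coe_mk,
        dotProduct_add]
      ring
    · simp only [vadd_eq_add, dif_neg h, Llin, Pi.add_apply, LinearMap.coe_mk, AddHom.coe_mk]
      ring

lemma Laff_femb (hQne : (Qs Aeq beq A b).Nonempty) (FS : {F // IsFacet Aeq beq A b F})
    (y : Fin d → ℝ) :
    Laff Aeq beq A b y (femb Aeq beq A b FS) = fc Aeq beq A b FS.1 - fA Aeq beq A b FS.1 ⬝ᵥ y := by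
  have h : ∃ GS : {F // IsFacet Aeq beq A b F}, femb Aeq beq A b GS = femb Aeq beq A b FS :=
    ⟨FS, rfl⟩
  have hch : h.choose = FS := femb_inj Aeq beq A b hQne h.choose_spec
  simp only [Laff, AffineMap.coe_mk]
  rw [dif_pos h, hch]

lemma Llin_femb (hQne : (Qs Aeq beq A b).Nonempty) (FS : {F // IsFacet Aeq beq A b F})
    (v : Fin d → ℝ) :
    Llin Aeq beq A b v (femb Aeq beq A b FS) = -(fA Aeq beq A b FS.1 ⬝ᵥ v) := by
  have h : ∃ GS : {F // IsFacet Aeq beq A b F}, femb Aeq beq A b GS = femb Aeq beq A b FS :=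
    ⟨FS, rfl⟩
  have hch : h.choose = FS := femb_inj Aeq beq A b hQne h.choose_spec
  simp only [Llin, LinearMap.coe_mk, AddHom.coe_mk]
  rw [dif_pos h, hch]

lemma Laff_nofacet {k : Fin f}
    (h : ¬ ∃ FS : {F // IsFacet Aeq beq A b F}, femb Aeq beq A b FS = k) (y : Fin d → ℝ) :
    Laff Aeq beq A b y k = 0 := by
  simp only [Laff, AffineMap.coe_mk]
  rw [dif_neg h]


lemma slack_set_eq (hQne : (Qs Aeq beq A b).Nonempty) :
    {z : Fin f → ℝ | z ∈ AffineSubspace.map (Laff Aeq beq A b)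
        (affineSpan ℝ (Qs Aeq beq A b)) ∧ ∀ i, 0 ≤ z i}
      = ⇑(Laff Aeq beq A b) '' Qs Aeq beq A b := by
  apply Set.Subset.antisymm
  · rintro z ⟨hzV, hz0⟩
    obtain ⟨y, hy, rfl⟩ := (AffineSubspace.mem_map).1 hzV
    refine ⟨y, ?_, rfl⟩
    apply cut Aeq beq A b hQne hy
    intro F hF
    have := hz0 (femb Aeq beq A b ⟨F, hF⟩)
    rw [Laff_femb Aeq beq A b hQne ⟨F, hF⟩ y] at this
    linarith
  · rintro z ⟨y, hy, rfl⟩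
    constructor
    · exact AffineSubspace.mem_map.2 ⟨y, mem_span_Qs Aeq beq A b hy, rfl⟩
    · intro k
      by_cases h : ∃ FS : {F // IsFacet Aeq beq A b F}, femb Aeq beq A b FS = k
      · obtain ⟨FS, rfl⟩ := h
        rw [Laff_femb Aeq beq A b hQne FS y]
        have := (fA_spec Aeq beq A b FS.2.1).2.2.1 y hy
        linarith
      · rw [Laff_nofacet Aeq beq A b h y]

lemma exists_proj {m : ℕ} (hQne : (Qs Aeq beq A b).Nonempty)
    (p : (Fin d → ℝ) →ᵃ[ℝ] (Fin m → ℝ))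
    (hbd : Bornology.IsBounded (⇑p '' Qs Aeq beq A b)) :
    ∃ p' : (Fin f → ℝ) →ᵃ[ℝ] (Fin m → ℝ),
      ∀ y ∈ Qs Aeq beq A b, p' (Laff Aeq beq A b y) = p y := by
  classical
  obtain ⟨w₀, hw₀Q, hw₀aux⟩ := prelint Aeq beq A b Set.Subset.rfl (Qs_convex Aeq beq A b) hQne
  set Dr := Dir Aeq beq A b with hDr
  set ψ : Dr →ₗ[ℝ] (Fin f → ℝ) := (Llin Aeq beq A b).comp Dr.subtype with hψ
  set βD : Dr →ₗ[ℝ] (Fin m → ℝ) := p.linear.comp Dr.subtype with hβ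
  have hker : LinearMap.ker ψ ≤ LinearMap.ker βD := by
    intro v hv
    rw [LinearMap.mem_ker] at hv ⊢
    have hv' : Llin Aeq beq A b v.1 = 0 := hv
    have hAll : ∀ FS : {F // IsFacet Aeq beq A b F}, fA Aeq beq A b FS.1 ⬝ᵥ v.1 = 0 := by
      intro FS
      have := congrFun hv' (femb Aeq beq A b FS)
      rw [Llin_femb Aeq beq A b hQne FS v.1] at this
      simpa using this
    have hline : ∀ t : ℝ, w₀ + t • v.1 ∈ Qs Aeq beq A b := by
      intro t
      apply cut Aeq beq A b hQne
      · have := AffineSubspace.vadd_mem_of_mem_direction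
          (Submodule.smul_mem (Dir Aeq beq A b) t v.2) (mem_span_Qs Aeq beq A b hw₀Q)
        simpa [vadd_eq_add, add_comm] using this
      · intro F hF
        have h1 := (fA_spec Aeq beq A b hF.1).2.2.1 w₀ hw₀Q
        have h2 := hAll ⟨F, hF⟩
        simp only [dotProduct_add, dotProduct_smul, smul_eq_mul, h2]
        linarith
    -- p.linear kills v
    have hplin : p.linear v.1 = 0 := by
      by_contra hc
      have hcn : 0 < ‖p.linear v.1‖ := norm_pos_iff.2 hc
      obtain ⟨C, hC⟩ := isBounded_iff_forall_norm_le.1 hbd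
      have hC0 : 0 ≤ C := le_trans (norm_nonneg _) (hC _ ⟨w₀, hw₀Q, rfl⟩)
      set t : ℝ := (C + ‖p w₀‖ + 1)/‖p.linear v.1‖ with ht
      have htpos : 0 < t := by positivity
      have hx : p (w₀ + t • v.1) ∈ ⇑p '' Qs Aeq beq A b :=
        Set.mem_image_of_mem _ (hline t)
      have hxn := hC _ hx
      have hsplit : p (w₀ + t • v.1) = t • p.linear v.1 + p w₀ := by
        have := p.map_vadd w₀ (t • v.1)
        simp only [vadd_eq_add] at this
        rw [add_comm (t • v.1) w₀] at this
        rw [this, LinearMap.map_smul]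
      have hnorm : ‖t • p.linear v.1‖ = t * ‖p.linear v.1‖ := by
        rw [norm_smul, Real.norm_eq_abs, abs_of_pos htpos]
      have htri : ‖t • p.linear v.1‖ ≤ ‖p (w₀ + t • v.1)‖ + ‖p w₀‖ := by
        rw [hsplit]
        have := norm_sub_le (t • p.linear v.1 + p w₀) (p w₀)
        simpa using this
      have hteq : t * ‖p.linear v.1‖ = C + ‖p w₀‖ + 1 := by
        rw [ht, div_mul_cancel₀ _ (ne_of_gt hcn)]
      rw [hnorm, hteq] at htri
      linarith
    exact hplin
  set e := ψ.quotKerEquivRange with he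
  set Mq := Submodule.liftQ (LinearMap.ker ψ) βD hker with hMq
  obtain ⟨O, hO⟩ := Submodule.exists_isCompl (LinearMap.range ψ)
  set proj := Submodule.linearProjOfIsCompl _ O hO with hproj
  set M : (Fin f → ℝ) →ₗ[ℝ] (Fin m → ℝ) := Mq.comp (e.symm.toLinearMap.comp proj) with hM
  have hMψ : ∀ v : Dr, M (ψ v) = p.linear v.1 := by
    intro v
    have h1 : proj (ψ v) = ⟨ψ v, LinearMap.mem_range_self ψ v⟩ :=
      Submodule.linearProjOfIsCompl_apply_left hO ⟨ψ v, LinearMap.mem_range_self ψ v⟩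
    have h2 : e.symm ⟨ψ v, LinearMap.mem_range_self ψ v⟩
        = Submodule.Quotient.mk v := by
      rw [LinearEquiv.symm_apply_eq]
      apply Subtype.ext
      exact (LinearMap.quotKerEquivRange_apply_mk ψ v).symm ▸ rfl
    have h3 : Mq (Submodule.Quotient.mk v) = βD v := Submodule.liftQ_apply _ βD v
    rw [hM]
    simp only [LinearMap.comp_apply, LinearEquiv.coe_toLinearMap]
    rw [h1, h2, h3]
    rfl
  refine ⟨{ toFun := fun z => M (z - Laff Aeq beq A b w₀) + p w₀
            linear := M
            map_vadd' := by
              intro pt v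
              simp only [vadd_eq_add]
              rw [show v + pt - Laff Aeq beq A b w₀ = v + (pt - Laff Aeq beq A b w₀) by ring,
                map_add]
              abel }, ?_⟩
  intro y hy
  simp only [AffineMap.coe_mk]
  set v : Fin d → ℝ := y - w₀ with hv
  have hvD : v ∈ Dir Aeq beq A b :=
    sub_mem_Dir Aeq beq A b (mem_span_Qs Aeq beq A b hy) (mem_span_Qs Aeq beq A b hw₀Q)
  have h3 : Laff Aeq beq A b y - Laff Aeq beq A b w₀ = Llin Aeq beq A b v :=
    ((Laff Aeq beq A b).linearMap_vsub y w₀).symm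
  have h4 : M (Llin Aeq beq A b v) = p.linear v := hMψ ⟨v, hvD⟩
  have h5 : p.linear v = p y - p w₀ := p.linearMap_vsub y w₀
  rw [h3, h4, h5, sub_add_cancel]

lemma Laff_perm (hQne : (Qs Aeq beq A b).Nonempty) {U : Matrix (Fin d) (Fin d) ℝ}
    {u : Fin d → ℝ} (hU1 : U * Uᵀ = 1)
    (hκQ : kfun U u '' Qs Aeq beq A b = Qs Aeq beq A b) :
    ∃ σ : Equiv.Perm (Fin f), ∀ y : Fin d → ℝ,
      (fun i => Laff Aeq beq A b y (σ⁻¹ i)) = Laff Aeq beq A b (kfun U u y) := by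
  classical
  have hU2 : Uᵀ * U = 1 := mul_eq_one_comm.1 hU1
  have hU1' : Uᵀ * (Uᵀ)ᵀ = 1 := by rw [Matrix.transpose_transpose]; exact hU2
  have hκ'Q := kQ' Aeq beq A b hU1 hκQ
  set τ : {F // IsFacet Aeq beq A b F} → {F // IsFacet Aeq beq A b F} :=
    fun FS => ⟨kfun U u '' FS.1, facet_map Aeq beq A b hU1 hκQ FS.2⟩ with hτ
  set τ' : {F // IsFacet Aeq beq A b F} → {F // IsFacet Aeq beq A b F} :=
    fun FS => ⟨kfun Uᵀ (-(Uᵀ *ᵥ u)) '' FS.1, facet_map Aeq beq A b hU1' hκ'Q FS.2⟩ with hτ'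
  have hττ' : ∀ FS, τ (τ' FS) = FS := by
    intro FS
    apply Subtype.ext
    show kfun U u '' (kfun Uᵀ (-(Uᵀ *ᵥ u)) '' FS.1) = FS.1
    rw [← Set.image_comp, show (kfun U u ∘ kfun Uᵀ (-(Uᵀ *ᵥ u))) = id from
      funext (kfun_comp1 hU1 u), Set.image_id]
  have hτ'τ : ∀ FS, τ' (τ FS) = FS := by
    intro FS
    apply Subtype.ext
    show kfun Uᵀ (-(Uᵀ *ᵥ u)) '' (kfun U u '' FS.1) = FS.1
    rw [← Set.image_comp, show (kfun Uᵀ (-(Uᵀ *ᵥ u)) ∘ kfun U u) = id from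
      funext (kfun_comp2 hU1 u), Set.image_id]
  set σf : Fin f → Fin f := fun k =>
    if h : ∃ FS : {F // IsFacet Aeq beq A b F}, femb Aeq beq A b FS = k
    then femb Aeq beq A b (τ h.choose) else k with hσf
  set σg : Fin f → Fin f := fun k =>
    if h : ∃ FS : {F // IsFacet Aeq beq A b F}, femb Aeq beq A b FS = k
    then femb Aeq beq A b (τ' h.choose) else k with hσg
  have hσf_femb : ∀ FS, σf (femb Aeq beq A b FS) = femb Aeq beq A b (τ FS) := by
    intro FS
    have h : ∃ GS : {F // IsFacet Aeq beq A b F},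
        femb Aeq beq A b GS = femb Aeq beq A b FS := ⟨FS, rfl⟩
    rw [hσf]
    simp only [dif_pos h]
    rw [femb_inj Aeq beq A b hQne h.choose_spec]
  have hσg_femb : ∀ FS, σg (femb Aeq beq A b FS) = femb Aeq beq A b (τ' FS) := by
    intro FS
    have h : ∃ GS : {F // IsFacet Aeq beq A b F},
        femb Aeq beq A b GS = femb Aeq beq A b FS := ⟨FS, rfl⟩
    rw [hσg]
    simp only [dif_pos h]
    rw [femb_inj Aeq beq A b hQne h.choose_spec]
  have hσf_no : ∀ k, (¬ ∃ FS : {F // IsFacet Aeq beq A b F}, femb Aeq beq A b FS = k)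
      → σf k = k := by
    intro k h; rw [hσf]; simp only [dif_neg h]
  have hσg_no : ∀ k, (¬ ∃ FS : {F // IsFacet Aeq beq A b F}, femb Aeq beq A b FS = k)
      → σg k = k := by
    intro k h; rw [hσg]; simp only [dif_neg h]
  have hleft : Function.LeftInverse σg σf := by
    intro k
    by_cases h : ∃ FS : {F // IsFacet Aeq beq A b F}, femb Aeq beq A b FS = k
    · obtain ⟨FS, rfl⟩ := h
      rw [hσf_femb FS, hσg_femb (τ FS), hτ'τ FS]
    · rw [hσf_no k h, hσg_no k h]
  have hright : Function.RightInverse σg σf := by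
    intro k
    by_cases h : ∃ FS : {F // IsFacet Aeq beq A b F}, femb Aeq beq A b FS = k
    · obtain ⟨FS, rfl⟩ := h
      rw [hσg_femb FS, hσf_femb (τ' FS), hττ' FS]
    · rw [hσg_no k h, hσf_no k h]
  refine ⟨⟨σf, σg, hleft, hright⟩, ?_⟩
  have hinv : ∀ k, (⟨σf, σg, hleft, hright⟩ : Equiv.Perm (Fin f))⁻¹ k = σg k := fun k => rfl
  intro y
  funext k
  rw [hinv k]
  by_cases h : ∃ FS : {F // IsFacet Aeq beq A b F}, femb Aeq beq A b FS = k
  · obtain ⟨FS, rfl⟩ := h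
    rw [hσg_femb FS, Laff_femb Aeq beq A b hQne (τ' FS), Laff_femb Aeq beq A b hQne FS]
    have hslack := facet_slack_map Aeq beq A b hU1 hκQ (τ' FS).2 y
    have himg : kfun U u '' (τ' FS).1 = FS.1 := by
      have := hττ' FS
      exact congrArg Subtype.val this
    rw [himg] at hslack
    exact hslack.symm
  · rw [hσg_no k h, Laff_nofacet Aeq beq A b h, Laff_nofacet Aeq beq A b h]

end St1

open scoped BigOperators

/-- If a polytope `P ⊆ ℝ^m` (invariant under a group `G` of affine
transformations) has an isometry-symmetric extension whose polyhedron
`Q ⊆ ℝ^d` is described by a system of linear equations together with `f` linear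
inequalities (in particular, if `Q` has `f` facets), then `P` also has a
coordinate-symmetric subspace extension `Q' = V ∩ ℝ₊^f ⊆ ℝ^f` (hence of size at
most `f`). -/
theorem statement1 (m d f g : ℕ) (X : Finset (Fin m → ℝ)) (P : Set (Fin m → ℝ))
    (hP : P = convexHull ℝ (X : Set (Fin m → ℝ)))
    (G : Subgroup ((Fin m → ℝ) ≃ᵃ[ℝ] (Fin m → ℝ)))
    (hGP : ∀ π ∈ G, (π : (Fin m → ℝ) → (Fin m → ℝ)) '' P = P)
    (Aeq : Fin g → Fin d → ℝ) (beq : Fin g → ℝ)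
    (A : Fin f → Fin d → ℝ) (b : Fin f → ℝ)
    (Q : Set (Fin d → ℝ))
    (hQ : Q = {y : Fin d → ℝ |
      (∀ i : Fin g, ∑ j, Aeq i j * y j = beq i) ∧ (∀ i : Fin f, ∑ j, A i j * y j ≤ b i)})
    (p : (Fin d → ℝ) →ᵃ[ℝ] (Fin m → ℝ)) (hproj : p '' Q = P)
    -- isometry-symmetry of the extension `Q` with respect to `G`:
    (hsym : ∀ π ∈ G, ∃ (U : Matrix (Fin d) (Fin d) ℝ) (u : Fin d → ℝ),
      U * U.transpose = 1 ∧
      (fun y : Fin d → ℝ => U.mulVec y + u) '' Q = Q ∧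
      ∀ y ∈ Q, p (U.mulVec y + u) = π (p y)) :
    -- conclusion: a coordinate-symmetric subspace extension of `P` in `ℝ^f`
    ∃ (V : AffineSubspace ℝ (Fin f → ℝ)) (p' : (Fin f → ℝ) →ᵃ[ℝ] (Fin m → ℝ)),
      p' '' {z : Fin f → ℝ | z ∈ V ∧ ∀ i, 0 ≤ z i} = P ∧
      ∀ π ∈ G, ∃ σ : Equiv.Perm (Fin f),
        (fun z : Fin f → ℝ => (fun i => z (σ⁻¹ i))) ''
            {z : Fin f → ℝ | z ∈ V ∧ ∀ i, 0 ≤ z i}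
          = {z : Fin f → ℝ | z ∈ V ∧ ∀ i, 0 ≤ z i} ∧
        ∀ z ∈ ({z : Fin f → ℝ | z ∈ V ∧ ∀ i, 0 ≤ z i} : Set (Fin f → ℝ)),
          p' (fun i => z (σ⁻¹ i)) = π (p' z) := by
  classical
  have hQQs : Q = St1.Qs Aeq beq A b := hQ
  by_cases hQe : St1.Qs Aeq beq A b = ∅
  · refine ⟨⊥, AffineMap.const ℝ (Fin f → ℝ) (0 : Fin m → ℝ), ?_, ?_⟩
    · have hSempty : {z : Fin f → ℝ | z ∈ (⊥ : AffineSubspace ℝ (Fin f → ℝ))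
          ∧ ∀ i, 0 ≤ z i} = ∅ := by
        ext z
        simp only [Set.mem_setOf_eq, Set.mem_empty_iff_false, iff_false, not_and]
        intro hz
        exact absurd hz (AffineSubspace.notMem_bot ℝ (Fin f → ℝ) z)
      rw [hSempty, Set.image_empty, ← hproj, hQQs, hQe, Set.image_empty]
    · intro π hπ
      have hSempty : {z : Fin f → ℝ | z ∈ (⊥ : AffineSubspace ℝ (Fin f → ℝ))
          ∧ ∀ i, 0 ≤ z i} = ∅ := by
        ext z
        simp only [Set.mem_setOf_eq, Set.mem_empty_iff_false, iff_false, not_and]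
        intro hz
        exact absurd hz (AffineSubspace.notMem_bot ℝ (Fin f → ℝ) z)
      refine ⟨1, by rw [hSempty, Set.image_empty], ?_⟩
      intro z hz
      rw [hSempty] at hz
      exact absurd hz (Set.notMem_empty z)
  · have hQne : (St1.Qs Aeq beq A b).Nonempty := Set.nonempty_iff_ne_empty.2 hQe
    have hPQ : ⇑p '' St1.Qs Aeq beq A b = P := by rw [← hQQs]; exact hproj
    have hbd : Bornology.IsBounded (⇑p '' St1.Qs Aeq beq A b) := by
      rw [hPQ, hP]
      exact (X.finite_toSet.isCompact_convexHull (𝕜 := ℝ)).isBounded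
    obtain ⟨p', hp'⟩ := St1.exists_proj Aeq beq A b hQne p hbd
    have hSL := St1.slack_set_eq Aeq beq A b hQne
    refine ⟨AffineSubspace.map (St1.Laff Aeq beq A b) (affineSpan ℝ (St1.Qs Aeq beq A b)),
      p', ?_, ?_⟩
    · rw [hSL, ← hPQ, ← Set.image_comp]
      exact Set.image_congr (fun y hy => hp' y hy)
    · intro π hπ
      obtain ⟨U, u, hU1, hκQ, hπp⟩ := hsym π hπ
      rw [hQQs] at hκQ hπp
      have hκQ' : St1.kfun U u '' St1.Qs Aeq beq A b = St1.Qs Aeq beq A b := hκQ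
      obtain ⟨σ, hσ⟩ := St1.Laff_perm Aeq beq A b hQne hU1 hκQ'
      refine ⟨σ, ?_, ?_⟩
      · rw [hSL]
        calc (fun z : Fin f → ℝ => fun i => z (σ⁻¹ i)) '' (⇑(St1.Laff Aeq beq A b) ''
              St1.Qs Aeq beq A b)
            = (fun y => (fun i : Fin f => St1.Laff Aeq beq A b y (σ⁻¹ i))) ''
              St1.Qs Aeq beq A b := by rw [Set.image_image]
          _ = (fun y => St1.Laff Aeq beq A b (St1.kfun U u y)) '' St1.Qs Aeq beq A b :=
              Set.image_congr (fun y _ => hσ y)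
          _ = ⇑(St1.Laff Aeq beq A b) '' (St1.kfun U u '' St1.Qs Aeq beq A b) := by
              rw [Set.image_image]
          _ = ⇑(St1.Laff Aeq beq A b) '' St1.Qs Aeq beq A b := by rw [hκQ']
      · intro z hz
        rw [hSL] at hz
        obtain ⟨y, hyQ, rfl⟩ := hz
        have hκy : St1.kfun U u y ∈ St1.Qs Aeq beq A b := by
          rw [← hκQ']
          exact Set.mem_image_of_mem _ hyQ
        calc p' (fun i => St1.Laff Aeq beq A b y (σ⁻¹ i))
            = p' (St1.Laff Aeq beq A b (St1.kfun U u y)) := by rw [hσ y]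
          _ = p (St1.kfun U u y) := hp' _ hκy
          _ = π (p y) := hπp y hyQ
          _ = π (p' (St1.Laff Aeq beq A b y)) := by rw [hp' y hyQ]
end

section
/- Every coordinate-symmetric extension admits a coordinate-symmetric section. That is: let P ⊆ ℝ^m be a polytope with vertex set X, G a group of affine transformations of ℝ^m with π.P = P for all π ∈ G, and let Q ⊆ ℝ^d with affine projection p : ℝ^d → ℝ^m, p(Q) = P, be a coordinate-symmetric extension of P with respect to G. Then there exists a map s : X → Q with p(s(x)) = x for all x ∈ X such that for every π ∈ G there is a coordinate permutation κ_π of ℝ^d with s(π.x) = κ_π.s(x) for all x ∈ X. -/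
open scoped BigOperators

/-- Existence of a minimizer of `∑ j, (y j)^2` on a nonempty closed set. -/
lemma sq_sum_min_exists {d : ℕ} (C : Set (Fin d → ℝ)) (hC : IsClosed C) (hne : C.Nonempty) :
    ∃ v, v ∈ C ∧ ∀ w ∈ C, ∑ j, (v j)^2 ≤ ∑ j, (w j)^2 := by
  obtain ⟨y₀, hy₀⟩ := hne
  set F : (Fin d → ℝ) → ℝ := fun y => ∑ j, (y j)^2 with hF
  have hFcont : Continuous F := continuous_finset_sum _ fun j _ => (continuous_apply j).pow 2
  set K := C ∩ {y | F y ≤ F y₀} with hK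
  have hKclosed : IsClosed K := hC.inter (isClosed_le hFcont continuous_const)
  have hKne : K.Nonempty := ⟨y₀, hy₀, by simp [Set.mem_setOf_eq]⟩
  have hFy₀ : 0 ≤ F y₀ := Finset.sum_nonneg fun j _ => sq_nonneg _
  set R := Real.sqrt (F y₀) with hRdef
  have hR : R^2 = F y₀ := Real.sq_sqrt hFy₀
  have hRnn : 0 ≤ R := Real.sqrt_nonneg _
  have hsub : K ⊆ Set.pi Set.univ (fun _ => Set.Icc (-R) R) := by
    intro y hy j _
    have h1 : (y j)^2 ≤ F y₀ :=
      le_trans (Finset.single_le_sum (fun j _ => sq_nonneg (y j)) (Finset.mem_univ j)) hy.2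
    constructor <;> nlinarith [sq_nonneg (y j - R), sq_nonneg (y j + R)]
  have hKcomp : IsCompact K :=
    (isCompact_univ_pi fun _ => isCompact_Icc).of_isClosed_subset hKclosed hsub
  obtain ⟨v, hvK, hvmin⟩ := hKcomp.exists_isMinOn hKne hFcont.continuousOn
  refine ⟨v, hvK.1, fun w hw => ?_⟩
  by_cases h : F w ≤ F y₀
  · exact (isMinOn_iff.mp hvmin) w ⟨hw, h⟩
  · exact le_trans ((isMinOn_iff.mp hvmin) y₀ ⟨hy₀, show F y₀ ≤ F y₀ from le_rfl⟩) (le_of_not_ge h)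

/-- Uniqueness of the minimizer of `∑ j, (y j)^2` on a convex set. -/
lemma sq_sum_min_unique {d : ℕ} (C : Set (Fin d → ℝ)) (hC : Convex ℝ C) {v w : Fin d → ℝ}
    (hv : v ∈ C) (hw : w ∈ C)
    (hvm : ∀ u ∈ C, ∑ j, (v j)^2 ≤ ∑ j, (u j)^2)
    (hwm : ∀ u ∈ C, ∑ j, (w j)^2 ≤ ∑ j, (u j)^2) : v = w := by
  have hmid : (1/2 : ℝ) • v + (1/2 : ℝ) • w ∈ C :=
    hC hv hw (by norm_num) (by norm_num) (by norm_num)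
  have hvw : ∑ j, (v j)^2 = ∑ j, (w j)^2 := le_antisymm (hvm w hw) (hwm v hv)
  have hexp : ∑ j, (((1/2:ℝ) • v + (1/2:ℝ) • w) j)^2
      = (∑ j, (v j)^2 + ∑ j, (w j)^2)/2 - ∑ j, ((v j - w j)/2)^2 := by
    have h1 : ∀ j ∈ Finset.univ, (((1/2:ℝ) • v + (1/2:ℝ) • w) j)^2
        = ((v j)^2 + (w j)^2)/2 - ((v j - w j)/2)^2 := fun j _ => by
      simp only [Pi.add_apply, Pi.smul_apply, smul_eq_mul]; ring
    rw [Finset.sum_congr rfl h1, Finset.sum_sub_distrib, ← Finset.sum_add_distrib,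
      Finset.sum_div]
  have h1 := hvm _ hmid
  have hsum0 : ∑ j, ((v j - w j)/2)^2 ≤ 0 := by rw [hexp] at h1; linarith
  have hz : ∀ j ∈ Finset.univ, ((v j - w j)/2)^2 = 0 :=
    (Finset.sum_eq_zero_iff_of_nonneg (fun j _ => sq_nonneg _)).mp
      (le_antisymm hsum0 (Finset.sum_nonneg fun j _ => sq_nonneg _))
  funext j
  have := hz j (Finset.mem_univ j)
  nlinarith [this]

/-- Lemma 2.3.  Every coordinate-symmetric extension admits a
coordinate-symmetric section.  Here `P = conv X ⊆ ℝ^m` is a polytope whose vertex set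
is the finite set `X` (its set of extreme points), `G` is a group of affine
transformations of `ℝ^m` mapping `P` to itself, and `Q ⊆ ℝ^d` is a polyhedron
(described by linear equations and inequalities) with `p(Q) = P` for an affine map `p`,
such that the extension is coordinate-symmetric with respect to `G`: for each `π ∈ G`
there is a coordinate permutation `κ_π : y ↦ (y_{σ⁻¹ j})_j` with `κ_π.Q = Q` and
`p(κ_π y) = π.p(y)` on `Q`.  Then there is a section `s : X → Q` (i.e. `s x ∈ Q` and
`p (s x) = x`) such that for each `π ∈ G` there is a coordinate permutation with
`s(π.x) = κ_π.s(x)` for all `x ∈ X`. -/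
theorem statement2 (m d g f : ℕ) (X : Finset (Fin m → ℝ)) (P : Set (Fin m → ℝ))
    (hP : P = convexHull ℝ (X : Set (Fin m → ℝ)))
    (hX : (X : Set (Fin m → ℝ)) = Set.extremePoints ℝ P)
    (G : Subgroup ((Fin m → ℝ) ≃ᵃ[ℝ] (Fin m → ℝ)))
    (hGP : ∀ π ∈ G, (π : (Fin m → ℝ) → (Fin m → ℝ)) '' P = P)
    (Aeq : Fin g → Fin d → ℝ) (beq : Fin g → ℝ)
    (A : Fin f → Fin d → ℝ) (b : Fin f → ℝ)
    (Q : Set (Fin d → ℝ))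
    (hQ : Q = {y : Fin d → ℝ |
      (∀ i : Fin g, ∑ j, Aeq i j * y j = beq i) ∧ (∀ i : Fin f, ∑ j, A i j * y j ≤ b i)})
    (p : (Fin d → ℝ) →ᵃ[ℝ] (Fin m → ℝ)) (hproj : p '' Q = P)
    (hsym : ∀ π ∈ G, ∃ σ : Equiv.Perm (Fin d),
      (fun y : Fin d → ℝ => (fun j => y (σ⁻¹ j))) '' Q = Q ∧
      ∀ y ∈ Q, p (fun j => y (σ⁻¹ j)) = π (p y)) :
    ∃ s : (Fin m → ℝ) → (Fin d → ℝ),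
      (∀ x ∈ X, s x ∈ Q ∧ p (s x) = x) ∧
      ∀ π ∈ G, ∃ σ : Equiv.Perm (Fin d),
        ∀ x ∈ X, s (π x) = fun j => s x (σ⁻¹ j) := by
  classical
  -- Q is closed
  have hQclosed : IsClosed Q := by
    have hQ' : Q = (⋂ i, {y : Fin d → ℝ | ∑ j, Aeq i j * y j = beq i}) ∩
        ⋂ i, {y : Fin d → ℝ | ∑ j, A i j * y j ≤ b i} := by
      rw [hQ]; ext y; simp [Set.mem_iInter]
    rw [hQ']
    exact IsClosed.inter
      (isClosed_iInter fun i => isClosed_eq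
        (continuous_finset_sum _ fun j _ => continuous_const.mul (continuous_apply j)) continuous_const)
      (isClosed_iInter fun i => isClosed_le
        (continuous_finset_sum _ fun j _ => continuous_const.mul (continuous_apply j)) continuous_const)
  -- Q is convex
  have hQconv : Convex ℝ Q := by
    rw [hQ]
    intro y hy z hz a c ha hc hac
    have key : ∀ (co : Fin d → ℝ),
        ∑ j, co j * (a • y + c • z) j = a * ∑ j, co j * y j + c * ∑ j, co j * z j := by
      intro co
      rw [Finset.mul_sum, Finset.mul_sum, ← Finset.sum_add_distrib]
      exact Finset.sum_congr rfl fun j _ => by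
        simp only [Pi.add_apply, Pi.smul_apply, smul_eq_mul]; ring
    constructor
    · intro i
      rw [key, hy.1 i, hz.1 i]
      linear_combination beq i * hac
    · intro i
      rw [key]
      calc a * ∑ j, A i j * y j + c * ∑ j, A i j * z j
          ≤ a * b i + c * b i :=
            add_le_add (mul_le_mul_of_nonneg_left (hy.2 i) ha)
              (mul_le_mul_of_nonneg_left (hz.2 i) hc)
        _ = b i := by linear_combination b i * hac
  have hpc : Continuous p := p.continuous_of_finiteDimensional
  set F : (Fin d → ℝ) → ℝ := fun y => ∑ j, (y j)^2 with hF
  set C : (Fin m → ℝ) → Set (Fin d → ℝ) := fun x => Q ∩ p ⁻¹' {x} with hC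
  have hCclosed : ∀ x, IsClosed (C x) := fun x =>
    hQclosed.inter (isClosed_singleton.preimage hpc)
  have hCconv : ∀ x, Convex ℝ (C x) := fun x =>
    hQconv.inter ((convex_singleton x).affine_preimage p)
  have hex : ∀ x, (C x).Nonempty → ∃ v, v ∈ C x ∧ ∀ w ∈ C x, F v ≤ F w := fun x hne =>
    sq_sum_min_exists (C x) (hCclosed x) hne
  set s : (Fin m → ℝ) → (Fin d → ℝ) :=
    fun x => if h : ∃ v, v ∈ C x ∧ ∀ w ∈ C x, F v ≤ F w then h.choose else 0 with hs_def
  have hs_spec : ∀ x, (C x).Nonempty → s x ∈ C x ∧ ∀ w ∈ C x, F (s x) ≤ F w := by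
    intro x hne
    have h := hex x hne
    rw [hs_def]
    simp only [dif_pos h]
    exact h.choose_spec
  have huniq : ∀ x, ∀ v, v ∈ C x → (∀ w ∈ C x, F v ≤ F w) → v = s x := by
    intro x v hv hmin
    have hne : (C x).Nonempty := ⟨v, hv⟩
    obtain ⟨hs1, hs2⟩ := hs_spec x hne
    exact sq_sum_min_unique (C x) (hCconv x) hv hs1 hmin hs2
  have hCne : ∀ x ∈ P, (C x).Nonempty := by
    intro x hxP
    rw [← hproj] at hxP
    obtain ⟨y, hyQ, hyp⟩ := hxP
    exact ⟨y, hyQ, by simp [hyp]⟩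
  refine ⟨s, ?_, ?_⟩
  · intro x hx
    have hxP : x ∈ P := hP ▸ subset_convexHull ℝ (X : Set (Fin m → ℝ)) (Finset.mem_coe.mpr hx)
    obtain ⟨⟨h1, h2⟩, _⟩ := hs_spec x (hCne x hxP)
    exact ⟨h1, h2⟩
  · intro π hπ
    obtain ⟨σ, hκQ, hκp⟩ := hsym π hπ
    refine ⟨σ, fun x hx => ?_⟩
    have hxP : x ∈ P := hP ▸ subset_convexHull ℝ (X : Set (Fin m → ℝ)) (Finset.mem_coe.mpr hx)
    obtain ⟨⟨hvQ, hvp⟩, hvmin⟩ := hs_spec x (hCne x hxP)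
    have hvp' : p (s x) = x := hvp
    set w : Fin d → ℝ := fun j => s x (σ⁻¹ j) with hw
    have hwQ : w ∈ Q := by rw [← hκQ]; exact ⟨s x, hvQ, rfl⟩
    have hwp : p w = π x := by
      have := hκp (s x) hvQ
      rw [hw, this, hvp']
    have hwC : w ∈ C (π x) := ⟨hwQ, hwp⟩
    have hwmin : ∀ u ∈ C (π x), F w ≤ F u := by
      intro u hu
      have huQ : u ∈ Q := hu.1
      rw [← hκQ] at huQ
      obtain ⟨z, hzQ, hzu⟩ := huQ
      have hpz : p z = x := by
        have h2 : p u = π (p z) := by rw [← hzu]; exact hκp z hzQ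
        have h1 : p u = π x := hu.2
        exact (π : (Fin m → ℝ) ≃ᵃ[ℝ] (Fin m → ℝ)).injective (h2.symm.trans h1)
      have hFw : F w = F (s x) := Equiv.sum_comp σ⁻¹ (fun j => (s x j)^2)
      have hFu : F u = F z := by rw [← hzu]; exact Equiv.sum_comp σ⁻¹ (fun j => (z j)^2)
      rw [hFw, hFu]
      exact hvmin z ⟨hzQ, hpz⟩
    exact (huniq (π x) w hwC hwmin).symm
end

section
/- Let Q ⊆ ℝ^d be an extension of the polytope P ⊆ ℝ^m with affine projection p : ℝ^d → ℝ^m, and let the face P' of P be an extension of a polytope R ⊆ ℝ^k with affine projection q : ℝ^m → ℝ^k. Then Q' = p^{-1}(P') ∩ Q is a face of Q and is an extension of R via the composed projection q∘p : ℝ^d → ℝ^k. If moreover the extension Q of P is isometry-symmetric with respect to a group G, and H is a group of affine transformations of ℝ^k such that for every τ ∈ H one has τ.R = R and there is some π_τ ∈ G with π_τ.P' = P' and q(π_τ.x) = τ.q(x) for all x ∈ P', then the extension Q' of R is isometry-symmetric with respect to H. -/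
open scoped BigOperators

/-- A face of a subset of `ℝ^m`: the set of maximizers of a linear functional over it. -/
def IsFaceOf {m : ℕ} (F P : Set (Fin m → ℝ)) : Prop :=
  ∃ c : Fin m → ℝ, F = {x ∈ P | ∀ y ∈ P, ∑ i, c i * y i ≤ ∑ i, c i * x i}

/-- Let `Q ⊆ ℝ^d` be a (polyhedral) extension of the polytope
`P ⊆ ℝ^m` with projection `p`, and let the face `P'` of `P` be an extension of a
polytope `R ⊆ ℝ^k` with projection `q`.  Then `Q' = p⁻¹(P') ∩ Q` is a face of `Q` and
an extension of `R` via `q ∘ p`.  Moreover, if the extension `Q` of `P` is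
isometry-symmetric with respect to a group `G` and `H` is a group of affine
transformations of `ℝ^k` such that every `τ ∈ H` satisfies `τ.R = R` and admits some
`π_τ ∈ G` with `π_τ.P' = P'` and `q(π_τ x) = τ.q(x)` for `x ∈ P'`, then the extension
`Q'` of `R` is isometry-symmetric with respect to `H`. -/
theorem statement3 (d m k g f : ℕ)
    (XP : Finset (Fin m → ℝ)) (P : Set (Fin m → ℝ))
    (hPpoly : P = convexHull ℝ (XP : Set (Fin m → ℝ)))
    (Aeq : Fin g → Fin d → ℝ) (beq : Fin g → ℝ)
    (A : Fin f → Fin d → ℝ) (b : Fin f → ℝ)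
    (Q : Set (Fin d → ℝ))
    (hQ : Q = {y : Fin d → ℝ |
      (∀ i : Fin g, ∑ j, Aeq i j * y j = beq i) ∧ (∀ i : Fin f, ∑ j, A i j * y j ≤ b i)})
    (p : (Fin d → ℝ) →ᵃ[ℝ] (Fin m → ℝ)) (hproj : p '' Q = P)
    (P' : Set (Fin m → ℝ)) (hface : IsFaceOf P' P)
    (XR : Finset (Fin k → ℝ)) (R : Set (Fin k → ℝ))
    (hRpoly : R = convexHull ℝ (XR : Set (Fin k → ℝ)))
    (q : (Fin m → ℝ) →ᵃ[ℝ] (Fin k → ℝ)) (hq : q '' P' = R)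
    (G : Subgroup ((Fin m → ℝ) ≃ᵃ[ℝ] (Fin m → ℝ)))
    (hGP : ∀ π ∈ G, (π : (Fin m → ℝ) → (Fin m → ℝ)) '' P = P)
    (hsym : ∀ π ∈ G, ∃ (U : Matrix (Fin d) (Fin d) ℝ) (u : Fin d → ℝ),
      U * U.transpose = 1 ∧
      (fun y : Fin d → ℝ => U.mulVec y + u) '' Q = Q ∧
      ∀ y ∈ Q, p (U.mulVec y + u) = π (p y))
    (H : Subgroup ((Fin k → ℝ) ≃ᵃ[ℝ] (Fin k → ℝ)))
    (hH : ∀ τ ∈ H, (τ : (Fin k → ℝ) → (Fin k → ℝ)) '' R = R ∧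
      ∃ π ∈ G, (π : (Fin m → ℝ) → (Fin m → ℝ)) '' P' = P' ∧
        ∀ x ∈ P', q (π x) = τ (q x)) :
    IsFaceOf (p ⁻¹' P' ∩ Q) Q ∧
    (q.comp p) '' (p ⁻¹' P' ∩ Q) = R ∧
    (∀ τ ∈ H, ∃ (U : Matrix (Fin d) (Fin d) ℝ) (u : Fin d → ℝ),
      U * U.transpose = 1 ∧
      (fun y : Fin d → ℝ => U.mulVec y + u) '' (p ⁻¹' P' ∩ Q) = p ⁻¹' P' ∩ Q ∧
      ∀ y ∈ p ⁻¹' P' ∩ Q, (q.comp p) (U.mulVec y + u) = τ ((q.comp p) y)) := by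
  obtain ⟨c, hc⟩ := hface
  -- linear functional on ℝ^d corresponding to c ∘ p
  set L := p.linear with hL
  set c' : Fin d → ℝ := fun j => ∑ i, c i * L (fun t => if j = t then 1 else 0) i with hc'
  have hlin : ∀ y : Fin d → ℝ, ∑ j, c' j * y j = ∑ i, c i * L y i := by
    intro y
    have hLy : ∀ i, L y i = ∑ j, y j * L (fun t => if j = t then 1 else 0) i := by
      intro i
      have := LinearMap.pi_apply_eq_sum_univ L y
      rw [this]
      simp [Finset.sum_apply, smul_eq_mul]
    calc ∑ j, c' j * y j = ∑ j, ∑ i, c i * (y j * L (fun t => if j = t then 1 else 0) i) := by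
          simp only [hc', Finset.sum_mul]
          refine Finset.sum_congr rfl fun j _ => Finset.sum_congr rfl fun i _ => by ring
      _ = ∑ i, ∑ j, c i * (y j * L (fun t => if j = t then 1 else 0) i) := Finset.sum_comm
      _ = ∑ i, c i * L y i := by
          refine Finset.sum_congr rfl fun i _ => ?_
          rw [hLy i, Finset.mul_sum]
  have hp0 : ∀ y : Fin d → ℝ, p y = L y + p 0 := by
    intro y
    have := p.map_vadd 0 y
    simpa using this
  have hkey : ∀ y : Fin d → ℝ,
      ∑ i, c i * p y i = (∑ j, c' j * y j) + ∑ i, c i * p 0 i := by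
    intro y
    rw [hlin]
    rw [hp0 y]
    simp [Pi.add_apply, mul_add, Finset.sum_add_distrib]
  -- the face statement
  have hQface : p ⁻¹' P' ∩ Q =
      {y ∈ Q | ∀ z ∈ Q, ∑ j, c' j * z j ≤ ∑ j, c' j * y j} := by
    ext y
    simp only [Set.mem_inter_iff, Set.mem_preimage, Set.mem_setOf_eq, hc]
    constructor
    · rintro ⟨⟨hpyP, hmax⟩, hyQ⟩
      refine ⟨hyQ, fun z hz => ?_⟩
      have hpz : p z ∈ P := hproj ▸ Set.mem_image_of_mem _ hz
      have := hmax (p z) hpz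
      have h1 := hkey y; have h2 := hkey z
      linarith
    · rintro ⟨hyQ, hmax⟩
      have hpy : p y ∈ P := hproj ▸ Set.mem_image_of_mem _ hyQ
      refine ⟨⟨hpy, fun x hx => ?_⟩, hyQ⟩
      rw [← hproj] at hx
      obtain ⟨z, hzQ, rfl⟩ := hx
      have := hmax z hzQ
      have h1 := hkey y; have h2 := hkey z
      linarith
  have hface' : IsFaceOf (p ⁻¹' P' ∩ Q) Q := ⟨c', hQface⟩
  -- p '' (p⁻¹ P' ∩ Q) = P'
  have hPimg : p '' (p ⁻¹' P' ∩ Q) = P' := by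
    apply Set.Subset.antisymm
    · rintro _ ⟨y, ⟨hy1, _⟩, rfl⟩; exact hy1
    · intro x hx
      have hxP : x ∈ P := by rw [hc] at hx; exact hx.1
      rw [← hproj] at hxP
      obtain ⟨y, hyQ, rfl⟩ := hxP
      exact ⟨y, ⟨hx, hyQ⟩, rfl⟩
  have hext : (q.comp p) '' (p ⁻¹' P' ∩ Q) = R := by
    rw [AffineMap.coe_comp, Set.image_comp, hPimg, hq]
  refine ⟨hface', hext, ?_⟩
  intro τ hτ
  obtain ⟨hτR, π, hπG, hπP', hπq⟩ := hH τ hτ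
  obtain ⟨U, u, hUorth, hUQ, hUp⟩ := hsym π hπG
  refine ⟨U, u, hUorth, ?_, ?_⟩
  · apply Set.Subset.antisymm
    · rintro _ ⟨y, ⟨hy1, hy2⟩, rfl⟩
      have hQ' : U.mulVec y + u ∈ Q := hUQ ▸ Set.mem_image_of_mem _ hy2
      refine ⟨?_, hQ'⟩
      show p (U.mulVec y + u) ∈ P'
      rw [hUp y hy2]
      exact hπP' ▸ Set.mem_image_of_mem _ hy1
    · rintro z ⟨hz1, hz2⟩
      rw [← hUQ] at hz2
      obtain ⟨y, hyQ, rfl⟩ := hz2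
      refine ⟨y, ⟨?_, hyQ⟩, rfl⟩
      show p y ∈ P'
      have hpz : π (p y) ∈ P' := by rw [← hUp y hyQ]; exact hz1
      rw [← hπP'] at hpz
      obtain ⟨x, hxP', hx⟩ := hpz
      have : x = p y := π.injective hx
      rwa [← this]
  · rintro y ⟨hy1, hy2⟩
    have hpy : p y ∈ P' := hy1
    show q (p (U.mulVec y + u)) = τ (q (p y))
    rw [hUp y hy2, hπq _ hpy]
end

section
/- There is a constant C > 0 such that for all integers n ≥ 2 and ℓ ≥ 1, the polytope P_match(ℓ,n) has an extension of size at most 2^{Cℓ} · n² · log₂ n; that is, there exist d ∈ ℕ, a polyhedron Q ⊆ ℝ^d described by a system of linear equations together with at most 2^{Cℓ} · n² · log₂ n linear inequalities, and an affine map p : ℝ^d → ℝ^{E_n} with p(Q) = P_match(ℓ,n). -/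
open scoped BigOperators
open Classical in
noncomputable section

/-- Edges of the complete graph `K_n` on the node set `Fin n`. -/
abbrev Edge (n : ℕ) := {e : Sym2 (Fin n) // ¬ e.IsDiag}

/-- A matching: a set of pairwise node-disjoint edges. -/
def IsMatching {n : ℕ} (M : Finset (Edge n)) : Prop :=
  ∀ e ∈ M, ∀ f ∈ M, e ≠ f → ∀ v : Fin n, ¬(v ∈ e.1 ∧ v ∈ f.1)

/-- Characteristic vector of a set of edges. -/
def charVec {n : ℕ} (M : Finset (Edge n)) : Edge n → ℝ :=
  fun e => if e ∈ M then 1 else 0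

/-- `P_match(ℓ,n)`: convex hull of characteristic vectors of size-`ℓ` matchings of `K_n`. -/
def matchingPolytope (n ℓ : ℕ) : Set (Edge n → ℝ) :=
  convexHull ℝ {x | ∃ M : Finset (Edge n), IsMatching M ∧ M.card = ℓ ∧ x = charVec M}

set_option linter.unusedSectionVars false
set_option maxHeartbeats 1000000
open Classical
noncomputable section

namespace FlowAux


variable {V A : Type*} [Fintype V] [Fintype A] [DecidableEq V] [DecidableEq A]

/-- net outflow of `y` at `v` -/
def net (tl hd : A → V) (y : A → ℝ) (v : V) : ℝ :=
  ∑ a, ((if tl a = v then (1:ℝ) else 0) - (if hd a = v then 1 else 0)) * y a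

def IsWalk (tl hd : A → V) (t : V) : V → List A → Prop
  | v, [] => v = t
  | v, a :: l => tl a = v ∧ IsWalk tl hd t (hd a) l

def wvec (l : List A) : A → ℝ := fun a => (l.count a : ℝ)

variable {tl hd : A → V} {t s : V}

lemma net_add (y z : A → ℝ) (v : V) :
    net tl hd (y + z) v = net tl hd y v + net tl hd z v := by
  simp [net, mul_add, Finset.sum_add_distrib]

lemma net_smul (c : ℝ) (y : A → ℝ) (v : V) :
    net tl hd (c • y) v = c * net tl hd y v := by
  simp only [net, Finset.mul_sum, Pi.smul_apply, smul_eq_mul]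
  exact Finset.sum_congr rfl fun a _ => by ring

lemma net_sub (y z : A → ℝ) (v : V) :
    net tl hd (y - z) v = net tl hd y v - net tl hd z v := by
  simp [net, mul_sub, Finset.sum_sub_distrib]

lemma net_single (a : A) (v : V) :
    net tl hd (fun a' => if a' = a then (1:ℝ) else 0) v
      = (if tl a = v then 1 else 0) - (if hd a = v then 1 else 0) := by
  simp only [net, mul_ite, mul_one, mul_zero]
  rw [Finset.sum_ite_eq' Finset.univ a
    (fun a' => (if tl a' = v then (1:ℝ) else 0) - (if hd a' = v then 1 else 0))]
  simp

lemma wvec_nil : wvec ([] : List A) = 0 := by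
  funext a; simp [wvec]

lemma wvec_cons (a : A) (l : List A) :
    wvec (a :: l) = (fun a' => if a' = a then (1:ℝ) else 0) + wvec l := by
  funext a'
  by_cases h : a' = a
  · subst h; simp [wvec, List.count_cons, add_comm]
  · simp [wvec, List.count_cons, h, Ne.symm h]

lemma net_wvec {v : V} {l : List A} (h : IsWalk tl hd t v l) (w : V) :
    net tl hd (wvec l) w = (if v = w then 1 else 0) - (if t = w then 1 else 0) := by
  induction l generalizing v with
  | nil =>
      cases h
      simp [wvec_nil, net]
  | cons a l ih =>
      obtain ⟨h1, h2⟩ := h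
      rw [wvec_cons, net_add, net_single, ih h2, h1]
      ring

def outp (tl : A → V) (y : A → ℝ) (v : V) : ℝ := ∑ a, if tl a = v then y a else 0
def inp (hd : A → V) (y : A → ℝ) (v : V) : ℝ := ∑ a, if hd a = v then y a else 0

lemma net_eq_outp_sub_inp (y : A → ℝ) (v : V) :
    net tl hd y v = outp tl y v - inp hd y v := by
  simp [net, sub_mul, ite_mul, Finset.sum_sub_distrib, outp, inp]

lemma inp_nonneg (y : A → ℝ) (hy : ∀ a, 0 ≤ y a) (v : V) : 0 ≤ inp hd y v :=
  Finset.sum_nonneg fun a _ => by by_cases h : hd a = v <;> simp [h, hy a]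

lemma exists_walk_aux (r : V → ℕ) (hr : ∀ a, r (tl a) < r (hd a)) (y : A → ℝ)
    (hpos : ∀ a, 0 ≤ y a)
    (hnet : ∀ v, net tl hd y v = (if s = v then 1 else 0) - (if t = v then 1 else 0)) :
    ∀ (m : ℕ) (v : V), Finset.univ.sup r < r v + m → (v = s ∨ 0 < inp hd y v) →
      ∃ l, IsWalk tl hd t v l ∧ ∀ a ∈ l, 0 < y a := by
  intro m
  induction m with
  | zero =>
      intro v hm _
      exact absurd hm (by simpa using Finset.le_sup (f := r) (Finset.mem_univ v))
  | succ m ih =>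
      intro v hm hv
      by_cases hvt : v = t
      · exact ⟨[], hvt, by simp⟩
      · have hnetv := hnet v
        rw [net_eq_outp_sub_inp] at hnetv
        have hout : 0 < outp tl y v := by
          have hinn := inp_nonneg (hd := hd) y hpos v
          rcases hv with hv | hv
          · have h1 : (if s = v then (1:ℝ) else 0) = 1 := by simp [hv.symm]
            have h2 : (if t = v then (1:ℝ) else 0) = 0 :=
              if_neg (fun h => hvt h.symm)
            rw [h1, h2] at hnetv
            linarith
          · have : (0:ℝ) ≤ (if s = v then (1:ℝ) else 0) := by positivity
            have : (if t = v then (1:ℝ) else 0) = 0 :=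
              if_neg (fun h => hvt h.symm)
            rw [this] at hnetv
            have h0 : (0:ℝ) ≤ (if s = v then (1:ℝ) else 0) := by positivity
            linarith
        obtain ⟨a, ha⟩ : ∃ a, 0 < if tl a = v then y a else 0 := by
          by_contra h
          push_neg at h
          have : outp tl y v ≤ 0 := Finset.sum_nonpos fun a _ => h a
          linarith
        have htla : tl a = v ∧ 0 < y a := by
          by_cases h : tl a = v
          · exact ⟨h, by simpa [h] using ha⟩
          · simp [h] at ha
        have hin : 0 < inp hd y (hd a) := by
          refine lt_of_lt_of_le htla.2 ?_
          have := Finset.single_le_sum (f := fun a' => if hd a' = hd a then y a' else 0)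
            (fun a' _ => by by_cases h : hd a' = hd a <;> simp [h, hpos a']) (Finset.mem_univ a)
          simpa [inp] using this
        have hm' : Finset.univ.sup r < r (hd a) + m := by
          have := hr a
          rw [htla.1] at this
          omega
        obtain ⟨l, hl, hlp⟩ := ih (hd a) hm' (Or.inr hin)
        refine ⟨a :: l, ⟨htla.1, hl⟩, ?_⟩
        intro a' ha'
        rcases List.mem_cons.mp ha' with rfl | h
        · exact htla.2
        · exact hlp _ h

lemma exists_walk (r : V → ℕ) (hr : ∀ a, r (tl a) < r (hd a)) (y : A → ℝ)
    (hpos : ∀ a, 0 ≤ y a)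
    (hnet : ∀ v, net tl hd y v = (if s = v then 1 else 0) - (if t = v then 1 else 0))
    (hst : s ≠ t) :
    ∃ l, IsWalk tl hd t s l ∧ l ≠ [] ∧ ∀ a ∈ l, 0 < y a := by
  obtain ⟨l, hl, hlp⟩ := exists_walk_aux r hr y hpos hnet (Finset.univ.sup r + 1) s
    (by omega) (Or.inl rfl)
  refine ⟨l, hl, ?_, hlp⟩
  rintro rfl
  exact hst hl

lemma rank_le (r : V → ℕ) (hr : ∀ a, r (tl a) < r (hd a)) :
    ∀ {l : List A} {v : V}, IsWalk tl hd t v l → ∀ a ∈ l, r v ≤ r (tl a) := by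
  intro l
  induction l with
  | nil => intro v _ a ha; simp at ha
  | cons b l ih =>
      intro v h a ha
      obtain ⟨h1, h2⟩ := h
      rcases List.mem_cons.mp ha with rfl | ha'
      · rw [h1]
      · calc r v = r (tl b) := by rw [h1]
          _ ≤ r (hd b) := (hr b).le
          _ ≤ r (tl a) := ih h2 a ha'

lemma walk_nodup (r : V → ℕ) (hr : ∀ a, r (tl a) < r (hd a)) :
    ∀ {l : List A} {v : V}, IsWalk tl hd t v l → l.Nodup := by
  intro l
  induction l with
  | nil => intro v _; simp
  | cons a l ih =>
      intro v h
      obtain ⟨h1, h2⟩ := h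
      rw [List.nodup_cons]
      refine ⟨?_, ih h2⟩
      intro ha
      have := rank_le (t := t) r hr h2 a ha
      exact absurd (lt_of_lt_of_le (hr a) this) (lt_irrefl _)

lemma wvec_eq {l : List A} (hnd : l.Nodup) (a : A) :
    wvec l a = if a ∈ l then 1 else 0 := by
  by_cases h : a ∈ l
  · simp [wvec, List.count_eq_one_of_mem hnd h, h]
  · simp [wvec, List.count_eq_zero_of_not_mem h, h]

lemma circ_eq_zero (r : V → ℕ) (hr : ∀ a, r (tl a) < r (hd a)) (z : A → ℝ)
    (hz : ∀ a, 0 ≤ z a) (hnet : ∀ v, net tl hd z v = 0) : z = 0 := by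
  funext a₀
  set c := r (tl a₀) + 1 with hc
  have key : ∑ a, ((if c ≤ r (tl a) then (1:ℝ) else 0) - (if c ≤ r (hd a) then 1 else 0)) * z a
      = 0 := by
    have h0 : ∑ v ∈ Finset.univ.filter (fun v => c ≤ r v), net tl hd z v = 0 :=
      Finset.sum_eq_zero fun v _ => hnet v
    have hswap : (∑ v ∈ Finset.univ.filter (fun v => c ≤ r v), net tl hd z v)
        = ∑ a, ((if c ≤ r (tl a) then (1:ℝ) else 0) - (if c ≤ r (hd a) then 1 else 0)) * z a := by
      simp only [net]
      rw [Finset.sum_comm]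
      refine Finset.sum_congr rfl fun a _ => ?_
      simp only [sub_mul, Finset.sum_sub_distrib, ite_mul, one_mul, zero_mul]
      rw [Finset.sum_ite_eq (Finset.univ.filter (fun v => c ≤ r v)) (tl a) (fun _ => z a),
        Finset.sum_ite_eq (Finset.univ.filter (fun v => c ≤ r v)) (hd a) (fun _ => z a)]
      simp [Finset.mem_filter]
    rw [hswap] at h0
    exact h0
  have hterm : ∀ a ∈ Finset.univ (α := A),
      ((if c ≤ r (tl a) then (1:ℝ) else 0) - (if c ≤ r (hd a) then 1 else 0)) * z a ≤ 0 := by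
    intro a _
    by_cases h1 : c ≤ r (tl a)
    · have h2 : c ≤ r (hd a) := le_trans h1 (hr a).le
      simp [h1, h2]
    · by_cases h2 : c ≤ r (hd a)
      · simp only [if_neg h1, if_pos h2]
        nlinarith [hz a]
      · simp [h1, h2]
  have ha₀ := (Finset.sum_eq_zero_iff_of_nonpos hterm).mp key a₀ (Finset.mem_univ _)
  have h1 : ¬ (c ≤ r (tl a₀)) := by omega
  have h2 : c ≤ r (hd a₀) := by have := hr a₀; omega
  rw [if_neg h1, if_pos h2] at ha₀
  have : -(z a₀) = 0 := by linarith [ha₀]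
  simp only [Pi.zero_apply]
  linarith



theorem flow_hull (r : V → ℕ) (hr : ∀ a, r (tl a) < r (hd a)) (hst : s ≠ t) :
    {y : A → ℝ | (∀ v, net tl hd y v = (if s = v then 1 else 0) - (if t = v then 1 else 0))
        ∧ ∀ a, 0 ≤ y a}
      = convexHull ℝ {x | ∃ l, IsWalk tl hd t s l ∧ x = wvec l} := by
  apply Set.Subset.antisymm
  · have main : ∀ N (y : A → ℝ), (Finset.univ.filter (fun a => y a ≠ 0)).card ≤ N →
        ((∀ v, net tl hd y v = (if s = v then 1 else 0) - (if t = v then 1 else 0))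
          ∧ ∀ a, 0 ≤ y a) →
        y ∈ convexHull ℝ {x | ∃ l, IsWalk tl hd t s l ∧ x = wvec l} := by
      intro N
      induction N with
      | zero =>
          rintro y hcard ⟨h1, _⟩
          exfalso
          have hy0 : ∀ a, y a = 0 := by
            intro a
            by_contra h
            have : a ∈ Finset.univ.filter (fun a => y a ≠ 0) := by
              simp [h]
            have := Finset.card_pos.mpr ⟨a, this⟩
            omega
          have h := h1 s
          rw [if_pos rfl, if_neg (fun h' => hst h'.symm)] at h
          simp only [net] at h
          rw [Finset.sum_eq_zero (fun a _ => by rw [hy0 a, mul_zero])] at h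
          norm_num at h
      | succ N ih =>
          rintro y hcard ⟨h1, h2⟩
          obtain ⟨l, hl, hlne, hlpos⟩ := exists_walk r hr y h2 h1 hst
          have hnd : l.Nodup := walk_nodup r hr hl
          have hF : l.toFinset.Nonempty := by
            cases l with
            | nil => exact absurd rfl hlne
            | cons a l' => exact ⟨a, by simp⟩
          set α := l.toFinset.inf' hF y with hα
          have hαpos : 0 < α := by
            rw [hα, Finset.lt_inf'_iff]
            intro b hb
            exact hlpos b (List.mem_toFinset.mp hb)
          have hαle : ∀ a ∈ l, α ≤ y a := fun a ha =>
            Finset.inf'_le y (List.mem_toFinset.mpr ha)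
          obtain ⟨a₀, ha₀F, ha₀⟩ := Finset.exists_mem_eq_inf' hF y
          have ha₀l : a₀ ∈ l := List.mem_toFinset.mp ha₀F
          by_cases hα1 : α < 1
          · have h1α : (0:ℝ) < 1 - α := by linarith
            set x := wvec l with hx
            set y' := (1 - α)⁻¹ • (y - α • x) with hy'
            have hy'nn : ∀ a, 0 ≤ y' a := by
              intro a
              rw [hy']
              simp only [Pi.smul_apply, Pi.sub_apply, smul_eq_mul]
              apply mul_nonneg (by positivity)
              by_cases ha : a ∈ l
              · rw [hx, wvec_eq hnd]
                simp only [if_pos ha]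
                have := hαle a ha
                nlinarith
              · rw [hx, wvec_eq hnd]
                simp only [if_neg ha, smul_eq_mul, mul_zero]
                linarith [h2 a]
            have hy'net : ∀ v, net tl hd y' v
                = (if s = v then 1 else 0) - (if t = v then 1 else 0) := by
              intro v
              rw [hy', net_smul, net_sub, net_smul, h1 v, net_wvec hl]
              field_simp
            have hsub : (Finset.univ.filter (fun a => y' a ≠ 0))
                ⊂ (Finset.univ.filter (fun a => y a ≠ 0)) := by
              constructor
              · intro a ha
                simp only [Finset.mem_filter, Finset.mem_univ, true_and] at ha ⊢
                by_cases hal : a ∈ l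
                · exact ne_of_gt (hlpos a hal)
                · intro hya
                  apply ha
                  rw [hy']
                  simp only [Pi.smul_apply, Pi.sub_apply, smul_eq_mul, hx, wvec_eq hnd,
                    if_neg hal, mul_zero, sub_zero, hya]
              · intro hcon
                have ha₀mem : a₀ ∈ Finset.univ.filter (fun a => y a ≠ 0) := by
                  simp only [Finset.mem_filter, Finset.mem_univ, true_and]
                  exact ne_of_gt (hlpos a₀ ha₀l)
                have := hcon ha₀mem
                simp only [Finset.mem_filter, Finset.mem_univ, true_and] at this
                apply this
                rw [hy']
                simp only [Pi.smul_apply, Pi.sub_apply, smul_eq_mul, hx, wvec_eq hnd,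
                  if_pos ha₀l, mul_one, ← ha₀]
                ring
            have hcard' : (Finset.univ.filter (fun a => y' a ≠ 0)).card ≤ N := by
              have := Finset.card_lt_card hsub
              omega
            have hy'mem := ih y' hcard' ⟨hy'net, hy'nn⟩
            have hxmem : x ∈ convexHull ℝ {x | ∃ l, IsWalk tl hd t s l ∧ x = wvec l} :=
              subset_convexHull ℝ _ ⟨l, hl, hx⟩
            have hcomb := (convex_convexHull ℝ {x | ∃ l, IsWalk tl hd t s l ∧ x = wvec l})
              hxmem hy'mem hαpos.le h1α.le (by ring)
            have hyeq : y = α • x + (1 - α) • y' := by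
              rw [hy', smul_smul, mul_inv_cancel₀ h1α.ne', one_smul]
              abel
            rw [hyeq]
            exact hcomb
          · have hge : ∀ a ∈ l, (1:ℝ) ≤ y a := fun a ha =>
              le_trans (not_lt.mp hα1) (hαle a ha)
            set z := y - wvec l with hz
            have hznn : ∀ a, 0 ≤ z a := by
              intro a
              rw [hz]
              simp only [Pi.sub_apply, wvec_eq hnd]
              by_cases ha : a ∈ l
              · simp only [if_pos ha]; linarith [hge a ha]
              · simp only [if_neg ha]; linarith [h2 a]
            have hznet : ∀ v, net tl hd z v = 0 := by
              intro v
              rw [hz, net_sub, h1 v, net_wvec hl]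
              ring
            have hz0 := circ_eq_zero r hr z hznn hznet
            have hyw : y = wvec l := by
              have : y - wvec l = 0 := by rw [← hz, hz0]
              funext a
              have := congrFun this a
              simp only [Pi.sub_apply, Pi.zero_apply] at this
              linarith
            exact subset_convexHull ℝ _ ⟨l, hl, hyw⟩
    intro y hy
    exact main _ y le_rfl hy
  · apply convexHull_min
    · rintro x ⟨l, hl, rfl⟩
      refine ⟨net_wvec hl, fun a => Nat.cast_nonneg _⟩
    · intro x hx y hy a b ha hb hab
      refine ⟨?_, ?_⟩
      · intro v
        rw [net_add, net_smul, net_smul, hx.1 v, hy.1 v, ← add_mul, hab, one_mul]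
      · intro a'
        simp only [Pi.add_apply, Pi.smul_apply, smul_eq_mul]
        have := hx.2 a'
        have := hy.2 a'
        positivity

end FlowAux

namespace HashAux


lemma succ_pow_le (k : ℕ) : ((k:ℝ)+1)^k ≤ 4 * (k:ℝ)^k := by
  rcases Nat.eq_zero_or_pos k with hk | hk
  · subst hk; norm_num
  · have hk0 : (0:ℝ) < k := by exact_mod_cast hk
    have heq : ((k:ℝ)+1) = (k:ℝ) * (1 + 1/k) := by field_simp
    rw [heq, mul_pow]
    have h1 : (1 + 1/(k:ℝ))^k ≤ (Real.exp (1/k))^k := by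
      apply pow_le_pow_left₀ (by positivity)
      have := Real.add_one_le_exp (1/(k:ℝ))
      linarith
    have h2 : (Real.exp (1/(k:ℝ)))^k = Real.exp 1 := by
      rw [← Real.exp_nat_mul]
      congr 1
      field_simp
    have h3 : Real.exp 1 ≤ 4 := by
      have := Real.exp_one_lt_d9
      linarith
    calc (k:ℝ)^k * (1 + 1/(k:ℝ))^k ≤ (k:ℝ)^k * 4 := by
          apply mul_le_mul_of_nonneg_left _ (by positivity)
          rw [h2] at h1; linarith
      _ = 4 * (k:ℝ)^k := by ring

lemma pow_le_four_pow_mul_factorial (k : ℕ) : ((k:ℝ))^k ≤ 4^k * (k.factorial : ℝ) := by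
  induction k with
  | zero => norm_num
  | succ k ih =>
      have h1 : ((k:ℝ)+1)^(k+1) = ((k:ℝ)+1) * ((k:ℝ)+1)^k := by ring
      have h2 : ((k:ℝ)+1)^k ≤ 4 * (k:ℝ)^k := succ_pow_le k
      have hk1 : (0:ℝ) ≤ (k:ℝ)+1 := by positivity
      calc ((k+1:ℕ):ℝ)^(k+1) = ((k:ℝ)+1) * ((k:ℝ)+1)^k := by push_cast; ring
        _ ≤ ((k:ℝ)+1) * (4 * (k:ℝ)^k) := by
            apply mul_le_mul_of_nonneg_left h2 hk1
        _ ≤ ((k:ℝ)+1) * (4 * (4^k * (k.factorial:ℝ))) := by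
            apply mul_le_mul_of_nonneg_left _ hk1
            have : (0:ℝ) ≤ 4 := by norm_num
            nlinarith [ih]
        _ = 4^(k+1) * (((k+1) * k.factorial : ℕ):ℝ) := by push_cast; ring
        _ = 4^(k+1) * ((k+1).factorial : ℝ) := by rw [Nat.factorial_succ]

variable {n k : ℕ}

lemma good_card_lower (hkn : k ≤ n) (S : Finset (Fin n)) (hS : S.card = k) :
    ((k:ℝ))^n ≤ 4^k *
      ((Finset.univ.filter (fun f : Fin n → Fin k => Set.InjOn f ↑S)).card : ℝ) := by
  classical
  -- injection from (Fin k ↪ Fin k) × (↥(Sᶜ) → Fin k)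
  set eS : ↥S ≃ Fin k := S.equivFinOfCardEq hS with heS
  set Φ : (Fin k ↪ Fin k) × ((↥(Sᶜ : Finset (Fin n))) → Fin k) → (Fin n → Fin k) :=
    fun p x => if hx : x ∈ S then p.1 (eS ⟨x, hx⟩) else p.2 ⟨x, by simpa using hx⟩ with hΦ
  have hmaps : ∀ p, Set.InjOn (Φ p) ↑S := by
    rintro ⟨g, u⟩ x hx y hy hxy
    have hx' : x ∈ S := Finset.mem_coe.mp hx
    have hy' : y ∈ S := Finset.mem_coe.mp hy
    rw [hΦ] at hxy
    simp only [dif_pos hx', dif_pos hy'] at hxy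
    have h2 : (⟨x, hx'⟩ : ↥S) = ⟨y, hy'⟩ := eS.injective (g.injective hxy)
    exact congrArg Subtype.val h2
  have hinj : Function.Injective Φ := by
    rintro ⟨g, u⟩ ⟨g', u'⟩ h
    have hg : g = g' := by
      apply DFunLike.ext
      intro j
      have hj := congrFun h (eS.symm j).1
      simp only [hΦ, dif_pos (eS.symm j).2] at hj
      simpa using hj
    have hu : u = u' := by
      funext x
      have hx : (x:Fin n) ∉ S := Finset.mem_compl.mp x.2
      have hxx := congrFun h x.1
      simp only [hΦ, dif_neg hx] at hxx
      exact hxx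
    exact Prod.ext hg hu
  have hcard : Fintype.card ((Fin k ↪ Fin k) × ((↥(Sᶜ : Finset (Fin n))) → Fin k))
      ≤ (Finset.univ.filter (fun f : Fin n → Fin k => Set.InjOn f ↑S)).card := by
    rw [← Finset.card_univ]
    apply Finset.card_le_card_of_injOn Φ
    · intro p _
      simp only [Finset.mem_coe, Finset.mem_filter, Finset.mem_univ, true_and]
      exact hmaps p
    · intro p _ q _ h
      exact hinj h
  have hcardeq : Fintype.card ((Fin k ↪ Fin k) × ((↥(Sᶜ : Finset (Fin n))) → Fin k))
      = k.factorial * k^(n-k) := by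
    rw [Fintype.card_prod, Fintype.card_embedding_eq, Fintype.card_fun]
    simp [Nat.descFactorial_self, Finset.card_compl, hS]
  have hcard' : k.factorial * k^(n-k)
      ≤ (Finset.univ.filter (fun f : Fin n → Fin k => Set.InjOn f ↑S)).card :=
    hcardeq ▸ hcard
  have hsplit : ((k:ℝ))^n = (k:ℝ)^k * (k:ℝ)^(n-k) := by
    rw [← pow_add]
    congr 1
    omega
  have h1 := pow_le_four_pow_mul_factorial k
  have hknn : (0:ℝ) ≤ (k:ℝ)^(n-k) := by positivity
  calc ((k:ℝ))^n = (k:ℝ)^k * (k:ℝ)^(n-k) := hsplit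
    _ ≤ (4^k * (k.factorial:ℝ)) * (k:ℝ)^(n-k) := by
        apply mul_le_mul_of_nonneg_right h1 hknn
    _ = 4^k * ((k.factorial * k^(n-k) : ℕ):ℝ) := by push_cast; ring
    _ ≤ 4^k * ((Finset.univ.filter (fun f : Fin n → Fin k => Set.InjOn f ↑S)).card : ℝ) := by
        apply mul_le_mul_of_nonneg_left _ (by positivity)
        exact_mod_cast hcard'

theorem hash_exists (n k T : ℕ) (hn : 2 ≤ n) (hk : 1 ≤ k)
    (hT : (4:ℝ)^k * k * Real.log n < T) :
    ∃ H : Fin T → (Fin n → Fin k), ∀ S : Finset (Fin n), S.card = k →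
      ∃ i, Set.InjOn (H i) ↑S := by
  classical
  by_cases hkn : k ≤ n
  swap
  · refine ⟨fun _ _ => ⟨0, hk⟩, fun S hS => absurd ?_ hkn⟩
    calc k = S.card := hS.symm
      _ ≤ Fintype.card (Fin n) := Finset.card_le_univ S
      _ = n := Fintype.card_fin n
  by_contra hcon
  push_neg at hcon
  -- every tuple H is bad for some S
  set 𝒮 := Finset.powersetCard k (Finset.univ : Finset (Fin n)) with h𝒮
  set BadT : Finset (Fin n) → Finset (Fin T → Fin n → Fin k) := fun S =>
    Finset.univ.filter (fun H => ∀ i, ¬ Set.InjOn (H i) ↑S) with hBadT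
  have hcover : (Finset.univ : Finset (Fin T → Fin n → Fin k)) ⊆ 𝒮.biUnion BadT := by
    intro H _
    obtain ⟨S, hS, hbad⟩ := hcon H
    apply Finset.mem_biUnion.mpr
    refine ⟨S, ?_, ?_⟩
    · rw [h𝒮, Finset.mem_powersetCard]
      exact ⟨Finset.subset_univ S, hS⟩
    · simp only [hBadT, Finset.mem_filter, Finset.mem_univ, true_and]
      exact hbad
  have hcardle := Finset.card_le_card hcover
  have hbiUnion := Finset.card_biUnion_le (s := 𝒮) (t := BadT)
  -- card of BadT S
  have hBadCard : ∀ S ∈ 𝒮, (BadT S).card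
      = ((Finset.univ.filter (fun f : Fin n → Fin k => ¬ Set.InjOn f ↑S)).card)^T := by
    intro S _
    have : BadT S = Fintype.piFinset
        (fun _ : Fin T => Finset.univ.filter (fun f : Fin n → Fin k => ¬ Set.InjOn f ↑S)) := by
      ext H
      simp [hBadT, Fintype.mem_piFinset]
    rw [this, Fintype.card_piFinset]
    simp
  set q : ℝ := ((4:ℝ)^k)⁻¹ with hq
  have h4pos : (0:ℝ) < 4^k := by positivity
  have hq01 : 0 ≤ 1 - q := by
    have h1 : (1:ℝ) ≤ 4^k := by
      calc (1:ℝ) = 1^k := (one_pow k).symm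
        _ ≤ 4^k := pow_le_pow_left₀ (by norm_num) (by norm_num) k
    have h2 : q ≤ 1 := by
      rw [hq]
      exact inv_le_one_of_one_le₀ h1
    linarith
  set G := k^n with hG
  have hGpos : 0 < G := Nat.pow_pos (by omega)
  have hGR : (0:ℝ) < (G:ℝ):= by exact_mod_cast hGpos
  have htot : Fintype.card (Fin T → Fin n → Fin k) = G^T := by
    rw [Fintype.card_fun, Fintype.card_fun]
    simp [hG]
  have hbadle : ∀ S ∈ 𝒮,
      ((Finset.univ.filter (fun f : Fin n → Fin k => ¬ Set.InjOn f ↑S)).card : ℝ)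
        ≤ (1 - q) * G := by
    intro S hS
    have hSk : S.card = k := (Finset.mem_powersetCard.mp hS).2
    have hgood := good_card_lower hkn S hSk
    have hsum : (Finset.univ.filter (fun f : Fin n → Fin k => Set.InjOn f ↑S)).card
        + (Finset.univ.filter (fun f : Fin n → Fin k => ¬ Set.InjOn f ↑S)).card = G := by
      rw [Finset.card_filter_add_card_filter_not]
      rw [Finset.card_univ, Fintype.card_fun]
      simp [hG]
    have hGcast : (G:ℝ) = ((k:ℝ))^n := by rw [hG]; push_cast; ring
    have hgood' : q * (G:ℝ)
        ≤ ((Finset.univ.filter (fun f : Fin n → Fin k => Set.InjOn f ↑S)).card : ℝ) := by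
      rw [hq, hGcast]
      rw [inv_mul_le_iff₀ h4pos]
      linarith [hgood]
    have hsum' : ((Finset.univ.filter (fun f : Fin n → Fin k => Set.InjOn f ↑S)).card : ℝ)
        + ((Finset.univ.filter (fun f : Fin n → Fin k => ¬ Set.InjOn f ↑S)).card : ℝ)
        = (G:ℝ) := by exact_mod_cast congrArg (Nat.cast (R := ℝ)) hsum
    nlinarith [hgood', hsum']
  have hScard : ((𝒮.card : ℝ)) ≤ (n:ℝ)^k := by
    have : 𝒮.card = n.choose k := by
      rw [h𝒮, Finset.card_powersetCard, Finset.card_univ, Fintype.card_fin]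
    rw [this]
    exact_mod_cast Nat.choose_le_pow n k
  have hfinal : ((G:ℝ))^T ≤ (n:ℝ)^k * ((1 - q)^T * (G:ℝ)^T) := by
    have h1 : (G^T : ℕ) ≤ ∑ S ∈ 𝒮, (BadT S).card := by
      calc G^T = Fintype.card (Fin T → Fin n → Fin k) := htot.symm
        _ = (Finset.univ : Finset (Fin T → Fin n → Fin k)).card := Finset.card_univ.symm
        _ ≤ (𝒮.biUnion BadT).card := hcardle
        _ ≤ ∑ S ∈ 𝒮, (BadT S).card := hbiUnion
    have h2 : ((G:ℝ))^T ≤ ∑ S ∈ 𝒮, ((BadT S).card : ℝ) := by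
      push_cast at h1 ⊢
      exact_mod_cast h1
    have h3 : ∑ S ∈ 𝒮, ((BadT S).card : ℝ) ≤ ∑ _S ∈ 𝒮, ((1 - q) * (G:ℝ))^T := by
      apply Finset.sum_le_sum
      intro S hS
      rw [hBadCard S hS]
      push_cast
      apply pow_le_pow_left₀ (by positivity)
      exact hbadle S hS
    have h4 : ∑ _S ∈ 𝒮, ((1 - q) * (G:ℝ))^T = (𝒮.card : ℝ) * ((1 - q) * (G:ℝ))^T := by
      rw [Finset.sum_const, nsmul_eq_mul]
    have h5 : (𝒮.card : ℝ) * ((1 - q) * (G:ℝ))^T ≤ (n:ℝ)^k * ((1 - q) * (G:ℝ))^T := by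
      apply mul_le_mul_of_nonneg_right hScard (by positivity)
    calc ((G:ℝ))^T ≤ ∑ S ∈ 𝒮, ((BadT S).card : ℝ) := h2
      _ ≤ ∑ _S ∈ 𝒮, ((1 - q) * (G:ℝ))^T := h3
      _ = (𝒮.card : ℝ) * ((1 - q) * (G:ℝ))^T := h4
      _ ≤ (n:ℝ)^k * ((1 - q) * (G:ℝ))^T := h5
      _ = (n:ℝ)^k * ((1 - q)^T * (G:ℝ)^T) := by rw [mul_pow]
  have hdiv : (1:ℝ) ≤ (n:ℝ)^k * (1 - q)^T := by
    have hGT : (0:ℝ) < (G:ℝ)^T := by positivity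
    have := hfinal
    rw [show (n:ℝ)^k * ((1 - q)^T * (G:ℝ)^T) = ((n:ℝ)^k * (1 - q)^T) * (G:ℝ)^T by ring] at this
    nlinarith
  have hqe : (1 - q)^T ≤ Real.exp (-q)^T := by
    apply pow_le_pow_left₀ hq01
    have := Real.add_one_le_exp (-q)
    linarith
  have hqt : Real.exp (-q)^T = Real.exp (-(q * T)) := by
    rw [← Real.exp_nat_mul]
    congr 1
    ring
  have hexplog : Real.exp ((k:ℝ) * Real.log n) = (n:ℝ)^k := by
    have hn0 : (0:ℝ) < n := by exact_mod_cast (by omega : 0 < n)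
    rw [Real.exp_nat_mul, Real.exp_log hn0]
  have hlt : Real.exp (-(q * T)) < Real.exp (-((k:ℝ) * Real.log n)) := by
    apply Real.exp_lt_exp.mpr
    have hklog : (4:ℝ)^k * ((k:ℝ) * Real.log n) < T := by
      have := hT
      nlinarith [Real.log_nonneg (by exact_mod_cast (by omega : 1 ≤ n) : (1:ℝ) ≤ n)]
    have : (k:ℝ) * Real.log n < q * T := by
      rw [hq]
      rw [inv_mul_eq_div, lt_div_iff₀ h4pos]
      linarith [hklog]
    linarith
  have hnk : (0:ℝ) < (n:ℝ)^k := by positivity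
  have hone : (n:ℝ)^k * Real.exp (-((k:ℝ) * Real.log n)) = 1 := by
    rw [Real.exp_neg, hexplog]
    field_simp
  have hchain : (1:ℝ) < 1 := by
    calc (1:ℝ) ≤ (n:ℝ)^k * (1 - q)^T := hdiv
      _ ≤ (n:ℝ)^k * Real.exp (-q)^T := by
          apply mul_le_mul_of_nonneg_left hqe (by positivity)
      _ = (n:ℝ)^k * Real.exp (-(q * T)) := by rw [hqt]
      _ < (n:ℝ)^k * Real.exp (-((k:ℝ) * Real.log n)) := by
          apply mul_lt_mul_of_pos_left hlt hnk
      _ = 1 := hone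
  exact lt_irrefl _ hchain

end HashAux

namespace Con

/-- unordered pair as a Finset -/
def sypair {α : Type*} [DecidableEq α] : Sym2 α → Finset α :=
  Sym2.lift ⟨fun a b => {a, b}, fun a b => Finset.pair_comm a b⟩

lemma sypair_mk {α : Type*} [DecidableEq α] (a b : α) : sypair s(a, b) = {a, b} := rfl

lemma mem_sypair {α : Type*} [DecidableEq α] {x : α} {z : Sym2 α} :
    x ∈ sypair z ↔ x ∈ z := by
  induction z using Sym2.ind with
  | _ a b => simp [sypair_mk, Sym2.mem_iff]

variable {n k T : ℕ}

def col (f : Fin n → Fin k) (e : Edge n) : Finset (Fin k) := sypair (Sym2.map f e.1)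

lemma mem_col_of_mem {f : Fin n → Fin k} {e : Edge n} {v : Fin n} (hv : v ∈ e.1) :
    f v ∈ col f e := by
  rw [col, mem_sypair, Sym2.mem_map]
  exact ⟨v, hv, rfl⟩

lemma mem_col_iff {f : Fin n → Fin k} {e : Edge n} {x : Fin k} :
    x ∈ col f e ↔ ∃ v, v ∈ e.1 ∧ f v = x := by
  rw [col, mem_sypair, Sym2.mem_map]

lemma col_card {f : Fin n → Fin k} {e : Edge n} (h : ¬ (Sym2.map f e.1).IsDiag) :
    (col f e).card = 2 := by
  obtain ⟨z, hz⟩ := e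
  induction z using Sym2.ind with
  | _ u v =>
      rw [col]
      simp only [Sym2.map_pair_eq, sypair_mk]
      have hne : f u ≠ f v := by
        intro hc
        apply h
        rw [Sym2.map_pair_eq, Sym2.mk_isDiag_iff]
        exact hc
      rw [Finset.card_insert_of_notMem (by simpa using hne), Finset.card_singleton]

lemma col_nonempty {f : Fin n → Fin k} {e : Edge n} (h : ¬ (Sym2.map f e.1).IsDiag) :
    (col f e).Nonempty := by
  rw [← Finset.card_pos, col_card h]
  norm_num

variable (n k T) in
abbrev Node := Sum Bool (Fin T × Finset (Fin k))

variable (H : Fin T → (Fin n → Fin k))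

variable (n) in
def Valid (i : Fin T) (S : Finset (Fin k)) (e : Edge n) : Prop :=
  ¬ (Sym2.map (H i) e.1).IsDiag ∧ Disjoint (col (H i) e) S

variable (n) in
abbrev Arc := Sum (Sum (Fin T) {p : Fin T × Finset (Fin k) × Edge n // Valid n H p.1 p.2.1 p.2.2}) (Fin T)

def tl : Arc n H → Node k T
  | .inl (.inl _) => .inl true
  | .inl (.inr p) => .inr (p.1.1, p.1.2.1)
  | .inr i => .inr (i, Finset.univ)

def hd : Arc n H → Node k T
  | .inl (.inl i) => .inr (i, ∅)
  | .inl (.inr p) => .inr (p.1.1, p.1.2.1 ∪ col (H p.1.1) p.1.2.2)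
  | .inr _ => .inl false

def lab : Arc n H → Option (Edge n)
  | .inl (.inr p) => some p.1.2.2
  | _ => none

variable (k T) in
def rk : Node k T → ℕ
  | .inl true => 0
  | .inl false => k + 2
  | .inr (_, S) => S.card + 1

lemma rk_mono : ∀ a : Arc n H, rk k T (tl H a) < rk k T (hd H a) := by
  rintro ((i | p) | i)
  · simp [tl, hd, rk]
  · simp only [tl, hd, rk]
    have hval := p.2
    have hcard : (p.1.2.1 ∪ col (H p.1.1) p.1.2.2).card
        = p.1.2.1.card + 2 := by
      rw [Finset.union_comm, Finset.card_union_of_disjoint hval.2, col_card hval.1]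
      ring
    omega
  · simp only [tl, hd, rk]
    have : (Finset.univ : Finset (Fin k)).card = k := by simp
    omega

def projFun (y : Arc n H → ℝ) : Edge n → ℝ := fun e => ∑ a, if lab H a = some e then y a else 0

lemma projFun_add (y z : Arc n H → ℝ) : projFun H (y + z) = projFun H y + projFun H z := by
  funext e
  simp only [projFun, Pi.add_apply]
  rw [← Finset.sum_add_distrib]
  congr 1; funext a; split <;> simp

lemma projFun_smul (c : ℝ) (y : Arc n H → ℝ) : projFun H (c • y) = c • projFun H y := by
  funext e
  simp only [projFun, Pi.smul_apply, smul_eq_mul]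
  rw [Finset.mul_sum]
  congr 1; funext a; split <;> simp

def proj : (Arc n H → ℝ) →ₗ[ℝ] (Edge n → ℝ) where
  toFun := projFun H
  map_add' := projFun_add H
  map_smul' := projFun_smul H

lemma proj_wvec (l : List (Arc n H)) (e : Edge n) :
    projFun H (FlowAux.wvec l) e = (((l.map (lab H)).count (some e) : ℕ) : ℝ) := by
  induction l with
  | nil =>
      simp [projFun, FlowAux.wvec]
  | cons a l ih =>
      have key : projFun H (FlowAux.wvec (a :: l)) e
          = (if lab H a = some e then (1:ℝ) else 0) + projFun H (FlowAux.wvec l) e := by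
        simp only [projFun, FlowAux.wvec, List.count_cons, beq_iff_eq]
        push_cast
        have hrepr : (∑ a', if a' = a then (if lab H a = some e then (1:ℝ) else 0) else 0)
            = (if lab H a = some e then (1:ℝ) else 0) := by
          rw [Finset.sum_eq_single a]
          · simp
          · intro b _ hb; simp [hb]
          · intro hna; exact absurd (Finset.mem_univ a) hna
        rw [← hrepr, ← Finset.sum_add_distrib]
        apply Finset.sum_congr rfl
        intro a' _
        by_cases h2 : a' = a
        · subst h2
          by_cases h3 : lab H a' = some e <;> simp [h3, add_comm]
        · have h2' : ¬ a = a' := fun h => h2 h.symm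
          by_cases h3 : lab H a' = some e <;> simp [h2, h2', h3]
      rw [key, ih, List.map_cons]
      by_cases hc : lab H a = some e
      · rw [hc, List.count_cons_self, if_pos rfl]
        push_cast
        ring
      · rw [List.count_cons_of_ne hc, if_neg hc]
        ring

lemma tl_ne_t (a : Arc n H) : tl H a ≠ Sum.inl false := by
  rcases a with ((i | p) | i) <;> simp [tl]

lemma walk_nil_of_t {l : List (Arc n H)}
    (h : FlowAux.IsWalk (tl H) (hd H) (Sum.inl false) (Sum.inl false) l) : l = [] := by
  cases l with
  | nil => rfl
  | cons a l =>
      obtain ⟨h1, _⟩ := h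
      exact absurd h1 (tl_ne_t H a)

lemma grid : ∀ (l : List (Arc n H)) (i : Fin T) (S : Finset (Fin k)),
    FlowAux.IsWalk (tl H) (hd H) (Sum.inl false) (Sum.inr (i, S)) l →
    ∃ M : Finset (Edge n),
      (∀ e ∈ M, ¬ (Sym2.map (H i) e.1).IsDiag ∧ Disjoint (col (H i) e) S) ∧
      (∀ e ∈ M, ∀ e' ∈ M, e ≠ e' → Disjoint (col (H i) e) (col (H i) e')) ∧
      S ∪ M.biUnion (fun e => col (H i) e) = Finset.univ ∧
      (∀ e : Edge n, (l.map (lab H)).count (some e) = if e ∈ M then 1 else 0) := by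
  intro l
  induction l with
  | nil =>
      intro i S h
      have h' : (Sum.inr (i, S) : Node k T) = Sum.inl false := h
      simp at h'
  | cons a l ih =>
      intro i S h
      obtain ⟨h1, h2⟩ := h
      rcases a with ((j | p) | j)
      · exfalso
        simp [tl] at h1
      · obtain ⟨⟨j, S', e⟩, hval⟩ := p
        have h1' : j = i ∧ S' = S := by
          simpa [tl, Prod.ext_iff] using h1
        obtain ⟨rfl, rfl⟩ := h1'
        have h2' : FlowAux.IsWalk (tl H) (hd H) (Sum.inl false)
            (Sum.inr (j, S' ∪ col (H j) e)) l := h2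
        obtain ⟨M', hM1, hM2, hM3, hM4⟩ := ih j (S' ∪ col (H j) e) h2'
        have henotM' : e ∉ M' := by
          intro hmem
          have hd1 := (hM1 e hmem).2
          have hd2 : Disjoint (col (H j) e) (col (H j) e) :=
            (Finset.disjoint_union_right.mp hd1).2
          obtain ⟨x, hx⟩ := col_nonempty hval.1
          exact (Finset.disjoint_left.mp hd2 hx) hx
        refine ⟨insert e M', ?_, ?_, ?_, ?_⟩
        · intro eb heb
          rcases Finset.mem_insert.mp heb with rfl | heb
          · exact ⟨hval.1, hval.2⟩
          · refine ⟨(hM1 eb heb).1, ?_⟩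
            exact (Finset.disjoint_union_right.mp (hM1 eb heb).2).1
        · intro eb heb ec hec hne
          rcases Finset.mem_insert.mp heb with h1b | h1b <;>
            rcases Finset.mem_insert.mp hec with h1c | h1c
          · exact absurd (h1b.trans h1c.symm) hne
          · rw [h1b]
            exact ((Finset.disjoint_union_right.mp (hM1 ec h1c).2).2).symm
          · rw [h1c]
            exact (Finset.disjoint_union_right.mp (hM1 eb h1b).2).2
          · exact hM2 eb h1b ec h1c hne
        · rw [Finset.biUnion_insert, ← Finset.union_assoc]
          exact hM3
        · intro eb
          have hlab : lab H (Sum.inl (Sum.inr ⟨(j, S', e), hval⟩)) = some e := rfl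
          rw [List.map_cons, hlab]
          by_cases hc : eb = e
          · subst hc
            rw [List.count_cons_self, hM4 eb, if_neg henotM',
              if_pos (Finset.mem_insert_self eb M')]
          · rw [List.count_cons_of_ne (by simp [Ne.symm hc]), hM4 eb]
            have hmm : eb ∈ insert e M' ↔ eb ∈ M' := by
              simp [Finset.mem_insert, hc]
            by_cases hm : eb ∈ M'
            · rw [if_pos hm, if_pos (hmm.mpr hm)]
            · rw [if_neg hm, if_neg (fun hx => hm (hmm.mp hx))]
      · have h1' : j = i ∧ (Finset.univ : Finset (Fin k)) = S := by
          simpa [tl, Prod.ext_iff] using h1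
        obtain ⟨rfl, hSuniv⟩ := h1'
        have hl : l = [] := walk_nil_of_t H h2
        subst hl
        refine ⟨∅, by simp, by simp, by simp [← hSuniv], ?_⟩
        intro e
        simp [lab]

lemma sypair_card {α : Type*} [DecidableEq α] {z : Sym2 α} (h : ¬ z.IsDiag) :
    (sypair z).card = 2 := by
  induction z using Sym2.ind with
  | _ u v =>
      rw [sypair_mk]
      have hne : u ≠ v := by
        intro hc
        exact h (Sym2.mk_isDiag_iff.mpr hc)
      rw [Finset.card_insert_of_notMem (by simpa using hne), Finset.card_singleton]

lemma build : ∀ (m : ℕ) (M : Finset (Edge n)) (i : Fin T) (S : Finset (Fin k)),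
    M.card ≤ m →
    (∀ e ∈ M, ¬ (Sym2.map (H i) e.1).IsDiag ∧ Disjoint (col (H i) e) S) →
    (∀ e ∈ M, ∀ eb ∈ M, e ≠ eb → Disjoint (col (H i) e) (col (H i) eb)) →
    S ∪ M.biUnion (fun e => col (H i) e) = Finset.univ →
    ∃ l, FlowAux.IsWalk (tl H) (hd H) (Sum.inl false) (Sum.inr (i, S)) l ∧
      ∀ e : Edge n, (l.map (lab H)).count (some e) = if e ∈ M then 1 else 0 := by
  intro m
  induction m with
  | zero =>
      intro M i S hcard h1 h2 h3
      have hM : M = ∅ := Finset.card_eq_zero.mp (by omega)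
      subst hM
      have hSuniv : S = Finset.univ := by simpa using h3
      subst hSuniv
      refine ⟨[Sum.inr i], ⟨rfl, rfl⟩, ?_⟩
      intro e
      simp [lab]
  | succ m ih =>
      intro M i S hcard h1 h2 h3
      rcases M.eq_empty_or_nonempty with rfl | hne
      · have hSuniv : S = Finset.univ := by simpa using h3
        subst hSuniv
        refine ⟨[Sum.inr i], ⟨rfl, rfl⟩, ?_⟩
        intro e
        simp [lab]
      · obtain ⟨e, he⟩ := hne
        have hval : Valid n H i S e := ⟨(h1 e he).1, (h1 e he).2⟩
        set M' := M.erase e with hM'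
        have hMeq : M = insert e M' := by
          rw [hM', Finset.insert_erase he]
        have hcard' : M'.card ≤ m := by
          have hce := Finset.card_erase_of_mem he
          rw [← hM'] at hce
          omega
        have hb1 : ∀ eb ∈ M', ¬ (Sym2.map (H i) eb.1).IsDiag ∧
            Disjoint (col (H i) eb) (S ∪ col (H i) e) := by
          intro eb heb
          have hmem := Finset.mem_of_mem_erase heb
          have hneq : eb ≠ e := Finset.ne_of_mem_erase heb
          refine ⟨(h1 eb hmem).1, ?_⟩
          rw [Finset.disjoint_union_right]
          exact ⟨(h1 eb hmem).2, h2 eb hmem e he hneq⟩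
        have hb2 : ∀ eb ∈ M', ∀ ec ∈ M', eb ≠ ec →
            Disjoint (col (H i) eb) (col (H i) ec) := by
          intro eb heb ec hec hne'
          exact h2 eb (Finset.mem_of_mem_erase heb) ec (Finset.mem_of_mem_erase hec) hne'
        have hb3 : (S ∪ col (H i) e) ∪ M'.biUnion (fun eb => col (H i) eb) = Finset.univ := by
          rw [Finset.union_assoc, ← Finset.biUnion_insert, ← hMeq]
          exact h3
        obtain ⟨l, hl, hcnt⟩ := ih M' i (S ∪ col (H i) e) hcard' hb1 hb2 hb3
        refine ⟨Sum.inl (Sum.inr ⟨(i, S, e), hval⟩) :: l, ⟨rfl, hl⟩, ?_⟩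
        intro eb
        have hlab : lab H (Sum.inl (Sum.inr ⟨(i, S, e), hval⟩)) = some e := rfl
        rw [List.map_cons, hlab]
        have henotM' : e ∉ M' := Finset.notMem_erase e M
        by_cases hc : eb = e
        · subst hc
          rw [List.count_cons_self, hcnt eb, if_neg henotM', if_pos he]
        · rw [List.count_cons_of_ne (by simp [Ne.symm hc]), hcnt eb]
          have hmm : eb ∈ M ↔ eb ∈ M' := by
            rw [hMeq]
            simp [Finset.mem_insert, hc]
          by_cases hm : eb ∈ M'
          · rw [if_pos hm, if_pos (hmm.mpr hm)]
          · rw [if_neg hm, if_neg (fun hx => hm (hmm.mp hx))]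

lemma tl_eq_s {a : Arc n H} (h : tl H a = Sum.inl true) :
    ∃ i, a = Sum.inl (Sum.inl i) := by
  rcases a with ((i | p) | i)
  · exact ⟨i, rfl⟩
  · simp [tl] at h
  · simp [tl] at h

lemma sypair_ne {e : Edge n} : ∃ u v : Fin n, u ≠ v ∧ e.1 = s(u, v) := by
  obtain ⟨z, hz⟩ := e
  induction z using Sym2.ind with
  | _ u v =>
      exact ⟨u, v, fun h => hz (Sym2.mk_isDiag_iff.mpr h), rfl⟩

/-- forward: every walk from the source projects to a matching of size `ℓ` -/
lemma walk_to_matching {ℓ : ℕ} (hk : k = 2 * ℓ) {l : List (Arc n H)}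
    (hw : FlowAux.IsWalk (tl H) (hd H) (Sum.inl false) (Sum.inl true) l) :
    ∃ M : Finset (Edge n), IsMatching M ∧ M.card = ℓ ∧
      ∀ e : Edge n, (l.map (lab H)).count (some e) = if e ∈ M then 1 else 0 := by
  cases l with
  | nil =>
      exfalso
      have h' : (Sum.inl true : Node k T) = Sum.inl false := hw
      simp at h'
  | cons a l =>
      obtain ⟨h1, h2⟩ := hw
      obtain ⟨i, rfl⟩ := tl_eq_s H h1
      have h2' : FlowAux.IsWalk (tl H) (hd H) (Sum.inl false)
          (Sum.inr (i, (∅ : Finset (Fin k)))) l := h2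
      obtain ⟨M, hM1, hM2, hM3, hM4⟩ := grid H l i ∅ h2'
      refine ⟨M, ?_, ?_, ?_⟩
      · intro e he f hf hne v hv
        have hv1 : H i v ∈ col (H i) e := mem_col_of_mem hv.1
        have hv2 : H i v ∈ col (H i) f := mem_col_of_mem hv.2
        exact (Finset.disjoint_left.mp (hM2 e he f hf hne) hv1) hv2
      · have hun : M.biUnion (fun e => col (H i) e) = Finset.univ := by
          simpa using hM3
        have hcard : (M.biUnion (fun e => col (H i) e)).card = 2 * M.card := by
          rw [Finset.card_biUnion hM2]
          rw [Finset.sum_congr rfl (fun e he => col_card (hM1 e he).1)]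
          rw [Finset.sum_const, smul_eq_mul]
          ring
        rw [hun] at hcard
        have : (Finset.univ : Finset (Fin k)).card = k := by simp
        omega
      · intro e
        rw [List.map_cons, List.count_cons_of_ne (by simp [lab]), hM4 e]

/-- backward -/
lemma matching_to_walk {ℓ : ℕ} (hk : k = 2 * ℓ) (M : Finset (Edge n))
    (hM : IsMatching M) (hcard : M.card = ℓ)
    (hH : ∀ S : Finset (Fin n), S.card = k → ∃ i, Set.InjOn (H i) ↑S) :
    ∃ l, FlowAux.IsWalk (tl H) (hd H) (Sum.inl false) (Sum.inl true) l ∧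
      ∀ e : Edge n, (l.map (lab H)).count (some e) = if e ∈ M then 1 else 0 := by
  set VS : Finset (Fin n) := M.biUnion (fun e => sypair e.1) with hVS
  have hVSdisj : ∀ e ∈ M, ∀ f ∈ M, e ≠ f → Disjoint (sypair e.1) (sypair f.1) := by
    intro e he f hf hne
    rw [Finset.disjoint_left]
    intro v hv1 hv2
    exact hM e he f hf hne v ⟨mem_sypair.mp hv1, mem_sypair.mp hv2⟩
  have hVScard : VS.card = k := by
    rw [hVS, Finset.card_biUnion hVSdisj]
    rw [Finset.sum_congr rfl (fun e he => sypair_card e.2)]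
    rw [Finset.sum_const, smul_eq_mul, hcard, hk]
    ring
  obtain ⟨i, hinj⟩ := hH VS hVScard
  have hmemVS : ∀ e ∈ M, ∀ v : Fin n, v ∈ e.1 → v ∈ VS := by
    intro e he v hv
    rw [hVS]
    exact Finset.mem_biUnion.mpr ⟨e, he, mem_sypair.mpr hv⟩
  have hnd : ∀ e ∈ M, ¬ (Sym2.map (H i) e.1).IsDiag := by
    intro e he hdiag
    obtain ⟨u, v, huv, hev⟩ := sypair_ne (e := e)
    rw [hev, Sym2.map_pair_eq, Sym2.mk_isDiag_iff] at hdiag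
    have hu : u ∈ VS := hmemVS e he u (by rw [hev]; exact Sym2.mem_mk_left u v)
    have hv : v ∈ VS := hmemVS e he v (by rw [hev]; exact Sym2.mem_mk_right u v)
    exact huv (hinj hu hv hdiag)
  have hcoldisj : ∀ e ∈ M, ∀ f ∈ M, e ≠ f → Disjoint (col (H i) e) (col (H i) f) := by
    intro e he f hf hne
    rw [Finset.disjoint_left]
    intro x hx1 hx2
    obtain ⟨v, hv, hveq⟩ := mem_col_iff.mp hx1
    obtain ⟨w, hw, hweq⟩ := mem_col_iff.mp hx2
    have hvw : v = w := hinj (hmemVS e he v hv) (hmemVS f hf w hw) (by rw [hveq, hweq])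
    exact hM e he f hf hne v ⟨hv, hvw ▸ hw⟩
  have hbu : (∅ : Finset (Fin k)) ∪ M.biUnion (fun e => col (H i) e) = Finset.univ := by
    rw [Finset.empty_union]
    apply Finset.eq_univ_of_card
    rw [Finset.card_biUnion hcoldisj]
    rw [Finset.sum_congr rfl (fun e he => col_card (hnd e he))]
    rw [Finset.sum_const, smul_eq_mul, hcard]
    simp [hk]
    ring
  obtain ⟨l, hl, hcnt⟩ := build H M.card M i ∅ le_rfl
    (fun e he => ⟨hnd e he, Finset.disjoint_empty_right _⟩) hcoldisj hbu
  refine ⟨Sum.inl (Sum.inl i) :: l, ⟨rfl, hl⟩, ?_⟩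
  intro e
  rw [List.map_cons, List.count_cons_of_ne (by simp [lab]), hcnt e]

/-- the projected image of the walk vectors is exactly the set of matching vectors -/
theorem proj_image {ℓ : ℕ} (hk : k = 2 * ℓ)
    (hH : ∀ S : Finset (Fin n), S.card = k → ∃ i, Set.InjOn (H i) ↑S) :
    projFun H '' {x | ∃ l, FlowAux.IsWalk (tl H) (hd H) (Sum.inl false) (Sum.inl true) l
        ∧ x = FlowAux.wvec l}
      = {x | ∃ M : Finset (Edge n), IsMatching M ∧ M.card = ℓ ∧ x = charVec M} := by
  apply Set.Subset.antisymm
  · rintro x ⟨y, ⟨l, hl, rfl⟩, rfl⟩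
    obtain ⟨M, hM, hMcard, hMc⟩ := walk_to_matching H hk hl
    refine ⟨M, hM, hMcard, ?_⟩
    funext e
    rw [proj_wvec H l e, hMc e, charVec]
    by_cases hm : e ∈ M <;> simp [hm]
  · rintro x ⟨M, hM, hMcard, rfl⟩
    obtain ⟨l, hl, hcnt⟩ := matching_to_walk H hk M hM hMcard hH
    refine ⟨FlowAux.wvec l, ⟨l, hl, rfl⟩, ?_⟩
    funext e
    rw [proj_wvec H l e, hcnt e, charVec]
    by_cases hm : e ∈ M <;> simp [hm]

lemma card_edge_le : Fintype.card (Edge n) ≤ n^2 := by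
  have h1 : Fintype.card (Edge n) ≤ Fintype.card (Sym2 (Fin n)) :=
    Fintype.card_subtype_le _
  have h2 : Fintype.card (Sym2 (Fin n)) ≤ Fintype.card (Fin n × Fin n) := by
    apply Fintype.card_le_of_surjective (α := Fin n × Fin n) (β := Sym2 (Fin n)) (fun p : Fin n × Fin n => s(p.1, p.2))
    intro z
    induction z using Sym2.ind with
    | _ x y => exact ⟨(x, y), rfl⟩
  have h3 : Fintype.card (Fin n × Fin n) = n^2 := by
    simp [Fintype.card_prod]
    ring
  omega

lemma card_arc_le : Fintype.card (Arc n H) ≤ T * (2^k * n^2) + 2 * T := by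
  have hE := card_edge_le (n := n)
  have h2 : Fintype.card {p : Fin T × Finset (Fin k) × Edge n // Valid n H p.1 p.2.1 p.2.2}
      ≤ T * (2^k * n^2) := by
    calc Fintype.card {p : Fin T × Finset (Fin k) × Edge n // Valid n H p.1 p.2.1 p.2.2}
        ≤ Fintype.card (Fin T × Finset (Fin k) × Edge n) := Fintype.card_subtype_le _
      _ = T * (2^k * Fintype.card (Edge n)) := by
          simp [Fintype.card_prod, Fintype.card_finset]
      _ ≤ T * (2^k * n^2) := by
          apply Nat.mul_le_mul_left
          exact Nat.mul_le_mul_left _ hE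
  have hcard : Fintype.card (Arc n H)
      = (T + Fintype.card {p : Fin T × Finset (Fin k) × Edge n // Valid n H p.1 p.2.1 p.2.2}) + T := by
    simp [Fintype.card_sum]
  omega

end Con

def reindexLM {α β : Type*} (e : α ≃ β) : (α → ℝ) →ₗ[ℝ] (β → ℝ) where
  toFun := fun y b => y (e.symm b)
  map_add' := fun _ _ => rfl
  map_smul' := fun _ _ => rfl

@[simp] lemma reindexLM_apply {α β : Type*} (e : α ≃ β) (y : α → ℝ) (b : β) :
    reindexLM e y b = y (e.symm b) := rfl

end

/-- Theorem 4.1.  There is a constant `C > 0` such that for all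
`n ≥ 2` and `ℓ ≥ 1` the polytope `P_match(ℓ,n)` has an extension of size at most
`2^{Cℓ}·n²·log₂ n`:  a polyhedron `Q ⊆ ℝ^d` described by linear equations together with
`f ≤ 2^{Cℓ}·n²·log₂ n` linear inequalities, and an affine map `p` with
`p(Q) = P_match(ℓ,n)`. -/
theorem statement11 :
    ∃ C : ℝ, 0 < C ∧
      ∀ n ℓ : ℕ, 2 ≤ n → 1 ≤ ℓ →
        ∃ (d g f : ℕ) (Aeq : Fin g → Fin d → ℝ) (beq : Fin g → ℝ)
          (A : Fin f → Fin d → ℝ) (b : Fin f → ℝ)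
          (p : (Fin d → ℝ) →ᵃ[ℝ] (Edge n → ℝ)),
          (f : ℝ) ≤ (2 : ℝ) ^ (C * ℓ) * (n : ℝ) ^ 2 * Real.logb 2 (n : ℝ) ∧
          p '' {y : Fin d → ℝ |
              (∀ i : Fin g, ∑ j, Aeq i j * y j = beq i) ∧
              (∀ i : Fin f, ∑ j, A i j * y j ≤ b i)} = matchingPolytope n ℓ := by
  refine ⟨10, by norm_num, ?_⟩
  intro n ℓ hn hℓ
  classical
  obtain ⟨k, hkdef⟩ : ∃ k : ℕ, k = 2 * ℓ := ⟨_, rfl⟩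
  obtain ⟨T, hTdef⟩ : ∃ T : ℕ, T = ⌈(4:ℝ)^k * k * Real.log n⌉₊ + 1 := ⟨_, rfl⟩
  have hx0 : (0:ℝ) ≤ (4:ℝ)^k * k * Real.log n := by
    have : (0:ℝ) ≤ Real.log n := Real.log_nonneg (by exact_mod_cast (by omega : 1 ≤ n))
    positivity
  have hTgt : (4:ℝ)^k * k * Real.log n < T := by
    have h1 := Nat.le_ceil ((4:ℝ)^k * k * Real.log n)
    have h2 : (T:ℝ) = (⌈(4:ℝ)^k * k * Real.log n⌉₊ : ℝ) + 1 := by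
      rw [hTdef]; push_cast; ring
    linarith
  obtain ⟨H, hH⟩ := HashAux.hash_exists n k T hn (by omega) hTgt
  obtain ⟨d, hddef⟩ : ∃ d : ℕ, Fintype.card (Con.Arc n H) = d := ⟨_, rfl⟩
  obtain ⟨g, hgdef⟩ : ∃ g : ℕ, Fintype.card (Con.Node k T) = g := ⟨_, rfl⟩
  set eA : Fin d ≃ Con.Arc n H := (Fintype.equivFinOfCardEq hddef).symm with heA
  set eV : Fin g ≃ Con.Node k T := (Fintype.equivFinOfCardEq hgdef).symm with heV
  set rlin : (Fin d → ℝ) →ₗ[ℝ] (Con.Arc n H → ℝ) := reindexLM eA with hrlin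
  set p : (Fin d → ℝ) →ᵃ[ℝ] (Edge n → ℝ) := ((Con.proj H).comp rlin).toAffineMap with hp
  refine ⟨d, g, d,
    fun i j => (if Con.tl H (eA j) = eV i then (1:ℝ) else 0)
      - (if Con.hd H (eA j) = eV i then 1 else 0),
    fun i => (if (Sum.inl true : Con.Node k T) = eV i then (1:ℝ) else 0)
      - (if (Sum.inl false : Con.Node k T) = eV i then 1 else 0),
    fun i j => if eA j = eA i then (-1:ℝ) else 0,
    fun _ => 0,
    p, ?_, ?_⟩
  · -- size bound
    have harc := Con.card_arc_le (H := H)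
    set L := Real.logb 2 n with hL
    have hL1 : (1:ℝ) ≤ L := by
      rw [hL]
      calc (1:ℝ) = Real.logb 2 2 := (Real.logb_self_eq_one (by norm_num)).symm
        _ ≤ Real.logb 2 n :=
            Real.logb_le_logb_of_le (by norm_num) (by norm_num) (by exact_mod_cast hn)
    have hlog2 : Real.log 2 ≤ 1 := by
      have := Real.log_two_lt_d9
      linarith
    have hlogpos : (0:ℝ) ≤ Real.log n := Real.log_nonneg (by exact_mod_cast (by omega : 1 ≤ n))
    have hlnL : Real.log n ≤ L := by
      rw [hL, Real.logb]
      have h := Real.log_pos (by norm_num : (1:ℝ) < 2)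
      rw [le_div_iff₀ h]
      nlinarith
    have hTle : (T:ℝ) ≤ (4:ℝ)^k * k * L + 2 := by
      have h1 : (⌈(4:ℝ)^k * k * Real.log n⌉₊ : ℝ) < (4:ℝ)^k * k * Real.log n + 1 :=
        Nat.ceil_lt_add_one hx0
      have h2 : (T:ℝ) = (⌈(4:ℝ)^k * k * Real.log n⌉₊ : ℝ) + 1 := by
        rw [hTdef]; push_cast; ring
      have h3 : (4:ℝ)^k * k * Real.log n ≤ (4:ℝ)^k * k * L := by
        apply mul_le_mul_of_nonneg_left hlnL (by positivity)
      linarith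
    have hk2 : 2 ≤ k := by omega
    have h2k : (4:ℝ) ≤ (2:ℝ)^k := by
      calc (4:ℝ) = 2^2 := by norm_num
        _ ≤ 2^k := pow_le_pow_right₀ (by norm_num) hk2
    have h4k : (2:ℝ) ≤ (4:ℝ)^k * k := by
      have h1 : (4:ℝ) ≤ 4^k := by
        calc (4:ℝ) = 4^1 := (pow_one 4).symm
          _ ≤ 4^k := pow_le_pow_right₀ (by norm_num) (by omega)
      have h2 : (2:ℝ) ≤ (k:ℝ) := by exact_mod_cast hk2
      calc (2:ℝ) ≤ 4 * 2 := by norm_num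
        _ ≤ (4:ℝ)^k * k := mul_le_mul h1 h2 (by norm_num) (by positivity)
    have hn2 : (4:ℝ) ≤ (n:ℝ)^2 := by
      have h2n : (2:ℝ) ≤ (n:ℝ) := by exact_mod_cast hn
      nlinarith [h2n]
    have hdle : (d:ℝ) ≤ (T:ℝ) * ((2:ℝ)^k * (n:ℝ)^2) + 2 * T := by
      rw [← hddef]
      calc ((Fintype.card (Con.Arc n H) : ℝ))
          ≤ ((T * (2^k * n^2) + 2 * T : ℕ) : ℝ) := by exact_mod_cast harc
        _ = (T:ℝ) * ((2:ℝ)^k * (n:ℝ)^2) + 2 * T := by push_cast; ring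
    have hTpos : (0:ℝ) ≤ (T:ℝ) := by positivity
    have step1 : (d:ℝ) ≤ (T:ℝ) * (2 * ((2:ℝ)^k * (n:ℝ)^2)) := by
      have h1 : (2:ℝ) ≤ (2:ℝ)^k * (n:ℝ)^2 := by nlinarith
      nlinarith [hdle, hTpos]
    have step2 : (T:ℝ) ≤ 2 * ((4:ℝ)^k * k * L) := by
      have h1 : (2:ℝ) ≤ 2 * L := by linarith
      have h2 : (4:ℝ)^k * k * L + 2 ≤ (4:ℝ)^k * k * L + 2 * L := by linarith
      have h3 : (4:ℝ)^k * k * L + 2 * L ≤ 2 * ((4:ℝ)^k * k * L) := by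
        nlinarith [h4k, hL1]
      linarith
    have hpos2 : (0:ℝ) ≤ 2 * ((2:ℝ)^k * (n:ℝ)^2) := by positivity
    have step3 : (d:ℝ) ≤ (2 * ((4:ℝ)^k * k * L)) * (2 * ((2:ℝ)^k * (n:ℝ)^2)) := by
      calc (d:ℝ) ≤ (T:ℝ) * (2 * ((2:ℝ)^k * (n:ℝ)^2)) := step1
        _ ≤ (2 * ((4:ℝ)^k * k * L)) * (2 * ((2:ℝ)^k * (n:ℝ)^2)) := by
            apply mul_le_mul_of_nonneg_right step2 hpos2
    have step4 : (2 * ((4:ℝ)^k * k * L)) * (2 * ((2:ℝ)^k * (n:ℝ)^2))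
        = (4 * k * ((4:ℝ)^k * (2:ℝ)^k)) * ((n:ℝ)^2) * L := by ring
    have hnat : 4 * k * 8^k ≤ 2^(10 * ℓ) := by
      have h8 : (8:ℕ)^k = 2^(3*k) := by
        rw [show (8:ℕ) = 2^3 by norm_num, ← pow_mul]
      have hl2 : ℓ < 2^ℓ := Nat.lt_two_pow_self
      have h1 : 4 * k ≤ 2^(ℓ + 3) := by
        rw [hkdef]
        calc 4 * (2 * ℓ) = 8 * ℓ := by ring
          _ ≤ 8 * 2^ℓ := by omega
          _ = 2^(ℓ + 3) := by rw [pow_add]; ring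
      calc 4 * k * 8^k ≤ 2^(ℓ+3) * 8^k := Nat.mul_le_mul_right _ h1
        _ = 2^(ℓ+3) * 2^(3*k) := by rw [h8]
        _ = 2^(ℓ + 3 + 3*k) := by rw [← pow_add]
        _ ≤ 2^(10*ℓ) := by
            apply Nat.pow_le_pow_right (by norm_num)
            omega
    have hcast : (4:ℝ) * k * ((4:ℝ)^k * (2:ℝ)^k) ≤ (2:ℝ)^(10*ℓ : ℕ) := by
      have h48 : (4:ℝ)^k * (2:ℝ)^k = (8:ℝ)^k := by
        rw [← mul_pow]; norm_num
      rw [h48]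
      calc (4:ℝ) * k * (8:ℝ)^k = ((4 * k * 8^k : ℕ) : ℝ) := by push_cast; ring
        _ ≤ ((2^(10*ℓ) : ℕ) : ℝ) := by exact_mod_cast hnat
        _ = (2:ℝ)^(10*ℓ : ℕ) := by push_cast; ring
    have hrpow : (2:ℝ) ^ ((10:ℝ) * ℓ) = (2:ℝ)^(10*ℓ : ℕ) := by
      rw [show ((10:ℝ) * ℓ) = ((10*ℓ : ℕ) : ℝ) by push_cast; ring]
      rw [Real.rpow_natCast]
    rw [hrpow]
    have hLpos : (0:ℝ) ≤ L := by linarith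
    have hfin : (4 * k * ((4:ℝ)^k * (2:ℝ)^k)) * ((n:ℝ)^2) * L
        ≤ (2:ℝ)^(10*ℓ:ℕ) * (n:ℝ)^2 * L := by
      have hnn : (0:ℝ) ≤ (n:ℝ)^2 * L := by positivity
      calc (4 * k * ((4:ℝ)^k * (2:ℝ)^k)) * ((n:ℝ)^2) * L
          = (4 * k * ((4:ℝ)^k * (2:ℝ)^k)) * ((n:ℝ)^2 * L) := by ring
        _ ≤ (2:ℝ)^(10*ℓ:ℕ) * ((n:ℝ)^2 * L) := mul_le_mul_of_nonneg_right hcast hnn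
        _ = (2:ℝ)^(10*ℓ:ℕ) * (n:ℝ)^2 * L := by ring
    calc (d:ℝ) ≤ (2 * ((4:ℝ)^k * k * L)) * (2 * ((2:ℝ)^k * (n:ℝ)^2)) := step3
      _ = (4 * k * ((4:ℝ)^k * (2:ℝ)^k)) * ((n:ℝ)^2) * L := step4
      _ ≤ (2:ℝ)^(10*ℓ:ℕ) * (n:ℝ)^2 * L := hfin
  · -- image equality
    set Fset : Set (Con.Arc n H → ℝ) := {y | (∀ v, FlowAux.net (Con.tl H) (Con.hd H) y v
        = (if (Sum.inl true : Con.Node k T) = v then (1:ℝ) else 0)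
          - (if (Sum.inl false : Con.Node k T) = v then 1 else 0)) ∧ ∀ a, 0 ≤ y a} with hFset
    have hQeq : {y : Fin d → ℝ |
        (∀ i : Fin g, ∑ j, ((if Con.tl H (eA j) = eV i then (1:ℝ) else 0)
            - (if Con.hd H (eA j) = eV i then 1 else 0)) * y j
          = (if (Sum.inl true : Con.Node k T) = eV i then (1:ℝ) else 0)
            - (if (Sum.inl false : Con.Node k T) = eV i then 1 else 0)) ∧
        (∀ i : Fin d, ∑ j, (if eA j = eA i then (-1:ℝ) else 0) * y j ≤ 0)}
        = (fun y : Fin d → ℝ => (rlin y : Con.Arc n H → ℝ)) ⁻¹' Fset := by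
      ext y
      simp only [Set.mem_setOf_eq, Set.mem_preimage, hFset]
      have heq1 : ∀ i : Fin g, (∑ j, ((if Con.tl H (eA j) = eV i then (1:ℝ) else 0)
          - (if Con.hd H (eA j) = eV i then 1 else 0)) * y j)
          = FlowAux.net (Con.tl H) (Con.hd H) (rlin y) (eV i) := by
        intro i
        rw [FlowAux.net]
        rw [← Equiv.sum_comp eA (fun a => ((if Con.tl H a = eV i then (1:ℝ) else 0)
          - (if Con.hd H a = eV i then 1 else 0)) * (rlin y) a)]
        apply Finset.sum_congr rfl
        intro j _
        have : (rlin y) (eA j) = y j := by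
          rw [hrlin, reindexLM_apply, Equiv.symm_apply_apply]
        rw [this]
      have heq2 : ∀ i : Fin d, (∑ j, (if eA j = eA i then (-1:ℝ) else 0) * y j) = - y i := by
        intro i
        have hterm : ∀ j, (if eA j = eA i then (-1:ℝ) else 0) * y j
            = if j = i then -y j else 0 := by
          intro j
          by_cases h : j = i
          · subst h; simp
          · rw [if_neg (fun hh => h (eA.injective hh)), if_neg h, zero_mul]
        rw [Finset.sum_congr rfl (fun j _ => hterm j)]
        rw [Finset.sum_ite_eq' Finset.univ i (fun j => -y j)]
        rw [if_pos (Finset.mem_univ i)]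
      constructor
      · rintro ⟨h1, h2⟩
        constructor
        · intro v
          have := h1 (eV.symm v)
          rw [heq1 (eV.symm v)] at this
          rw [Equiv.apply_symm_apply] at this
          exact this
        · intro a
          have := h2 (eA.symm a)
          rw [heq2 (eA.symm a)] at this
          have h3 : (rlin y) a = y (eA.symm a) := by rw [hrlin, reindexLM_apply]
          rw [h3]
          linarith
      · rintro ⟨h1, h2⟩
        constructor
        · intro i
          rw [heq1 i]
          exact h1 (eV i)
        · intro i
          rw [heq2 i]
          have := h2 (eA i)
          have h3 : (rlin y) (eA i) = y i := by
            rw [hrlin, reindexLM_apply, Equiv.symm_apply_apply]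
          rw [h3] at this
          linarith
    have hsurj : Function.Surjective (fun y : Fin d → ℝ => (rlin y : Con.Arc n H → ℝ)) := by
      intro z
      refine ⟨fun j => z (eA j), ?_⟩
      funext a
      exact congrArg z (eA.apply_symm_apply a)
    have hpcoe : ⇑p = (Con.projFun H) ∘ (fun y : Fin d → ℝ => (rlin y : Con.Arc n H → ℝ)) := rfl
    rw [hpcoe, Set.image_comp, hQeq, Set.image_preimage_eq _ hsurj]
    have hflow : Fset = convexHull ℝ {x | ∃ l, FlowAux.IsWalk (Con.tl H) (Con.hd H)
        (Sum.inl false) (Sum.inl true) l ∧ x = FlowAux.wvec l} := by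
      rw [hFset]
      exact FlowAux.flow_hull (Con.rk k T) (Con.rk_mono H) (by simp)
    rw [hflow]
    have hcoeproj : Con.projFun H = ⇑(Con.proj H) := rfl
    rw [hcoeproj, LinearMap.image_convexHull, ← hcoeproj]
    rw [Con.proj_image H hkdef hH]
    rfl

end
end

section
/- There is a constant C > 0 such that for all integers n ≥ 2 and 1 ≤ r ≤ n there exist an integer q ≤ 2^{Cr} · log₂ n and maps φ_1, …, φ_q : [n] → [r] with the property that for every subset W ⊆ [n] with |W| = r there is some i ∈ [q] for which the restriction of φ_i to W is bijective onto [r]. -/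
open Finset

noncomputable def splitEquiv (n r : ℕ) (W : Finset (Fin n)) :
    {f : Fin n → Fin r // Set.InjOn f W} ≃ ((↥W ↪ Fin r) × (↥((W : Set (Fin n))ᶜ) → Fin r)) where
  toFun f := (⟨fun x => f.1 x, fun a b h => Subtype.ext (f.2 a.2 b.2 h)⟩,
      fun x => f.1 x)
  invFun g := ⟨fun x => if hx : x ∈ W then g.1 ⟨x, hx⟩ else g.2 ⟨x, hx⟩, by
    intro a ha b hb hab
    simp only [Set.mem_compl_iff] at *
    rw [dif_pos (Finset.mem_coe.mp ha), dif_pos (Finset.mem_coe.mp hb)] at hab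
    exact congrArg Subtype.val (g.1.injective hab)⟩
  left_inv f := by
    ext x
    by_cases hx : x ∈ W <;> simp [hx] <;> rfl
  right_inv g := by
    refine Prod.ext ?_ ?_
    · ext x; simp [x.2]
    · ext x; have := x.2; simp only [Set.mem_compl_iff, Finset.mem_coe] at this; simp [this]

lemma count_injOn (n r : ℕ) (W : Finset (Fin n)) (hW : W.card = r) :
    (Finset.univ.filter (fun f : Fin n → Fin r => Set.InjOn f W)).card
      = r.factorial * r ^ (n - r) := by
  classical
  have h1 : (Finset.univ.filter (fun f : Fin n → Fin r => Set.InjOn f W)).card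
      = Fintype.card {f : Fin n → Fin r // Set.InjOn f W} := by
    rw [Fintype.card_subtype]
  rw [h1, Fintype.card_congr (splitEquiv n r W), Fintype.card_prod,
    Fintype.card_embedding_eq, Fintype.card_fun]
  have hc : Fintype.card ↥W = r := by rw [Fintype.card_coe, hW]
  have hcc : Fintype.card ↥((W : Set (Fin n))ᶜ) = n - r := by
    rw [Fintype.card_compl_set, Fintype.card_fin]
    have : Fintype.card ↥(W : Set (Fin n)) = r := by simpa using hW
    omega
  rw [hc, hcc, Fintype.card_fin, Nat.descFactorial_self]



/-- Theorem of Alon–Yuster–Zwick on perfect hash families.  There is a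
constant `C > 0` such that for all `n ≥ 2` and `1 ≤ r ≤ n` there are
`q ≤ 2^{Cr}·log₂ n` maps `φ_1, …, φ_q : [n] → [r]` such that every `r`-element subset
`W ⊆ [n]` is mapped bijectively onto `[r]` by at least one `φ_i`. -/
theorem statement13 :
    ∃ C : ℝ, 0 < C ∧
      ∀ n r : ℕ, 2 ≤ n → 1 ≤ r → r ≤ n →
        ∃ (q : ℕ) (φ : Fin q → (Fin n → Fin r)),
          (q : ℝ) ≤ (2 : ℝ) ^ (C * r) * Real.logb 2 (n : ℝ) ∧
          ∀ W : Finset (Fin n), W.card = r →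
            ∃ i : Fin q, Set.BijOn (φ i) (W : Set (Fin n)) Set.univ := by
  classical
  refine ⟨10, by norm_num, fun n r hn hr hrn => ?_⟩
  have hn0 : (0:ℝ) < n := by positivity
  have hn2 : (2:ℝ) ≤ n := by exact_mod_cast hn
  have hln2 : (0:ℝ) < Real.log 2 := Real.log_pos (by norm_num)
  have hlnn : Real.log 2 ≤ Real.log n := Real.log_le_log (by norm_num) hn2
  have hlnn0 : (0:ℝ) < Real.log n := lt_of_lt_of_le hln2 hlnn
  set x : ℝ := Real.exp r * (r + 1) * Real.log n with hx
  have hx0 : 0 ≤ x := by positivity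
  set q : ℕ := ⌈x⌉₊ with hq
  -- the q bound
  have hqbound : (q : ℝ) ≤ (2 : ℝ) ^ ((10:ℝ) * r) * Real.logb 2 (n : ℝ) := by
    have h1 : (q : ℝ) ≤ x + 1 := (Nat.ceil_lt_add_one hx0).le
    have hrpow : (2 : ℝ) ^ ((10:ℝ) * r) = (2:ℝ) ^ (10 * r : ℕ) := by
      rw [← Real.rpow_natCast 2 (10 * r)]; norm_num
    rw [hrpow, Real.logb]
    have hexp : Real.exp (r:ℝ) ≤ (4:ℝ) ^ r := by
      have : Real.exp (r:ℝ) = Real.exp 1 ^ r := by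
        rw [← Real.exp_nat_mul]; norm_num
      rw [this]
      exact pow_le_pow_left₀ (Real.exp_pos 1).le
        (le_of_lt (lt_of_lt_of_le Real.exp_one_lt_d9 (by norm_num))) r
    have hr1 : ((r:ℝ) + 1) ≤ (2:ℝ) ^ (r+1) := by
      have := Nat.lt_two_pow_self (n := r+1)
      have : ((r+1 : ℕ) : ℝ) ≤ ((2^(r+1) : ℕ) : ℝ) := by exact_mod_cast this.le
      push_cast at this; linarith
    have key : Real.exp (r:ℝ) * ((r:ℝ)+1) ≤ (2:ℝ)^(3*r+1) := by
      calc Real.exp (r:ℝ) * ((r:ℝ)+1) ≤ (4:ℝ)^r * (2:ℝ)^(r+1) := by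
            apply mul_le_mul hexp hr1 (by positivity) (by positivity)
        _ = (2:ℝ)^(3*r+1) := by
            rw [show (4:ℝ) = 2^2 by norm_num, ← pow_mul, ← pow_add]; ring_nf
    have hpow : (2:ℝ)^(3*r+1) + 1 ≤ (2:ℝ)^(10*r) := by
      have h32 : (2:ℝ)^(3*r+1) + 1 ≤ (2:ℝ)^(3*r+2) := by
        have h2 : (2:ℝ)^(3*r+2) = (2:ℝ)^(3*r+1) * 2 := by rw [← pow_succ]
        have : (1:ℝ) ≤ (2:ℝ)^(3*r+1) := one_le_pow₀ (by norm_num)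
        linarith
      refine h32.trans (pow_le_pow_right₀ (by norm_num) (by omega))
    have hLdiv : Real.log n ≤ Real.log n / Real.log 2 := by
      rw [le_div_iff₀ hln2]
      nlinarith [Real.log_two_lt_d9, hlnn0]
    have h1div : (1:ℝ) ≤ Real.log n / Real.log 2 := by
      rw [le_div_iff₀ hln2]; linarith
    calc (q:ℝ) ≤ x + 1 := h1
      _ = Real.exp r * ((r:ℝ)+1) * Real.log n + 1 := by rw [hx]
      _ ≤ (2:ℝ)^(3*r+1) * Real.log n + 1 := by
          have := mul_le_mul_of_nonneg_right key hlnn0.le; linarith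
      _ ≤ (2:ℝ)^(3*r+1) * (Real.log n / Real.log 2) + 1 * (Real.log n / Real.log 2) := by
          have h2 := mul_le_mul_of_nonneg_left hLdiv (by positivity : (0:ℝ) ≤ (2:ℝ)^(3*r+1))
          linarith
      _ = ((2:ℝ)^(3*r+1) + 1) * (Real.log n / Real.log 2) := by ring
      _ ≤ (2:ℝ)^(10*r) * (Real.log n / Real.log 2) := by
          apply mul_le_mul_of_nonneg_right hpow (by positivity)
  refine ⟨q, ?_⟩
  -- counting setup
  set B : ℕ := r ^ n - r.factorial * r ^ (n - r) with hB
  set Bad : Finset (Fin n) → Finset (Fin q → Fin n → Fin r) := fun W =>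
    Fintype.piFinset (fun _ : Fin q => Finset.univ.filter
      (fun f : Fin n → Fin r => ¬ Set.InjOn f W)) with hBad
  set P : Finset (Finset (Fin n)) := Finset.powersetCard r Finset.univ with hP
  have hgoodle : ∀ W ∈ P, r.factorial * r ^ (n - r) ≤ r ^ n := by
    intro W hW
    have : r.factorial * r ^ (n - r) ≤ r ^ r * r ^ (n - r) :=
      Nat.mul_le_mul_right _ (Nat.factorial_le_pow r)
    rwa [← pow_add, Nat.add_sub_cancel' hrn] at this
  have hfact : r.factorial * r ^ (n - r) ≤ r ^ n := by
    have : r.factorial * r ^ (n - r) ≤ r ^ r * r ^ (n - r) :=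
      Nat.mul_le_mul_right _ (Nat.factorial_le_pow r)
    rwa [← pow_add, Nat.add_sub_cancel' hrn] at this
  have hBadcard : ∀ W ∈ P, (Bad W).card = B ^ q := by
    intro W hWP
    have hWr : W.card = r := (Finset.mem_powersetCard_univ).mp hWP
    rw [hBad]
    rw [Fintype.card_piFinset]
    have hbadf : (Finset.univ.filter
        (fun f : Fin n → Fin r => ¬ Set.InjOn f W)).card = B := by
      have := Finset.card_filter_add_card_filter_not
        (s := (Finset.univ : Finset (Fin n → Fin r)))
        (p := fun f : Fin n → Fin r => Set.InjOn f W)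
      rw [count_injOn n r W hWr] at this
      have htot : (Finset.univ : Finset (Fin n → Fin r)).card = r ^ n := by
        rw [Finset.card_univ, Fintype.card_fun, Fintype.card_fin, Fintype.card_fin]
      omega
    simp [hbadf]
  -- the key numeric inequality over ℝ
  have hrpos : (0:ℝ) < r := by exact_mod_cast hr
  have hkeyR : ((n.choose r : ℕ) : ℝ) * (B:ℝ) ^ q < (((r:ℝ) ^ n)) ^ q := by
    set p : ℝ := (r.factorial : ℝ) / (r:ℝ) ^ r with hp
    have hp0 : 0 < p := by positivity
    have hp1 : p ≤ 1 := by
      rw [hp, div_le_one (by positivity)]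
      exact_mod_cast Nat.factorial_le_pow r
    have hpexp : Real.exp (-(r:ℝ)) ≤ p := by
      have h1 : (r:ℝ) ^ r / (r.factorial : ℝ) ≤ Real.exp r :=
        Real.pow_div_factorial_le_exp (x := (r:ℝ)) (by positivity) r
      have hR : (0:ℝ) < (r:ℝ)^r := by positivity
      have hF : (0:ℝ) < (r.factorial:ℝ) := by positivity
      have h2 : (r:ℝ)^r ≤ Real.exp r * (r.factorial:ℝ) := by
        rw [div_le_iff₀ hF] at h1; linarith
      rw [Real.exp_neg, hp, inv_eq_one_div, div_le_div_iff₀ (Real.exp_pos _) hR]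
      nlinarith [h2]
    have hfq : (B:ℝ) = (r:ℝ) ^ n * (1 - p) := by
      have hcast : (B:ℝ) = (r:ℝ) ^ n - (r.factorial : ℝ) * (r:ℝ) ^ (n - r) := by
        rw [hB]; push_cast [hfact]; ring
      rw [hcast, hp]
      have hsplit : (r:ℝ) ^ n = (r:ℝ) ^ r * (r:ℝ) ^ (n - r) := by
        rw [← pow_add, Nat.add_sub_cancel' hrn]
      field_simp
      rw [hsplit]; ring
    have hchoose : ((n.choose r : ℕ) : ℝ) ≤ (n:ℝ) ^ r := by
      exact_mod_cast Nat.choose_le_pow n r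
    have h1p : (0:ℝ) ≤ 1 - p := by linarith
    have hqx : x ≤ (q:ℝ) := Nat.le_ceil x
    have hexpb : (1 - p) ^ q ≤ Real.exp (-(p * q)) := by
      calc (1 - p) ^ q ≤ Real.exp (-p) ^ q := by
            apply pow_le_pow_left₀ h1p
            linarith [Real.add_one_le_exp (-p)]
        _ = Real.exp (-(p * q)) := by
            rw [← Real.exp_nat_mul]; ring_nf
    have hpq : ((r:ℝ) + 1) * Real.log n ≤ p * q := by
      have step1 : ((r:ℝ)+1) * Real.log n = Real.exp (-(r:ℝ)) * x := by
        have he : Real.exp (-(r:ℝ)) * Real.exp (r:ℝ) = 1 := by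
          rw [← Real.exp_add]; simp
        rw [hx]
        linear_combination (-((r:ℝ)+1)) * Real.log (n:ℝ) * he
      rw [step1]
      have : Real.exp (-(r:ℝ)) * x ≤ p * x :=
        mul_le_mul_of_nonneg_right hpexp hx0
      refine this.trans ?_
      exact mul_le_mul_of_nonneg_left hqx hp0.le
    have hfinal : ((n.choose r : ℕ) : ℝ) * (1 - p) ^ q < 1 := by
      have hb1 : Real.exp (-(p * (q:ℝ))) ≤ Real.exp (-(((r:ℝ)+1) * Real.log n)) :=
        Real.exp_le_exp.mpr (by linarith)
      have hb2 : Real.exp (-(((r:ℝ)+1) * Real.log n)) = ((n:ℝ) ^ (r+1 : ℕ))⁻¹ := by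
        rw [Real.exp_neg]
        congr 1
        rw [mul_comm, Real.exp_mul, Real.exp_log hn0, ← Real.rpow_natCast (n:ℝ) (r+1)]
        push_cast; ring_nf
      have hb3 : ((n.choose r : ℕ) : ℝ) * (1 - p) ^ q ≤ (n:ℝ)^r * ((n:ℝ) ^ (r+1:ℕ))⁻¹ := by
        apply mul_le_mul hchoose _ (by positivity) (by positivity)
        calc (1 - p) ^ q ≤ Real.exp (-(p * q)) := hexpb
          _ ≤ Real.exp (-(((r:ℝ)+1) * Real.log n)) := hb1
          _ = ((n:ℝ) ^ (r+1:ℕ))⁻¹ := hb2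
      have hb4 : (n:ℝ)^r * ((n:ℝ) ^ (r+1:ℕ))⁻¹ = (n:ℝ)⁻¹ := by
        rw [pow_succ]
        field_simp
      rw [hb4] at hb3
      have : (n:ℝ)⁻¹ < 1 := by
        rw [inv_lt_one_iff₀]; right; linarith
      linarith
    calc ((n.choose r : ℕ) : ℝ) * (B:ℝ) ^ q
        = ((n.choose r : ℕ) : ℝ) * (1 - p) ^ q * ((r:ℝ)^n) ^ q := by
          rw [hfq, mul_pow]; ring
      _ < 1 * ((r:ℝ)^n) ^ q := by
          apply mul_lt_mul_of_pos_right hfinal (by positivity)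
      _ = ((r:ℝ)^n) ^ q := by ring
  -- transfer to ℕ and find a good φ
  have hkeyN : (n.choose r) * B ^ q < (r ^ n) ^ q := by
    have := hkeyR
    push_cast at this
    exact_mod_cast this
  have hsum : (P.biUnion Bad).card < Fintype.card (Fin q → Fin n → Fin r) := by
    have h1 : (P.biUnion Bad).card ≤ ∑ W ∈ P, (Bad W).card := Finset.card_biUnion_le
    have h2 : ∑ W ∈ P, (Bad W).card = (n.choose r) * B ^ q := by
      rw [Finset.sum_congr rfl hBadcard, Finset.sum_const, smul_eq_mul]
      congr 1
      rw [hP, Finset.card_powersetCard, Finset.card_univ, Fintype.card_fin]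
    have h3 : Fintype.card (Fin q → Fin n → Fin r) = (r ^ n) ^ q := by
      rw [Fintype.card_fun, Fintype.card_fun, Fintype.card_fin, Fintype.card_fin,
        Fintype.card_fin]
    omega
  obtain ⟨φ, hφ⟩ : ∃ φ : Fin q → Fin n → Fin r, φ ∉ P.biUnion Bad := by
    by_contra h
    push_neg at h
    have : (Finset.univ : Finset (Fin q → Fin n → Fin r)) ⊆ P.biUnion Bad :=
      fun ψ _ => h ψ
    have := Finset.card_le_card this
    rw [Finset.card_univ] at this
    omega
  refine ⟨φ, hqbound, fun W hWr => ?_⟩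
  have hWP : W ∈ P := Finset.mem_powersetCard_univ.mpr hWr
  have hnotbad : φ ∉ Bad W := fun hmem => hφ (Finset.mem_biUnion.mpr ⟨W, hWP, hmem⟩)
  rw [hBad, Fintype.mem_piFinset] at hnotbad
  push_neg at hnotbad
  obtain ⟨i, hi⟩ := hnotbad
  simp only [Finset.mem_filter, Finset.mem_univ, true_and, not_not] at hi
  refine ⟨i, fun a _ => Set.mem_univ _, hi, ?_⟩
  intro y _
  have himg : (W.image (φ i)) = Finset.univ := by
    apply Finset.eq_univ_of_card
    rw [Finset.card_image_of_injOn hi, hWr, Fintype.card_fin]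
  have : y ∈ W.image (φ i) := himg ▸ Finset.mem_univ y
  obtain ⟨a, ha, hay⟩ := Finset.mem_image.mp this
  exact ⟨a, ha, hay⟩
end
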